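/- arXiv:1704.09018 — 10 statements merged into one kernel-verified Lean document; each statement's English description precedes it below -/
import Mathlib

section
/- If A is a totally unimodular matrix (every square submatrix has determinant 0, 1, or -1), then every vector in the Graver basis of A has all entries in {-1, 0, 1}. -/
/-- `u` lies in the Graver basis of `A`: it is a nonzero integer kernel vector that is not a
nontrivial conformal sum, i.e. there is no other nonzero kernel vector `v` with
`v⁺ ≤ u⁺` and `v⁻ ≤ u⁻` componentwise. -/
def InGraverBasis {m n : Type*} [Fintype m] [Fintype n] (A : Matrix m n ℤ) (u : n → ℤ) : Prop :=
  u ≠ 0 ∧ A.mulVec u = 0 ∧ ∀ v : n → ℤ, v ≠ 0 → A.mulVec v = 0 → v ≠ u →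
    ¬((∀ i, max (v i) 0 ≤ max (u i) 0) ∧ (∀ i, max (-v i) 0 ≤ max (-u i) 0))

/-- `A` is totally unimodular: every square submatrix has determinant `0`, `1`, or `-1`. -/
def IsTotallyUnimodularMat {m n : Type*} [Fintype m] [Fintype n] (A : Matrix m n ℤ) : Prop :=
  ∀ (k : ℕ) (f : Fin k → m) (g : Fin k → n), Function.Injective f → Function.Injective g →
    (A.submatrix f g).det = 0 ∨ (A.submatrix f g).det = 1 ∨ (A.submatrix f g).det = -1

open Matrix

noncomputable def fracSet {n : Type*} [Fintype n] (x : n → ℚ) : Finset n :=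
  @Finset.filter _ (fun i => ¬∃ z : ℤ, x i = (z : ℚ)) (Classical.decPred _) Finset.univ

lemma mem_fracSet {n : Type*} [Fintype n] {x : n → ℚ} {i : n} :
    i ∈ fracSet x ↔ ¬∃ z : ℤ, x i = (z : ℚ) := by
  rw [fracSet]
  rw [@Finset.mem_filter _ _ (Classical.decPred _)]
  simp

lemma exists_rows {m : Type*} [Fintype m] {k : ℕ} (C : Matrix m (Fin k) ℚ)
    (h : LinearIndependent ℚ (fun j : Fin k => Cᵀ j)) :
    ∃ f : Fin k → m, Function.Injective f ∧ IsUnit (C.submatrix f id) := by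
  classical
  have hrankT : Cᵀ.rank = k := by exact h.rank_matrix.trans (by simp)
  have hrank : C.rank = k := by rw [← rank_transpose]; exact hrankT
  have hspan : Submodule.span ℚ (Set.range C) = ⊤ := by
    apply Submodule.eq_top_of_finrank_eq
    rw [show Set.range C = Set.range (Matrix.row C) from rfl, ← rank_eq_finrank_span_row, hrank, Module.finrank_pi]
    simp
  obtain ⟨b, hbsub, hbspan, hbli⟩ := exists_linearIndependent ℚ (Set.range C)
  rw [hspan] at hbspan
  have basis : Module.Basis b ℚ (Fin k → ℚ) :=
    Module.Basis.mk hbli (by rw [Subtype.range_coe_subtype, Set.setOf_mem_eq, hbspan])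
  have : Fintype b := FiniteDimensional.fintypeBasisIndex basis
  have hcard : Fintype.card b = k := by
    have := Module.finrank_eq_card_basis basis
    rw [Module.finrank_pi] at this
    simpa using this.symm
  let e : Fin k ≃ b := (Fintype.equivFinOfCardEq hcard).symm
  have hr : ∀ w : b, ∃ i : m, C i = (w : Fin k → ℚ) := fun w => hbsub w.2
  choose r hrw using hr
  refine ⟨fun j => r (e j), ?_, ?_⟩
  · intro j₁ j₂ hj
    have : C (r (e j₁)) = C (r (e j₂)) := congrArg C hj
    rw [hrw, hrw] at this
    exact e.injective (Subtype.ext this)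
  · rw [← linearIndependent_rows_iff_isUnit]
    have : (fun j => (C.submatrix (fun j => r (e j)) id) j) = (fun w : b => (w : Fin k → ℚ)) ∘ e := by
      funext j
      ext i
      simp [Matrix.submatrix, hrw]
    rw [show (C.submatrix (fun j => r (e j)) id).row = _ from this]
    exact hbli.comp e e.injective

lemma exists_int_point {m n : Type*} [Fintype m] [Fintype n] [DecidableEq m] [DecidableEq n]
    (A : Matrix m n ℤ) (hA : IsTotallyUnimodularMat A) (l c : n → ℤ) (x : n → ℚ)
    (hx : (A.map (Int.cast : ℤ → ℚ)).mulVec x = 0)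
    (hb : ∀ i, (l i : ℚ) ≤ x i ∧ x i ≤ (c i : ℚ)) :
    ∃ v : n → ℤ, A.mulVec v = 0 ∧ ∀ i, l i ≤ v i ∧ v i ≤ c i := by
  classical
  set B := A.map (Int.cast : ℤ → ℚ) with hB
  suffices H : ∀ N (x : n → ℚ), (fracSet x).card = N → B.mulVec x = 0 →
      (∀ i, (l i : ℚ) ≤ x i ∧ x i ≤ (c i : ℚ)) →
      ∃ v : n → ℤ, A.mulVec v = 0 ∧ ∀ i, l i ≤ v i ∧ v i ≤ c i by
    exact H _ x rfl hx hb
  intro N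
  induction N using Nat.strong_induction_on with
  | _ N ih =>
  intro x hN hx0 hbx
  by_cases hF : fracSet x = ∅
  · -- all coordinates integral
    have hint : ∀ i, ∃ z : ℤ, x i = (z : ℚ) := by
      intro i
      by_contra hc
      have : i ∈ fracSet x := mem_fracSet.mpr hc
      simp [hF] at this
    choose v hv using hint
    refine ⟨v, ?_, ?_⟩
    · funext i
      have h1 : ((A.mulVec v i : ℤ) : ℚ) = B.mulVec x i := by
        simp only [Matrix.mulVec, dotProduct, hB, Matrix.map_apply]
        push_cast
        exact Finset.sum_congr rfl fun j _ => by rw [hv j]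

      rw [hx0] at h1
      simp only [Pi.zero_apply] at h1 ⊢
      exact_mod_cast h1
    · intro i
      have h1 := (hbx i).1
      have h2 := (hbx i).2
      rw [hv i] at h1 h2
      exact ⟨by exact_mod_cast h1, by exact_mod_cast h2⟩
  · -- F nonempty
    set F := fracSet x with hFdef
    have hFne : F.Nonempty := Finset.nonempty_of_ne_empty hF
    have hstrict : ∀ j ∈ F, (l j : ℚ) < x j ∧ x j < (c j : ℚ) := by
      intro j hj
      have hnint := mem_fracSet.mp hj
      constructor
      · rcases lt_or_eq_of_le (hbx j).1 with h | h
        · exact h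
        · exact absurd ⟨l j, h.symm⟩ hnint
      · rcases lt_or_eq_of_le (hbx j).2 with h | h
        · exact h
        · exact absurd ⟨c j, h⟩ hnint
    by_cases hli : LinearIndependent ℚ (fun j : {j // j ∈ F} => Bᵀ (j : n))
    · -- independent columns: show x is integral on F, contradiction
      exfalso
      set k := F.card with hk
      let φ : Fin k ≃ {j // j ∈ F} := F.equivFin.symm
      let g : Fin k → n := fun s => (φ s : n)
      have hginj : Function.Injective g := fun s₁ s₂ h => φ.injective (Subtype.ext h)
      have hgmem : ∀ s, g s ∈ F := fun s => (φ s).2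
      let C : Matrix m (Fin k) ℚ := B.submatrix id g
      have hCli : LinearIndependent ℚ (fun s : Fin k => Cᵀ s) := hli.comp φ φ.injective
      obtain ⟨f, hfinj, hfunit⟩ := exists_rows C hCli
      let D : Matrix (Fin k) (Fin k) ℤ := A.submatrix f g
      have hCD : C.submatrix f id = (Int.castRingHom ℚ).mapMatrix D := by
        ext r s
        simp [C, D, hB, Matrix.submatrix, Matrix.map_apply]
      have hdetne : ((D.det : ℤ) : ℚ) ≠ 0 := by
        have h1 := hfunit
        rw [hCD] at h1
        have h2 := (Matrix.isUnit_iff_isUnit_det _).mp h1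
        rw [← RingHom.map_det] at h2
        exact h2.ne_zero
      have hDdet : D.det * D.det = 1 := by
        rcases hA k f g hfinj hginj with h | h | h
        · exfalso; apply hdetne; exact_mod_cast h
        · rw [show D.det = 1 from h]; ring
        · rw [show D.det = -1 from h]; ring
      -- integer values off F
      have hoff : ∀ j, ∃ z : ℤ, j ∉ F → x j = (z : ℚ) := by
        intro j
        by_cases hj : j ∈ F
        · exact ⟨0, fun h => absurd hj h⟩
        · have h1 : ¬¬∃ z : ℤ, x j = (z : ℚ) := fun h => hj (mem_fracSet.mpr h)
          obtain ⟨z, hz⟩ := not_not.mp h1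
          exact ⟨z, fun _ => hz⟩
      choose w hw using hoff
      let b' : Fin k → ℤ := fun r => -∑ j ∈ Finset.univ \ F, A (f r) j * w j
      have hrow : ∀ r : Fin k, ∑ s : Fin k, ((D r s : ℤ) : ℚ) * x (g s) = ((b' r : ℤ) : ℚ) := by
        intro r
        have h0 : B.mulVec x (f r) = 0 := by rw [hx0]; rfl
        simp only [Matrix.mulVec, dotProduct, hB, Matrix.map_apply] at h0
        have hsplit : ∑ j ∈ Finset.univ \ F, ((A (f r) j : ℤ) : ℚ) * x j
            + ∑ j ∈ F, ((A (f r) j : ℤ) : ℚ) * x j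
            = ∑ j : n, ((A (f r) j : ℤ) : ℚ) * x j :=
          Finset.sum_sdiff (Finset.subset_univ F)
        have hFsum : ∑ j ∈ F, ((A (f r) j : ℤ) : ℚ) * x j
            = ∑ s : Fin k, ((D r s : ℤ) : ℚ) * x (g s) := by
          rw [← Finset.sum_coe_sort F (fun j => ((A (f r) j : ℤ) : ℚ) * x j)]
          rw [← Equiv.sum_comp φ (fun j : {j // j ∈ F} => ((A (f r) (j : n) : ℤ) : ℚ) * x (j : n))]
          rfl
        have hCsum : ∑ j ∈ Finset.univ \ F, ((A (f r) j : ℤ) : ℚ) * x j = -((b' r : ℤ) : ℚ) := by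
          simp only [b']
          push_cast
          rw [neg_neg]
          exact Finset.sum_congr rfl fun j hj => by
            rw [hw j (Finset.mem_sdiff.mp hj).2]
        rw [hFsum, hCsum] at hsplit
        rw [h0] at hsplit
        linarith
      let z : Fin k → ℤ := D.det • D.cramer b'
      have hDz : D.mulVec z = b' := by
        show D.mulVec (D.det • D.cramer b') = b'
        rw [Matrix.mulVec_smul, Matrix.mulVec_cramer, smul_smul, hDdet, one_smul]
      -- over ℚ
      have hq1 : ((Int.castRingHom ℚ).mapMatrix D).mulVec (fun s => ((z s : ℤ) : ℚ))
          = fun r => ((b' r : ℤ) : ℚ) := by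
        funext r
        have := congrFun hDz r
        simp only [Matrix.mulVec, dotProduct] at this ⊢
        rw [← this]
        push_cast
        rfl
      have hq2 : ((Int.castRingHom ℚ).mapMatrix D).mulVec (fun s => x (g s))
          = fun r => ((b' r : ℤ) : ℚ) := by
        funext r
        have := hrow r
        simp only [Matrix.mulVec, dotProduct]
        convert this using 2
        rfl
      have hinj : Function.Injective ((Int.castRingHom ℚ).mapMatrix D).mulVec := by
        rw [Matrix.mulVec_injective_iff_isUnit]
        rw [← hCD]
        exact hfunit
      have heq : (fun s => x (g s)) = fun s => ((z s : ℤ) : ℚ) := hinj (hq2.trans hq1.symm)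
      obtain ⟨j₀, hj₀⟩ := hFne
      have hj₀int : x j₀ = ((z (φ.symm ⟨j₀, hj₀⟩) : ℤ) : ℚ) := by
        have := congrFun heq (φ.symm ⟨j₀, hj₀⟩)
        simpa [g] using this
      exact (mem_fracSet.mp hj₀) ⟨_, hj₀int⟩
    · -- dependent columns: descend
      rw [Fintype.not_linearIndependent_iff] at hli
      obtain ⟨gc, hgc0, j₁, hj₁⟩ := hli
      let y : n → ℚ := fun j => if h : j ∈ F then gc ⟨j, h⟩ else 0
      have hysupp : ∀ j, j ∉ F → y j = 0 := fun j hj => dif_neg hj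
      have hyF : ∀ (j) (h : j ∈ F), y j = gc ⟨j, h⟩ := fun j h => dif_pos h
      have hyne : y (j₁ : n) ≠ 0 := by rw [hyF _ j₁.2]; exact hj₁
      have hAy : B.mulVec y = 0 := by
        funext i
        have h1 := congrFun hgc0 i
        simp only [Finset.sum_apply, Pi.smul_apply, smul_eq_mul, Pi.zero_apply] at h1
        simp only [Matrix.mulVec, dotProduct, Pi.zero_apply]
        have h2 : ∑ j : n, B i j * y j = ∑ j ∈ F, B i j * y j := by
          refine (Finset.sum_subset (Finset.subset_univ F) ?_).symm
          intro j _ hj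
          rw [hysupp j hj, mul_zero]
        rw [h2, ← Finset.sum_coe_sort F (fun j => B i j * y j)]
        rw [← h1]
        refine Finset.sum_congr rfl fun j _ => ?_
        rw [hyF _ j.2]
        simp [Matrix.transpose_apply, mul_comm]
      let T : Finset n := F.filter (fun j => y j ≠ 0)
      have hTne : T.Nonempty := ⟨j₁, Finset.mem_filter.mpr ⟨j₁.2, hyne⟩⟩
      let q : n → ℚ := fun j => if 0 < y j then (c j - x j) / y j else (x j - l j) / (-y j)
      have hqpos : ∀ j ∈ T, 0 < q j := by
        intro j hj
        obtain ⟨hjF, hjy⟩ := Finset.mem_filter.mp hj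
        obtain ⟨hl, hc⟩ := hstrict j hjF
        by_cases hy : 0 < y j
        · simp only [q, if_pos hy]
          exact div_pos (by linarith) hy
        · simp only [q, if_neg hy]
          have : y j < 0 := lt_of_le_of_ne (not_lt.mp hy) hjy
          exact div_pos (by linarith) (by linarith)
      set t := T.inf' hTne q with ht
      have htpos : 0 < t := (Finset.lt_inf'_iff hTne).mpr hqpos
      have htle : ∀ j ∈ T, t ≤ q j := fun j hj => Finset.inf'_le q hj
      obtain ⟨js, hjsT, hjs⟩ := Finset.exists_mem_eq_inf' hTne q
      obtain ⟨hjsF, hjsy⟩ := Finset.mem_filter.mp hjsT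
      set x' := x + t • y with hx'
      have hx'app : ∀ i, x' i = x i + t * y i := fun i => rfl
      have hmemT : ∀ i, y i ≠ 0 → i ∈ T := by
        intro i hi
        by_cases hiF : i ∈ F
        · exact Finset.mem_filter.mpr ⟨hiF, hi⟩
        · exact absurd (hysupp i hiF) hi
      have hx'b : ∀ i, (l i : ℚ) ≤ x' i ∧ x' i ≤ (c i : ℚ) := by
        intro i
        rw [hx'app]
        rcases lt_trichotomy (y i) 0 with hy | hy | hy
        · have hiT := hmemT i hy.ne
          have hq : q i = (x i - l i) / (-y i) := if_neg (not_lt.mpr hy.le)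
          have h1 : t * (-y i) ≤ (x i - l i) / (-y i) * (-y i) :=
            mul_le_mul_of_nonneg_right (hq ▸ htle i hiT) (by linarith)
          rw [div_mul_cancel₀ _ (by linarith : -y i ≠ 0)] at h1
          constructor
          · linarith
          · nlinarith [(hbx i).2]
        · simp [hy, (hbx i).1, (hbx i).2]
        · have hiT := hmemT i hy.ne'
          have hq : q i = (c i - x i) / y i := if_pos hy
          have h1 : t * y i ≤ (c i - x i) / y i * y i :=
            mul_le_mul_of_nonneg_right (hq ▸ htle i hiT) hy.le
          rw [div_mul_cancel₀ _ hy.ne'] at h1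
          constructor
          · nlinarith [(hbx i).1]
          · linarith
      have hx'0 : B.mulVec x' = 0 := by
        rw [hx', Matrix.mulVec_add, Matrix.mulVec_smul, hx0, hAy]
        simp
      have hsub : fracSet x' ⊆ F := by
        intro j hj
        by_contra hjF
        have h1 : x' j = x j := by rw [hx'app, hysupp j hjF, mul_zero, add_zero]
        have h2 : ¬ j ∈ fracSet x := fun h => hjF h
        rw [mem_fracSet, not_not] at h2
        exact (mem_fracSet.mp hj) (h1 ▸ h2)
      have hjs_not : js ∉ fracSet x' := by
        rw [mem_fracSet, not_not]
        by_cases hy : 0 < y js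
        · refine ⟨c js, ?_⟩
          rw [hx'app, show t = q js from hjs, show q js = (c js - x js) / y js from if_pos hy,
            div_mul_cancel₀ _ hy.ne']
          ring
        · refine ⟨l js, ?_⟩
          have hyneg : y js < 0 := lt_of_le_of_ne (not_lt.mp hy) hjsy
          have hcalc : (x js - (l js : ℚ)) / (-y js) * y js = -(x js - l js) := by
            rw [div_mul_eq_mul_div, div_neg, mul_div_assoc, div_self hjsy, mul_one]
          rw [hx'app, show t = q js from hjs, show q js = (x js - l js) / (-y js) from if_neg hy,
            hcalc]
          ring
      have hcard : (fracSet x').card < N := by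
        rw [← hN]
        exact Finset.card_lt_card ⟨hsub, fun hss => hjs_not (hss hjsF)⟩
      exact ih _ hcard x' rfl hx'0 hx'b

theorem stmt0 {m n : Type*} [Fintype m] [Fintype n] [DecidableEq m] [DecidableEq n]
    (A : Matrix m n ℤ) (hA : IsTotallyUnimodularMat A)
    (u : n → ℤ) (hu : InGraverBasis A u) :
    ∀ i, u i = -1 ∨ u i = 0 ∨ u i = 1 := by
  intro i
  by_contra hcon
  push_neg at hcon
  have hbig : u i ≤ -2 ∨ 2 ≤ u i := by omega
  obtain ⟨hune, huker, humin⟩ := hu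
  set l : n → ℤ := fun j => ⌊(u j : ℚ) / 2⌋ with hl
  set c : n → ℤ := fun j => ⌈(u j : ℚ) / 2⌉ with hc
  set x : n → ℚ := fun j => (u j : ℚ) / 2 with hxdef
  have hxker : (A.map (Int.cast : ℤ → ℚ)).mulVec x = 0 := by
    funext r
    have h0 := congrFun huker r
    simp only [Matrix.mulVec, dotProduct, Pi.zero_apply] at h0
    simp only [Matrix.mulVec, dotProduct, Matrix.map_apply, Pi.zero_apply]
    have h4 : ∑ j, ((A r j : ℚ)) * (u j : ℚ) = 0 := by exact_mod_cast h0
    calc ∑ j, ((A r j : ℚ)) * x j = (∑ j, ((A r j : ℚ)) * (u j : ℚ)) / 2 := by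
          rw [Finset.sum_div]
          exact Finset.sum_congr rfl fun j _ => by rw [hxdef, mul_div_assoc]
      _ = 0 := by rw [h4]; norm_num
  have hbnds : ∀ j, ((l j : ℚ)) ≤ x j ∧ x j ≤ (c j : ℚ) :=
    fun j => ⟨Int.floor_le _, Int.le_ceil _⟩
  obtain ⟨v, hvker, hvb⟩ := exists_int_point A hA l c x hxker hbnds
  have hfl : ∀ j, 0 ≤ u j → 0 ≤ l j := fun j h =>
    Int.le_floor.mpr (by push_cast; positivity)
  have hcl : ∀ j, 0 ≤ u j → c j ≤ u j := fun j h =>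
    Int.ceil_le.mpr (by
      have h9 : (0:ℚ) ≤ (u j : ℚ) := by exact_mod_cast h
      linarith)
  have hcneg : ∀ j, u j ≤ 0 → c j ≤ 0 := fun j h =>
    Int.ceil_le.mpr (by
      have h9 : (u j : ℚ) ≤ 0 := by exact_mod_cast h
      push_cast
      linarith)
  have hlneg : ∀ j, u j ≤ 0 → u j ≤ l j := fun j h =>
    Int.le_floor.mpr (by
      have h9 : (u j : ℚ) ≤ 0 := by exact_mod_cast h
      linarith)
  have hv0 : v ≠ 0 := by
    intro h0
    rcases hbig with hb2 | hb2
    · have h5 : c i ≤ -1 := Int.ceil_le.mpr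
        (by
      have h9 : (u i : ℚ) ≤ -2 := by exact_mod_cast hb2
      push_cast
      linarith)
      have h6 := (hvb i).2
      rw [h0] at h6
      simp at h6
      omega
    · have h5 : 1 ≤ l i := Int.le_floor.mpr
        (by
      have h9 : (2:ℚ) ≤ (u i : ℚ) := by exact_mod_cast hb2
      push_cast
      linarith)
      have h6 := (hvb i).1
      rw [h0] at h6
      simp at h6
      omega
  have hvne : v ≠ u := by
    intro he
    rcases hbig with hb2 | hb2
    · have h5 : u i + 1 ≤ l i := Int.le_floor.mpr
        (by
      have h9 : (u i : ℚ) ≤ -2 := by exact_mod_cast hb2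
      push_cast
      linarith)
      have h6 := (hvb i).1
      rw [he] at h6
      omega
    · have h5 : c i ≤ u i - 1 := Int.ceil_le.mpr
        (by
      have h9 : (2:ℚ) ≤ (u i : ℚ) := by exact_mod_cast hb2
      push_cast
      linarith)
      have h6 := (hvb i).2
      rw [he] at h6
      omega
  have hconf1 : ∀ j, max (v j) 0 ≤ max (u j) 0 := by
    intro j
    rcases le_or_gt 0 (u j) with h | h
    · exact max_le (((hvb j).2.trans (hcl j h)).trans (le_max_left _ _)) (le_max_right _ _)
    · exact max_le (((hvb j).2.trans (hcneg j h.le)).trans (le_max_right _ _)) (le_max_right _ _)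
  have hconf2 : ∀ j, max (-v j) 0 ≤ max (-u j) 0 := by
    intro j
    rcases le_or_gt 0 (u j) with h | h
    · have h5 : 0 ≤ v j := le_trans (hfl j h) (hvb j).1
      exact max_le (le_trans (by omega) (le_max_right (-u j) 0)) (le_max_right _ _)
    · have h5 : u j ≤ v j := le_trans (hlneg j h.le) (hvb j).1
      exact max_le (le_trans (by omega : -v j ≤ -u j) (le_max_left _ _)) (le_max_right _ _)
  exact humin v hv0 hvker hvne ⟨hconf1, hconf2⟩
end

section
/- If A is a totally unimodular integer matrix, then the Lawrence lift Λ(A), defined as the block matrix [[A, 0], [I, I]], is totally unimodular. -/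
open Matrix

lemma isTotallyUnimodularMat_iff {m n : Type*} [Fintype m] [Fintype n] (A : Matrix m n ℤ) :
    IsTotallyUnimodularMat A ↔ A.IsTotallyUnimodular := by
  constructor
  · intro h k f g hf hg
    rcases h k f g hf hg with h' | h' | h'
    · exact ⟨0, h'.symm⟩
    · exact ⟨1, h'.symm⟩
    · exact ⟨-1, by rw [h']; rfl⟩
  · intro h k f g hf hg
    rcases h k f g hf hg with ⟨s, hs⟩
    cases s
    · left; exact hs.symm
    · right; right; exact hs.symm
    · right; left; exact hs.symm

/-- The Lawrence lift `[[A, 0], [I, I]]` of a totally unimodular matrix is totally unimodular. -/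
theorem stmt2 {d n : ℕ} (A : Matrix (Fin d) (Fin n) ℤ) (hA : IsTotallyUnimodularMat A) :
    IsTotallyUnimodularMat
      (Matrix.fromBlocks A 0 (1 : Matrix (Fin n) (Fin n) ℤ) (1 : Matrix (Fin n) (Fin n) ℤ)) := by
  rw [isTotallyUnimodularMat_iff] at hA ⊢
  rw [← Matrix.transpose_isTotallyUnimodular_iff, Matrix.fromBlocks_transpose,
    Matrix.transpose_zero, Matrix.transpose_one]
  have hsplit : Matrix.fromBlocks Aᵀ (1 : Matrix (Fin n) (Fin n) ℤ)
      (0 : Matrix (Fin n) (Fin d) ℤ) (1 : Matrix (Fin n) (Fin n) ℤ)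
      = Matrix.fromRows (Matrix.fromCols Aᵀ 1) (Matrix.fromCols 0 1) := by
    ext (i | i) (j | j) <;> rfl
  rw [hsplit]
  apply Matrix.IsTotallyUnimodular.fromRows_unitlike
  · exact (Matrix.fromCols_one_isTotallyUnimodular_iff Aᵀ).mpr hA.transpose
  · intro _ i
    refine ⟨Sum.inr i, 1, funext fun j ↦ ?_⟩
    cases j <;> simp [Matrix.fromCols, Matrix.one_apply, Pi.single_apply, eq_comm]
end

section
/- If A is a unimodular integer matrix with full row rank, then for every b in the affine semigroup generated by the columns of A, every vertex of the polyhedron P = {x : Ax = b, x ≥ 0} has integer coordinates. -/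
open Matrix Finset

section Helpers

/-- `mulVec` as a sum of columns. -/
lemma mulVec_eq_sum_cols {R : Type*} [CommRing R] {d n : ℕ} (M : Matrix (Fin d) (Fin n) R)
    (x : Fin n → R) : M.mulVec x = ∑ j : Fin n, x j • (fun i => M i j) := by
  funext i
  simp [Matrix.mulVec, dotProduct, Finset.sum_apply, mul_comm]

/-- If the rows of an integer matrix are linearly independent, its Gram matrix has nonzero
determinant. -/
lemma gram_det_ne_zero {d n : ℕ} (A : Matrix (Fin d) (Fin n) ℤ)
    (hli : LinearIndependent ℤ (fun i : Fin d => A i)) : (A * Aᵀ).det ≠ 0 := by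
  intro h0
  obtain ⟨c, hc0, hc⟩ := Matrix.exists_mulVec_eq_zero_iff.mpr h0
  set w : Fin n → ℤ := Matrix.vecMul c A with hw
  have hww : w ⬝ᵥ w = 0 := by
    have h1 : c ⬝ᵥ ((A * Aᵀ) *ᵥ c) = 0 := by rw [hc, dotProduct_zero]
    calc w ⬝ᵥ w = (c ᵥ* A) ⬝ᵥ w := rfl
      _ = c ⬝ᵥ (A *ᵥ w) := (Matrix.dotProduct_mulVec c A w).symm
      _ = (A *ᵥ w) ⬝ᵥ c := dotProduct_comm _ _
      _ = (w ᵥ* Aᵀ) ⬝ᵥ c := by rw [Matrix.vecMul_transpose]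
      _ = ((c ᵥ* A) ᵥ* Aᵀ) ⬝ᵥ c := rfl
      _ = (c ᵥ* (A * Aᵀ)) ⬝ᵥ c := by rw [Matrix.vecMul_vecMul]
      _ = c ⬝ᵥ ((A * Aᵀ) *ᵥ c) := (Matrix.dotProduct_mulVec c (A * Aᵀ) c).symm
      _ = 0 := h1
  have hwz : w = 0 := by
    funext j
    have h2 : ∑ j : Fin n, w j * w j = 0 := hww
    have hj := (Finset.sum_eq_zero_iff_of_nonneg (fun j _ => mul_self_nonneg (w j))).mp h2 j
      (Finset.mem_univ j)
    exact mul_self_eq_zero.mp hj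
  apply hc0
  funext i
  refine Fintype.linearIndependent_iff.mp hli c ?_ i
  have : Matrix.vecMul c A = ∑ i : Fin d, c i • A i := by
    funext j
    simp [Matrix.vecMul, dotProduct, Finset.sum_apply]
  rw [← this, ← hw, hwz]

/-- Determinant of `updateColumn` with a finite sum of columns. -/
lemma det_updateCol_finsum {R : Type*} [CommRing R] {d : ℕ} (M : Matrix (Fin d) (Fin d) R)
    (i : Fin d) {ι : Type*} (s : Finset ι) (f : ι → Fin d → R) :
    (M.updateCol i (∑ j ∈ s, f j)).det = ∑ j ∈ s, (M.updateCol i (f j)).det := by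
  classical
  induction s using Finset.induction_on with
  | empty =>
      simp only [Finset.sum_empty]
      exact Matrix.det_eq_zero_of_column_eq_zero i (fun a => by simp)
  | insert _ _ h ih =>
      rw [Finset.sum_insert h, Matrix.det_updateCol_add, ih, Finset.sum_insert h]

/-- If the Gram matrix is invertible, every vector is in the image of `mulVec`. -/
lemma exists_mulVec_eq {d n : ℕ} (Ar : Matrix (Fin d) (Fin n) ℝ)
    (hdet : (Ar * Arᵀ).det ≠ 0) (y : Fin d → ℝ) : ∃ x : Fin n → ℝ, Ar.mulVec x = y := by
  refine ⟨Arᵀ *ᵥ ((Ar * Arᵀ)⁻¹ *ᵥ y), ?_⟩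
  rw [Matrix.mulVec_mulVec, Matrix.mulVec_mulVec,
    Matrix.mul_nonsing_inv _ (isUnit_iff_ne_zero.mpr hdet), Matrix.one_mulVec]

set_option maxHeartbeats 1000000 in
/-- The columns in the support of a vertex are linearly independent. -/
lemma support_cols_li {d n : ℕ} (Ar : Matrix (Fin d) (Fin n) ℝ) (bR : Fin d → ℝ)
    (v : Fin n → ℝ) (hv : Ar.mulVec v = bR) (hv0 : ∀ i, 0 ≤ v i)
    (hvert : ∀ x y : Fin n → ℝ,
      Ar.mulVec x = bR → (∀ i, 0 ≤ x i) → Ar.mulVec y = bR → (∀ i, 0 ≤ y i) →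
      ∀ t : ℝ, 0 < t → t < 1 → v = t • x + (1 - t) • y → x = y) :
    LinearIndependent ℝ (fun j : {j : Fin n | v j ≠ 0} => (fun i => Ar i j.1)) := by
  classical
  rw [Fintype.linearIndependent_iff]
  intro g hg
  have hex : ∃ c : Fin n → ℝ, (∀ j : {j : Fin n | v j ≠ 0}, c j.1 = g j) ∧
      (∀ j, v j = 0 → c j = 0) ∧ Ar.mulVec c = 0 := by
    refine ⟨fun j => if h : v j ≠ 0 then g ⟨j, h⟩ else 0, fun j => dif_pos j.2, ?_, ?_⟩
    · intro j hj
      simp [hj]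
    · rw [mulVec_eq_sum_cols]
      have h1 : ∑ j ∈ univ.filter (fun j => v j ≠ 0),
          (if h : v j ≠ 0 then g ⟨j, h⟩ else 0) • (fun i => Ar i j)
          = ∑ j : {j : Fin n | v j ≠ 0},
            (if h : v j.1 ≠ 0 then g ⟨j.1, h⟩ else 0) • (fun i => Ar i j.1) :=
        Finset.sum_subtype _ (by simp) _
      have h2 : ∑ j : Fin n, (if h : v j ≠ 0 then g ⟨j, h⟩ else 0) • (fun i => Ar i j)
          = ∑ j ∈ univ.filter (fun j => v j ≠ 0),
            (if h : v j ≠ 0 then g ⟨j, h⟩ else 0) • (fun i => Ar i j) := by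
        refine (Finset.sum_subset (Finset.subset_univ _) ?_).symm
        intro j _ hj
        have : ¬ v j ≠ 0 := by simpa using hj
        simp [this]
      rw [h2, h1, ← hg]
      refine Finset.sum_congr rfl fun j _ => ?_
      congr 1
      exact dif_pos j.2
  obtain ⟨c, hcg, hc0, hkey⟩ := hex
  suffices hc : ∀ j, c j = 0 by
    intro j
    rw [← hcg j, hc]
  by_cases hF : (univ.filter (fun j => c j ≠ 0)).Nonempty
  · have hvpos : ∀ j ∈ univ.filter (fun j => c j ≠ 0), 0 < v j := by
      intro j hj
      have hcj : c j ≠ 0 := by simpa using hj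
      have hvj : v j ≠ 0 := fun h => hcj (hc0 j h)
      exact lt_of_le_of_ne (hv0 j) (Ne.symm hvj)
    obtain ⟨ε, hε, hbound⟩ : ∃ ε : ℝ, 0 < ε ∧ ∀ j, ε * |c j| ≤ v j := by
      refine ⟨(univ.filter (fun j => c j ≠ 0)).inf' hF (fun j => v j / |c j|), ?_, ?_⟩
      · rw [Finset.lt_inf'_iff]
        intro j hj
        have hcj : c j ≠ 0 := by simpa using hj
        exact div_pos (hvpos j hj) (abs_pos.mpr hcj)
      · intro j
        by_cases hcj : c j = 0
        · simpa [hcj] using hv0 j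
        · have hjF : j ∈ univ.filter (fun j => c j ≠ 0) := by simp [hcj]
          have h3 := Finset.inf'_le (fun j => v j / |c j|) hjF
          calc _ * |c j| ≤ (v j / |c j|) * |c j| :=
                mul_le_mul_of_nonneg_right h3 (abs_nonneg _)
            _ = v j := div_mul_cancel₀ _ (abs_ne_zero.mpr hcj)
    have hxy : v + ε • c = v - ε • c := by
      refine hvert (v + ε • c) (v - ε • c) ?_ ?_ ?_ ?_ (1/2) (by norm_num) (by norm_num) ?_
      · rw [Matrix.mulVec_add, hv, Matrix.mulVec_smul, hkey, smul_zero, add_zero]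
      · intro j
        have h1 : -(ε * |c j|) ≤ ε * c j := by
          have := mul_le_mul_of_nonneg_left (neg_abs_le (c j)) hε.le
          simpa [mul_comm] using this
        have h2 := hbound j
        simp only [Pi.add_apply, Pi.smul_apply, smul_eq_mul]
        linarith
      · rw [Matrix.mulVec_sub, hv, Matrix.mulVec_smul, hkey, smul_zero, sub_zero]
      · intro j
        have h1 : ε * c j ≤ ε * |c j| := mul_le_mul_of_nonneg_left (le_abs_self _) hε.le
        have h2 := hbound j
        simp only [Pi.sub_apply, Pi.smul_apply, smul_eq_mul]
        linarith
      · funext j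
        simp only [Pi.add_apply, Pi.sub_apply, Pi.smul_apply, smul_eq_mul]
        ring
    intro j
    have h5 := congrFun hxy j
    simp only [Pi.add_apply, Pi.sub_apply, Pi.smul_apply, smul_eq_mul] at h5
    have h2 : ε * c j = 0 := by linarith
    rcases mul_eq_zero.mp h2 with h | h
    · exact absurd h hε.ne'
    · exact h
  · intro j
    by_contra hcj
    exact hF ⟨j, by simp [hcj]⟩

/-- A linearly independent set of columns extends to a square invertible column submatrix. -/
lemma exists_good_g {d n : ℕ} (Ar : Matrix (Fin d) (Fin n) ℝ) (S : Set (Fin n))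
    (hli : LinearIndependent ℝ (fun j : S => (fun i => Ar i j.1)))
    (hsurj : ∀ y : Fin d → ℝ, ∃ x, Ar.mulVec x = y) :
    ∃ g : Fin d → Fin n, Function.Injective g ∧ S ⊆ Set.range g ∧
      LinearIndependent ℝ (fun k : Fin d => (fun i => Ar i (g k))) := by
  classical
  set fcol : Fin n → (Fin d → ℝ) := fun j => (fun i => Ar i j) with hfcol
  have hs : LinearIndependent ℝ ((↑) : (fcol '' S) → (Fin d → ℝ)) := LinearIndepOn.id_image hli
  obtain ⟨bset, hbt, hsb, htb, (hbli : LinearIndependent ℝ ((↑) : bset → (Fin d → ℝ)))⟩ :=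
    exists_linearIndepOn_id_extension (s := fcol '' S) hs (Set.image_subset_range fcol S)
  have hspan : ⊤ ≤ Submodule.span ℝ bset := by
    intro y _
    obtain ⟨x, hx⟩ := hsurj y
    rw [← hx, mulVec_eq_sum_cols]
    exact Submodule.sum_mem _ (fun j _ =>
      Submodule.smul_mem _ _ (htb (Set.mem_range_self j)))
  haveI : Fintype ↥bset := hbli.setFinite.fintype
  let bas : Module.Basis ↥bset ℝ (Fin d → ℝ) :=
    Module.Basis.mk hbli (by rwa [Subtype.range_coe])
  have hcard : Fintype.card ↥bset = d := by
    have h1 := Module.finrank_eq_card_basis bas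
    rw [Module.finrank_fin_fun] at h1
    exact h1.symm
  let e : Fin d ≃ ↥bset := (Fintype.equivFinOfCardEq hcard).symm
  have hpre : ∀ w : ↥bset, ∃ j : Fin n, fcol j = w.1 ∧ (w.1 ∈ fcol '' S → j ∈ S) := by
    intro w
    by_cases hw : w.1 ∈ fcol '' S
    · obtain ⟨j, hjS, hj⟩ := hw
      exact ⟨j, hj, fun _ => hjS⟩
    · obtain ⟨j, hj⟩ := hbt w.2
      exact ⟨j, hj, fun h => absurd h hw⟩
  choose pick hpick1 hpick2 using hpre
  have hpickinj : Function.Injective pick := by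
    intro w w' h
    apply Subtype.ext
    rw [← hpick1 w, ← hpick1 w', h]
  refine ⟨fun k => pick (e k), hpickinj.comp e.injective, ?_, ?_⟩
  · intro j hj
    set w : ↥bset := ⟨fcol j, hsb (Set.mem_image_of_mem _ hj)⟩ with hw
    have hjS : pick w ∈ S := hpick2 w ⟨j, hj, rfl⟩
    have heq : fcol (pick w) = fcol j := hpick1 w
    have : (⟨pick w, hjS⟩ : S) = ⟨j, hj⟩ := hli.injective (by
      simp only []
      exact heq)
    have hpj : pick w = j := congrArg Subtype.val this
    exact ⟨e.symm w, by simp [hpj]⟩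
  · have heq : (fun k : Fin d => fcol (pick (e k))) = fun k => ((e k : ↥bset) : Fin d → ℝ) :=
      funext fun k => hpick1 (e k)
    have := hbli.comp e e.injective
    rw [hfcol] at heq
    exact heq ▸ this

/-- Integer solvability of the basic system, using unimodularity. -/
lemma exists_int_solution {d n : ℕ} (A : Matrix (Fin d) (Fin n) ℤ) (l : ℤ)
    (hminor : ∀ g : Fin d → Fin n, Function.Injective g →
      (A.submatrix id g).det = 0 ∨ (A.submatrix id g).det = l ∨ (A.submatrix id g).det = -l)
    (g : Fin d → Fin n) (hginj : Function.Injective g)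
    (hdet : (A.submatrix id g).det ≠ 0) (x0 : Fin n → ℕ) :
    ∃ z : Fin d → ℤ,
      (A.submatrix id g).mulVec z = A.mulVec (fun j => (x0 j : ℤ)) := by
  classical
  set B : Matrix (Fin d) (Fin d) ℤ := A.submatrix id g with hB
  set b : Fin d → ℤ := A.mulVec (fun j => (x0 j : ℤ)) with hbdef
  have hBl : B.det = l ∨ B.det = -l := by
    rcases hminor g hginj with h | h | h
    · exact absurd h hdet
    · exact Or.inl h
    · exact Or.inr h
  have hldvd : ∀ x : ℤ, l ∣ x → B.det ∣ x := by
    rcases hBl with h | h <;> rw [h]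
    · exact fun x hx => hx
    · exact fun x hx => (neg_dvd).mpr hx
  have hdvd : ∀ i, B.det ∣ (B.updateCol i b).det := by
    intro i
    have hb : b = ∑ j : Fin n, (fun a => (x0 j : ℤ) * A a j) := by
      funext a
      simp [hbdef, Matrix.mulVec, dotProduct, Finset.sum_apply, mul_comm]
    rw [hb, det_updateCol_finsum]
    refine Finset.dvd_sum ?_
    intro j _
    have hcol : (fun a => (x0 j : ℤ) * A a j) = (x0 j : ℤ) • (fun a => A a j) := by
      funext a; simp
    rw [hcol, Matrix.det_updateCol_smul]
    refine Dvd.dvd.mul_left ?_ _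
    by_cases hj : ∃ k, g k = j
    · obtain ⟨k, rfl⟩ := hj
      by_cases hk : k = i
      · subst hk
        have h7 : B.updateCol k (fun a => A a (g k)) = B := by
          have h8 : (fun a => A a (g k)) = fun a => B a k := rfl
          rw [h8, Matrix.updateCol_eq_self]
        rw [h7]
      · have h7 : (B.updateCol i (fun a => A a (g k))).det = 0 := by
          refine Matrix.det_zero_of_column_eq (fun h => hk h.symm) ?_
          intro a
          rw [Matrix.updateCol_apply, Matrix.updateCol_apply]
          rw [if_pos rfl, if_neg hk]
          rfl
        rw [h7]
        exact dvd_zero _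
    · have hg'inj : Function.Injective (Function.update g i j) := by
        intro a c hac
        by_cases ha : a = i <;> by_cases hc : c = i
        · rw [ha, hc]
        · subst ha
          rw [Function.update_self, Function.update_of_ne hc] at hac
          exact absurd ⟨c, hac.symm⟩ hj
        · subst hc
          rw [Function.update_self, Function.update_of_ne ha] at hac
          exact absurd ⟨a, hac⟩ hj
        · rw [Function.update_of_ne ha, Function.update_of_ne hc] at hac
          exact hginj hac
      have heq : B.updateCol i (fun a => A a j) = A.submatrix id (Function.update g i j) := by
        ext a k
        by_cases hk : k = i
        · subst hk
          simp [Matrix.updateCol_apply]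
        · simp [Matrix.updateCol_apply, hk, Function.update_of_ne hk, hB]
      rw [heq]
      rcases hminor _ hg'inj with h | h | h <;> rw [h]
      · exact dvd_zero _
      · exact hldvd l dvd_rfl
      · exact hldvd (-l) (dvd_neg.mpr dvd_rfl)
  refine ⟨fun i => (B.updateCol i b).det / B.det, ?_⟩
  have hcz : B.det • (fun i => (B.updateCol i b).det / B.det) = Matrix.cramer B b := by
    funext i
    simp only [Pi.smul_apply, smul_eq_mul, Matrix.cramer_apply]
    exact Int.mul_ediv_cancel' (hdvd i)
  have hcr := Matrix.mulVec_cramer B b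
  rw [← hcz] at hcr
  rw [Matrix.mulVec_smul] at hcr
  funext i
  have := congrFun hcr i
  simp only [Pi.smul_apply, smul_eq_mul] at this
  exact mul_left_cancel₀ hdet this

end Helpers



/-- A full-row-rank integer matrix is unimodular if there is `l > 0` such that every maximal
minor is `0` or `±l`. -/
def IsUnimodularFR {m n : Type*} [Fintype m] [Fintype n] [DecidableEq m]
    (A : Matrix m n ℤ) : Prop :=
  LinearIndependent ℤ (fun i : m => A i) ∧
  ∃ l : ℤ, 0 < l ∧ ∀ g : m → n, Function.Injective g →
    (A.submatrix id g).det = 0 ∨ (A.submatrix id g).det = l ∨ (A.submatrix id g).det = -l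

/-- For a unimodular full-row-rank matrix `A` and any `b` in the affine semigroup generated by
the columns of `A` (i.e. `b = A x₀` for a nonnegative integer vector `x₀`), every vertex of
`P = {x : Ax = b, x ≥ 0}` is integral. -/
theorem stmt6 {d n : ℕ} (A : Matrix (Fin d) (Fin n) ℤ) (hA : IsUnimodularFR A)
    (x0 : Fin n → ℕ) (b : Fin d → ℤ) (hb : b = A.mulVec fun j => (x0 j : ℤ))
    (v : Fin n → ℝ)
    (hv : (A.map (Int.cast : ℤ → ℝ)).mulVec v = fun i => (b i : ℝ)) (hv0 : ∀ i, 0 ≤ v i)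
    (hvert : ∀ x y : Fin n → ℝ,
      (A.map (Int.cast : ℤ → ℝ)).mulVec x = (fun i => (b i : ℝ)) → (∀ i, 0 ≤ x i) →
      (A.map (Int.cast : ℤ → ℝ)).mulVec y = (fun i => (b i : ℝ)) → (∀ i, 0 ≤ y i) →
      ∀ t : ℝ, 0 < t → t < 1 → v = t • x + (1 - t) • y → x = y) :
    ∀ i, ∃ z : ℤ, v i = (z : ℝ) := by
  classical
  obtain ⟨hli, l, hl, hminor⟩ := hA
  set Ar : Matrix (Fin d) (Fin n) ℝ := A.map (Int.cast : ℤ → ℝ) with hAr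
  have hgram_int : (A * Aᵀ).det ≠ 0 := gram_det_ne_zero A hli
  have hmapmul : (A * Aᵀ).map (Int.cast : ℤ → ℝ) = Ar * Arᵀ := by
    ext i j
    simp [Matrix.mul_apply, Matrix.map_apply]
    rfl
  have castdet : ∀ {k : ℕ} (M : Matrix (Fin k) (Fin k) ℤ),
      ((M.map (Int.cast : ℤ → ℝ)).det) = ((M.det : ℤ) : ℝ) := by
    intro k M
    rw [show M.map (Int.cast : ℤ → ℝ) = (Int.castRingHom ℝ).mapMatrix M from rfl]
    exact (RingHom.map_det (Int.castRingHom ℝ) M).symm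
  have hgramR : (Ar * Arᵀ).det ≠ 0 := by
    rw [← hmapmul, castdet]
    simpa using hgram_int
  have hsurj := exists_mulVec_eq Ar hgramR
  have hSli := support_cols_li Ar (fun i => (b i : ℝ)) v hv hv0 hvert
  obtain ⟨g, hginj, hSrange, hgli⟩ := exists_good_g Ar {j | v j ≠ 0} hSli hsurj
  have hunit : IsUnit (Ar.submatrix id g) := by
    refine Matrix.linearIndependent_cols_iff_isUnit.mp ?_
    exact hgli
  have hdetR : (Ar.submatrix id g).det ≠ 0 := by
    have := Matrix.isUnit_iff_isUnit_det _ |>.mp hunit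
    exact this.ne_zero
  have hmapsub : Ar.submatrix id g = (A.submatrix id g).map (Int.cast : ℤ → ℝ) := rfl
  have hdetZ : (A.submatrix id g).det ≠ 0 := by
    intro h
    apply hdetR
    rw [hmapsub, castdet]
    simp [h]
  obtain ⟨z, hz⟩ := exists_int_solution A l hminor g hginj hdetZ x0
  have hw : (Ar.submatrix id g).mulVec (fun k => (z k : ℝ)) = fun i => (b i : ℝ) := by
    funext i
    have h2 : (((A.submatrix id g).mulVec z) i : ℝ) = (b i : ℝ) := by
      rw [hz, ← hb]
    rw [← h2]
    simp [Matrix.mulVec, dotProduct, hmapsub, Matrix.map_apply]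
    rfl
  have hvg : (Ar.submatrix id g).mulVec (fun k => v (g k)) = fun i => (b i : ℝ) := by
    rw [← hv]
    funext i
    show ∑ k : Fin d, Ar.submatrix id g i k * v (g k) = ∑ j : Fin n, Ar i j * v j
    have hzero : ∀ j ∈ Finset.univ, j ∉ Finset.univ.image g → Ar i j * v j = 0 := by
      intro j _ hj
      have hvj : v j = 0 := by
        by_contra h
        obtain ⟨k, hk⟩ := hSrange h
        exact hj (Finset.mem_image.mpr ⟨k, Finset.mem_univ k, hk⟩)
      rw [hvj, mul_zero]
    rw [← Finset.sum_subset (Finset.subset_univ (Finset.univ.image g)) hzero]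
    rw [Finset.sum_image (fun a _ c _ h => hginj h)]
    rfl
  have hinj : Function.Injective (Ar.submatrix id g).mulVec :=
    Matrix.mulVec_injective_iff_isUnit.mpr hunit
  have hveq : (fun k => v (g k)) = fun k => (z k : ℝ) := hinj (hvg.trans hw.symm)
  intro i
  by_cases hi : ∃ k, g k = i
  · obtain ⟨k, rfl⟩ := hi
    exact ⟨z k, congrFun hveq k⟩
  · refine ⟨0, ?_⟩
    have : v i = 0 := by
      by_contra h
      obtain ⟨k, hk⟩ := hSrange h
      exact hi ⟨k, hk⟩
    simp [this]
end

section
/- A vector u with entries in {-1,0,1} lies in the integer kernel of the vertex-arc incidence matrix of a directed graph G and has minimal support among nonzero kernel elements if and only if the support of u is the edge set of a simple cycle of the underlying undirected graph, with u_e = +1 on edges traversed in their orientation and u_e = -1 on edges traversed against their orientation (up to global sign). -/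
section
variable {V E : Type*} [Fintype V] [Fintype E] [DecidableEq V]
variable {head tail : E → V} {M : Matrix V E ℤ}

lemma ker_sum (hM : ∀ v e, M v e = (if v = head e then (1 : ℤ) else 0) - (if v = tail e then 1 else 0))
    (w : E → ℤ) :
    M.mulVec w = 0 ↔ ∀ v, ∑ e, ((if v = head e then w e else 0) - (if v = tail e then w e else 0)) = 0 := by
  rw [funext_iff]
  refine forall_congr' fun v => ?_
  rw [Matrix.mulVec, dotProduct]
  have : ∀ e : E, M v e * w e = (if v = head e then w e else 0) - (if v = tail e then w e else 0) := by
    intro e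
    rw [hM]
    split_ifs <;> ring
  simp only [this, Pi.zero_apply]
end

section
variable {V E : Type*} [Fintype V] [Fintype E] [DecidableEq V]
variable {head tail : E → V} {M : Matrix V E ℤ}

lemma cyc_ker (hM : ∀ v e, M v e = (if v = head e then (1 : ℤ) else 0) - (if v = tail e then 1 else 0))
    {m : ℕ} [NeZero m] (vs : Fin m → V) (es : Fin m → E) (hes : Function.Injective es) (ε : ℤ)
    (z : E → ℤ)
    (hor : ∀ k : Fin m, (tail (es k) = vs k ∧ head (es k) = vs (k + 1)) ∨
          (head (es k) = vs k ∧ tail (es k) = vs (k + 1)))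
    (hz0 : ∀ e, e ∉ Set.range es → z e = 0)
    (hz : ∀ k : Fin m,
          (tail (es k) = vs k ∧ head (es k) = vs (k + 1) → z (es k) = ε) ∧
          (¬(tail (es k) = vs k ∧ head (es k) = vs (k + 1)) → z (es k) = -ε)) :
    M.mulVec z = 0 := by
  classical
  rw [ker_sum hM]
  intro v
  have h1 : ∑ e, ((if v = head e then z e else 0) - (if v = tail e then z e else 0))
      = ∑ e ∈ Finset.image es Finset.univ, ((if v = head e then z e else 0) - (if v = tail e then z e else 0)) := by
    refine (Finset.sum_subset (Finset.subset_univ _) fun e _ he => ?_).symm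
    have : z e = 0 := hz0 e (by simpa [Set.range, Finset.mem_image] using he)
    simp [this]
  rw [h1, Finset.sum_image (fun a _ b _ h => hes h)]
  have h2 : ∀ t : Fin m, ((if v = head (es t) then z (es t) else 0) - (if v = tail (es t) then z (es t) else 0))
      = ε * ((if v = vs (t+1) then 1 else 0) - (if v = vs t then 1 else 0)) := by
    intro t
    by_cases hf : tail (es t) = vs t ∧ head (es t) = vs (t + 1)
    · rw [(hz t).1 hf, hf.1, hf.2]
      split_ifs <;> ring
    · obtain ⟨hh, ht⟩ := (hor t).resolve_left hf
      rw [(hz t).2 hf, hh, ht]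
      split_ifs <;> ring
  simp only [h2, ← Finset.mul_sum, Finset.sum_sub_distrib]
  have h3 : ∑ t : Fin m, (if v = vs (t+1) then (1:ℤ) else 0) = ∑ t : Fin m, (if v = vs t then (1:ℤ) else 0) :=
    Fintype.sum_bijective (· + 1) (Equiv.addRight (1 : Fin m)).bijective _ _ (fun t => rfl)
  rw [h3, sub_self, mul_zero]
end

section
variable {V E : Type*} [Fintype V] [Fintype E] [DecidableEq V]
variable {head tail : E → V} {M : Matrix V E ℤ}

lemma exit_lemma (hM : ∀ v e, M v e = (if v = head e then (1 : ℤ) else 0) - (if v = tail e then 1 else 0))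
    {w : E → ℤ} (hker : M.mulVec w = 0) {e : E} (hwe : w e ≠ 0) (hnl : head e ≠ tail e)
    {v : V} (hv : v = head e ∨ v = tail e) :
    ∃ e', e' ≠ e ∧ w e' ≠ 0 ∧ head e' ≠ tail e' ∧ (v = head e' ∨ v = tail e') := by
  by_contra hcon
  push_neg at hcon
  have hs := (ker_sum hM w).mp hker v
  rw [Finset.sum_eq_single e] at hs
  · rcases hv with h | h
    · rw [if_pos h, if_neg (by rw [h]; exact hnl)] at hs
      exact hwe (by linarith)
    · rw [if_neg (by rw [h]; exact fun hh => hnl hh.symm), if_pos h] at hs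
      exact hwe (by linarith)
  · intro e' _ hne
    by_cases h1 : w e' = 0
    · simp [h1]
    by_cases h2 : head e' = tail e'
    · rw [h2]; ring
    · have := hcon e' hne h1 h2
      rw [if_neg this.1, if_neg this.2, sub_zero]
  · simp
end

section
variable {V E : Type*} [Fintype V] [Fintype E] [DecidableEq V]
variable {head tail : E → V} {M : Matrix V E ℤ}

lemma cyc_min (hM : ∀ v e, M v e = (if v = head e then (1 : ℤ) else 0) - (if v = tail e then 1 else 0))
    {m : ℕ} [NeZero m] (vs : Fin m → V) (es : Fin m → E)
    (hvs : Function.Injective vs) (hes : Function.Injective es) {ε : ℤ}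
    (hε : ε = 1 ∨ ε = -1) {u : E → ℤ}
    (hor : ∀ k : Fin m, (tail (es k) = vs k ∧ head (es k) = vs (k + 1)) ∨
          (head (es k) = vs k ∧ tail (es k) = vs (k + 1)))
    (hu0 : ∀ e, e ∉ Set.range es → u e = 0)
    (huk : ∀ k : Fin m,
          (tail (es k) = vs k ∧ head (es k) = vs (k + 1) → u (es k) = ε) ∧
          (¬(tail (es k) = vs k ∧ head (es k) = vs (k + 1)) → u (es k) = -ε))
    (w : E → ℤ) (hw : w ≠ 0) (hker : M.mulVec w = 0)
    (hsub : {e | w e ≠ 0} ⊆ {e | u e ≠ 0}) : {e | w e ≠ 0} = {e | u e ≠ 0} := by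
  classical
  have hεne : ε ≠ 0 := by rcases hε with h | h <;> simp [h]
  have hune : ∀ k, u (es k) ≠ 0 := by
    intro k
    by_cases hf : tail (es k) = vs k ∧ head (es k) = vs (k + 1)
    · rw [(huk k).1 hf]; exact hεne
    · rw [(huk k).2 hf]; simpa using hεne
  -- support of u is exactly the range of es
  have hsupp_u : {e | u e ≠ 0} = Set.range es := by
    ext e
    constructor
    · intro he
      by_contra hre
      exact he (hu0 e hre)
    · rintro ⟨k, rfl⟩
      exact hune k
  have hw0 : ∀ e, e ∉ Set.range es → w e = 0 := by
    intro e hre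
    by_contra hne
    exact hre (hsupp_u ▸ hsub hne)
  -- some support edge of w
  obtain ⟨e0, he0⟩ : ∃ e, w e ≠ 0 := by
    by_contra h
    push_neg at h
    exact hw (funext fun e => h e)
  obtain ⟨k0, rfl⟩ : e0 ∈ Set.range es := hsupp_u ▸ hsub he0
  -- main claim: w is nonzero on every cycle edge
  have hmain : ∀ k, w (es k) ≠ 0 := by
    rcases eq_or_lt_of_le (Nat.one_le_iff_ne_zero.mpr (NeZero.ne m)) with hm1 | hm2
    · -- m = 1
      intro k
      have hk : k = k0 := by
        have h1 := k.isLt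
        have h2 := k0.isLt
        apply Fin.ext
        omega
      rwa [hk]
    · -- m ≥ 2
      have hone : (1 : Fin m) ≠ 0 := by
        simp [Fin.ext_iff, Nat.mod_eq_of_lt hm2]
      have hsucc : ∀ j : Fin m, j + 1 ≠ j := by
        intro j h
        exact hone (by simpa using congrArg (· - j) h)
      have hprop : ∀ j : Fin m, (w (es (j + 1)) = 0 ↔ w (es j) = 0) := by
        intro j
        set v := vs (j + 1) with hv
        have hs := (ker_sum hM w).mp hker v
        set f : E → ℤ := fun e => (if v = head e then w e else 0) - (if v = tail e then w e else 0)
          with hf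
        have h1 : ∑ e, f e = ∑ e ∈ Finset.image es Finset.univ, f e := by
          refine (Finset.sum_subset (Finset.subset_univ _) fun e _ he => ?_).symm
          have : w e = 0 := hw0 e (by simpa [Set.range, Finset.mem_image] using he)
          simp [hf, this]
        have h2 : ∑ e ∈ Finset.image es Finset.univ, f e = ∑ t : Fin m, f (es t) :=
          Finset.sum_image (fun a _ b _ h => hes h)
        have h3 : ∑ t : Fin m, f (es t) = ∑ t ∈ ({j, j + 1} : Finset (Fin m)), f (es t) := by
          refine (Finset.sum_subset (Finset.subset_univ _) fun t _ ht => ?_).symm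
          simp only [Finset.mem_insert, Finset.mem_singleton, not_or] at ht
          have hvh : v ≠ head (es t) := by
            intro h
            rcases hor t with ⟨ha, hb⟩ | ⟨ha, hb⟩
            · have : j + 1 = t + 1 := hvs (hv ▸ hb ▸ h)
              exact ht.1 (add_right_cancel this).symm
            · have : j + 1 = t := hvs (hv ▸ ha ▸ h)
              exact ht.2 this.symm
          have hvt : v ≠ tail (es t) := by
            intro h
            rcases hor t with ⟨ha, hb⟩ | ⟨ha, hb⟩
            · have : j + 1 = t := hvs (hv ▸ ha ▸ h)
              exact ht.2 this.symm
            · have : j + 1 = t + 1 := hvs (hv ▸ hb ▸ h)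
              exact ht.1 (add_right_cancel this).symm
          show (if v = head (es t) then w (es t) else 0) - (if v = tail (es t) then w (es t) else 0) = 0
          rw [if_neg hvh, if_neg hvt, sub_zero]
        have h4 : f (es j) + f (es (j + 1)) = 0 := by
          have hh := hs
          rw [h1, h2, h3, Finset.sum_pair (Ne.symm (hsucc j))] at hh
          exact hh
        have hfj : f (es j) = w (es j) ∨ f (es j) = -w (es j) := by
          rcases hor j with ⟨ha, hb⟩ | ⟨ha, hb⟩
          · left
            have hvh : v = head (es j) := hb.symm
            have hvt : v ≠ tail (es j) := by
              intro h
              have hvv : vs (j + 1) = vs j := by rw [← hv, h, ha]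
              exact hsucc j (hvs hvv)
            show (if v = head (es j) then w (es j) else 0) - (if v = tail (es j) then w (es j) else 0) = w (es j)
            rw [if_pos hvh, if_neg hvt, sub_zero]
          · right
            have hvt : v = tail (es j) := hb.symm
            have hvh : v ≠ head (es j) := by
              intro h
              have hvv : vs (j + 1) = vs j := by rw [← hv, h, ha]
              exact hsucc j (hvs hvv)
            show (if v = head (es j) then w (es j) else 0) - (if v = tail (es j) then w (es j) else 0) = -w (es j)
            rw [if_neg hvh, if_pos hvt, zero_sub]
        have hfj1 : f (es (j + 1)) = w (es (j + 1)) ∨ f (es (j + 1)) = -w (es (j + 1)) := by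
          rcases hor (j + 1) with ⟨ha, hb⟩ | ⟨ha, hb⟩
          · right
            have hvt : v = tail (es (j + 1)) := ha.symm
            have hvh : v ≠ head (es (j + 1)) := by
              intro h
              exact hsucc (j + 1) (hvs (hv ▸ hb ▸ h)).symm
            show (if v = head (es (j+1)) then w (es (j+1)) else 0) - (if v = tail (es (j+1)) then w (es (j+1)) else 0) = -w (es (j+1))
            rw [if_neg hvh, if_pos hvt, zero_sub]
          · left
            have hvh : v = head (es (j + 1)) := ha.symm
            have hvt : v ≠ tail (es (j + 1)) := by
              intro h
              exact hsucc (j + 1) (hvs (hv ▸ hb ▸ h)).symm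
            show (if v = head (es (j+1)) then w (es (j+1)) else 0) - (if v = tail (es (j+1)) then w (es (j+1)) else 0) = w (es (j+1))
            rw [if_pos hvh, if_neg hvt, sub_zero]
        constructor
        · intro h
          rcases hfj with h' | h' <;> rcases hfj1 with h'' | h'' <;>
            · rw [h', h'', h] at h4
              simpa using h4
        · intro h
          rcases hfj with h' | h' <;> rcases hfj1 with h'' | h'' <;>
            · rw [h', h'', h] at h4
              simpa using h4
      -- transfer nonzeroness from k0 to all k via hprop
      have hzero_iff : ∀ k : Fin m, (w (es k) = 0 ↔ w (es 0) = 0) := by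
        open Fin.NatCast in
        have hnat : ∀ n : ℕ, (w (es (n : Fin m)) = 0 ↔ w (es 0) = 0) := by
          intro n
          induction n with
          | zero => simp
          | succ n ih =>
            have : ((n + 1 : ℕ) : Fin m) = (n : Fin m) + 1 := by push_cast; ring
            rw [this, hprop]
            exact ih
        intro k
        have := hnat k.val
        rwa [Fin.cast_val_eq_self] at this
      intro k
      rw [Ne, hzero_iff k, ← hzero_iff k0]
      exact he0
  rw [hsupp_u]
  ext e
  constructor
  · intro he
    exact hsupp_u ▸ hsub he
  · rintro ⟨k, rfl⟩
    exact hmain k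
end




/-- A `{-1,0,1}`-vector `u` lies in the integer kernel of the vertex-arc incidence matrix of a
directed graph with inclusion-minimal support among nonzero kernel vectors if and only if the
support of `u` is the edge set of a simple cycle of the underlying undirected graph, with
`u_e = +1` on edges traversed in their orientation and `u_e = -1` on edges traversed against
their orientation, up to a global sign `ε`. -/
theorem stmt8 {V E : Type*} [Fintype V] [Fintype E] [DecidableEq V]
    (head tail : E → V) (M : Matrix V E ℤ)
    (hM : ∀ v e, M v e = (if v = head e then (1 : ℤ) else 0) - (if v = tail e then 1 else 0))
    (u : E → ℤ) (hu : ∀ e, u e = -1 ∨ u e = 0 ∨ u e = 1) :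
    (u ≠ 0 ∧ M.mulVec u = 0 ∧
      ∀ w : E → ℤ, w ≠ 0 → M.mulVec w = 0 →
        {e | w e ≠ 0} ⊆ {e | u e ≠ 0} → {e | w e ≠ 0} = {e | u e ≠ 0})
    ↔ ∃ (m : ℕ) (_ : NeZero m) (vs : Fin m → V) (es : Fin m → E) (ε : ℤ),
        (ε = 1 ∨ ε = -1) ∧ Function.Injective vs ∧ Function.Injective es ∧
        (∀ k : Fin m, (tail (es k) = vs k ∧ head (es k) = vs (k + 1)) ∨
          (head (es k) = vs k ∧ tail (es k) = vs (k + 1))) ∧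
        (∀ e, e ∉ Set.range es → u e = 0) ∧
        (∀ k : Fin m,
          (tail (es k) = vs k ∧ head (es k) = vs (k + 1) → u (es k) = ε) ∧
          (¬(tail (es k) = vs k ∧ head (es k) = vs (k + 1)) → u (es k) = -ε)) := by
  classical
  constructor
  · rintro ⟨h1, h2, h3⟩
    by_cases hloop : ∃ e, u e ≠ 0 ∧ head e = tail e
    · -- a loop in the support: cycle of length 1
      obtain ⟨e, hue, hle⟩ := hloop
      refine ⟨1, ⟨one_ne_zero⟩, fun _ => head e, fun _ => e, u e, ?_, ?_, ?_, ?_, ?_, ?_⟩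
      · rcases hu e with h | h | h
        · right; exact h
        · exact absurd h hue
        · left; exact h
      · intro a b _; exact Subsingleton.elim a b
      · intro a b _; exact Subsingleton.elim a b
      · intro k; exact Or.inl ⟨hle.symm, rfl⟩
      · intro e' he'
        have hre : e' ≠ e := fun h => he' ⟨0, h.symm⟩
        set w : E → ℤ := fun x => if x = e then 1 else 0 with hwdef
        have hwne : w ≠ 0 := by
          intro h
          have := congrFun h e
          simp [hwdef] at this
        have hwker : M.mulVec w = 0 := by
          rw [ker_sum hM]
          intro v
          rw [Finset.sum_eq_single e]
          · simp [hwdef, hle]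
          · intro e'' _ hne''
            simp [hwdef, hne'']
          · simp
        have hwsub : {x | w x ≠ 0} ⊆ {x | u x ≠ 0} := by
          intro x hx
          have hxe : x = e := by
            by_contra hne''
            exact hx (by simp [hwdef, hne''])
          simpa [hxe] using hue
        have hsupp := h3 w hwne hwker hwsub
        by_contra hcon
        have : e' ∈ {x | w x ≠ 0} := hsupp ▸ hcon
        exact hre (by by_contra h'; exact this (by simp [hwdef, h']))
      · intro k
        exact ⟨fun _ => rfl, fun hk => absurd ⟨hle.symm, rfl⟩ hk⟩
    · -- no loops in the support: build a walk and extract a cycle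
      push_neg at hloop
      obtain ⟨e0, he0⟩ : ∃ e, u e ≠ 0 := by
        by_contra h
        push_neg at h
        exact h1 (funext h)
      -- states of the walk
      have hstep : ∀ p : {p : V × E // u p.2 ≠ 0 ∧ head p.2 ≠ tail p.2 ∧
            (p.1 = head p.2 ∨ p.1 = tail p.2)},
          ∃ q : {p : V × E // u p.2 ≠ 0 ∧ head p.2 ≠ tail p.2 ∧
            (p.1 = head p.2 ∨ p.1 = tail p.2)}, q.1.2 ≠ p.1.2 ∧
          ((p.1.1 = head q.1.2 ∧ q.1.1 = tail q.1.2) ∨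
            (p.1.1 = tail q.1.2 ∧ q.1.1 = head q.1.2)) := by
        rintro ⟨⟨v, e⟩, hu1, hnl1, hv1⟩
        obtain ⟨e', hne', hu', hnl', hv'⟩ := exit_lemma hM h2 hu1 hnl1 hv1
        rcases hv' with hh | ht
        · exact ⟨⟨(tail e', e'), hu', hnl', Or.inr rfl⟩, hne', Or.inl ⟨hh, rfl⟩⟩
        · exact ⟨⟨(head e', e'), hu', hnl', Or.inl rfl⟩, hne', Or.inr ⟨ht, rfl⟩⟩
      choose f hf1 hf2 using hstep
      set p0 : {p : V × E // u p.2 ≠ 0 ∧ head p.2 ≠ tail p.2 ∧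
          (p.1 = head p.2 ∨ p.1 = tail p.2)} :=
        ⟨(head e0, e0), he0, hloop e0 he0, Or.inl rfl⟩ with hp0
      set wk := fun n => f^[n] p0 with hwk
      have hwk1 : ∀ n, wk (n + 1) = f (wk n) := fun n => Function.iterate_succ_apply' f n p0
      set vq : ℕ → V := fun n => (wk n).1.1 with hvq
      set eg : ℕ → E := fun n => (wk n).1.2 with heg
      have hinv : ∀ n, u (eg n) ≠ 0 ∧ head (eg n) ≠ tail (eg n) ∧
          (vq n = head (eg n) ∨ vq n = tail (eg n)) := fun n => (wk n).2
      have hnee : ∀ n, eg (n + 1) ≠ eg n := by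
        intro n
        rw [heg]
        simp only [hwk1]
        exact hf1 (wk n)
      have horn : ∀ n, (vq n = head (eg (n + 1)) ∧ vq (n + 1) = tail (eg (n + 1))) ∨
          (vq n = tail (eg (n + 1)) ∧ vq (n + 1) = head (eg (n + 1))) := by
        intro n
        rw [hvq, heg]
        simp only [hwk1]
        exact hf2 (wk n)
      have hvstep : ∀ n, vq (n + 1) ≠ vq n := by
        intro n h
        rcases horn n with ⟨ha, hb⟩ | ⟨ha, hb⟩
        · exact (hinv (n + 1)).2.1 (ha.symm.trans (h.symm.trans hb))
        · exact (hinv (n + 1)).2.1 (hb.symm.trans (h.trans ha))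
      -- pigeonhole: a first repeated vertex
      have hrep : ∃ j, ∃ i, i < j ∧ vq i = vq j := by
        obtain ⟨a, b, hab, habv⟩ := Finite.exists_ne_map_eq_of_infinite vq
        rcases lt_or_gt_of_ne hab with h | h
        · exact ⟨b, a, h, habv⟩
        · exact ⟨a, b, h, habv.symm⟩
      obtain ⟨i0, hi0lt, hi0⟩ := Nat.find_spec hrep
      have hmin : ∀ j', j' < Nat.find hrep → ¬∃ i, i < j' ∧ vq i = vq j' :=
        fun j' hj' => Nat.find_min hrep hj'
      set j0 := Nat.find hrep with hj0
      have hwin : ∀ p q, p < j0 → q < j0 → vq p = vq q → p = q := by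
        intro p q hp hq hpq
        by_contra hne'
        rcases lt_or_gt_of_ne hne' with h | h
        · exact hmin q hq ⟨p, h, hpq⟩
        · exact hmin p hp ⟨q, h, hpq.symm⟩
      set m := j0 - i0 with hmdef
      have hj0i0 : j0 = i0 + m := by omega
      have hm2 : 2 ≤ m := by
        rcases Nat.lt_or_ge m 2 with h | h
        · exfalso
          have hm1 : m = 1 := by omega
          have : j0 = i0 + 1 := by omega
          exact hvstep i0 ((this ▸ hi0).symm)
        · exact h
      haveI : NeZero m := ⟨by omega⟩
      set vs : Fin m → V := fun t => vq (i0 + t.val) with hvsdef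
      set es : Fin m → E := fun t => eg (i0 + t.val + 1) with hesdef
      have hadd : ∀ t : Fin m, ((t + 1 : Fin m)).val = (t.val + 1) % m := by
        intro t
        rw [Fin.add_def]
        congr 1
        rw [Fin.val_one', Nat.mod_eq_of_lt (show 1 < m by omega)]
      have hvs1 : ∀ t : Fin m, vq (i0 + t.val + 1) = vs (t + 1) := by
        intro t
        have htlt := t.isLt
        rw [hvsdef]
        simp only
        by_cases h : t.val + 1 < m
        · have hv' : ((t + 1 : Fin m)).val = t.val + 1 := by
            rw [hadd, Nat.mod_eq_of_lt h]
          rw [hv']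
          exact congrArg vq (by omega)
        · have hv' : ((t + 1 : Fin m)).val = 0 := by
            rw [hadd]
            have : t.val + 1 = m := by omega
            rw [this, Nat.mod_self]
          rw [hv']
          have h1' : i0 + t.val + 1 = j0 := by omega
          rw [h1', ← hi0]
          exact congrArg vq (by omega)
      have horc : ∀ t : Fin m, (tail (es t) = vs t ∧ head (es t) = vs (t + 1)) ∨
          (head (es t) = vs t ∧ tail (es t) = vs (t + 1)) := by
        intro t
        rcases horn (i0 + t.val) with ⟨ha, hb⟩ | ⟨ha, hb⟩
        · right
          exact ⟨ha.symm, hb.symm.trans (hvs1 t)⟩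
        · left
          exact ⟨ha.symm, hb.symm.trans (hvs1 t)⟩
      have hvsinj : Function.Injective vs := by
        intro a b h
        have ha' := a.isLt
        have hb' := b.isLt
        have := hwin (i0 + a.val) (i0 + b.val) (by omega) (by omega) h
        exact Fin.ext (by omega)
      have hsucc_val : ∀ t s : Fin m, t + 1 = s →
          (t.val + 1 = s.val ∨ (t.val + 1 = m ∧ s.val = 0)) := by
        intro t s hts
        have hc := congrArg Fin.val hts
        rw [hadd] at hc
        have := t.isLt
        by_cases h : t.val + 1 < m
        · left
          rw [Nat.mod_eq_of_lt h] at hc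
          omega
        · right
          have hm' : t.val + 1 = m := by omega
          rw [hm', Nat.mod_self] at hc
          omega
      have hesinj : Function.Injective es := by
        intro a b h
        by_contra hab
        have h' : eg (i0 + a.val + 1) = eg (i0 + b.val + 1) := h
        have hA := horc a
        rw [h] at hA
        have hB := horc b
        have hmix : a + 1 = b ∧ b + 1 = a := by
          rcases hA with ⟨ha1, ha2⟩ | ⟨ha1, ha2⟩ <;> rcases hB with ⟨hb1, hb2⟩ | ⟨hb1, hb2⟩
          · exact absurd (hvsinj (ha1.symm.trans hb1)) hab
          · exact ⟨hvsinj (ha2.symm.trans hb1), hvsinj (hb2.symm.trans ha1)⟩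
          · exact ⟨hvsinj (ha2.symm.trans hb1), hvsinj (hb2.symm.trans ha1)⟩
          · exact absurd (hvsinj (ha1.symm.trans hb1)) hab
        obtain ⟨e1, e2⟩ := hmix
        rcases hsucc_val a b e1 with hx | ⟨hx, hy⟩ <;>
          rcases hsucc_val b a e2 with hz | ⟨hz, hw⟩
        · omega
        · -- a.val + 1 = b.val
          apply hnee (i0 + a.val + 1)
          rw [show i0 + a.val + 1 + 1 = i0 + b.val + 1 by omega]
          exact h'.symm
        · -- b.val + 1 = a.val
          apply hnee (i0 + b.val + 1)
          rw [show i0 + b.val + 1 + 1 = i0 + a.val + 1 by omega]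
          exact h'
        · exact hab (Fin.ext (by omega))
      -- the signed indicator vector of the cycle
      set σ : Fin m → ℤ :=
        fun t => if tail (es t) = vs t ∧ head (es t) = vs (t + 1) then 1 else -1 with hσ
      set z : E → ℤ := fun e => ∑ t, if es t = e then σ t else 0 with hzdef
      have hzt : ∀ t, z (es t) = σ t := by
        intro t
        rw [hzdef]
        simp only
        rw [Finset.sum_eq_single t]
        · simp
        · intro s _ hst
          rw [if_neg (fun hc => hst (hesinj hc))]
        · simp
      have hz0 : ∀ e, e ∉ Set.range es → z e = 0 := by
        intro e he
        rw [hzdef]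
        simp only
        refine Finset.sum_eq_zero fun t _ => ?_
        rw [if_neg (fun hc => he ⟨t, hc⟩)]
      have hσpm : ∀ t, σ t = 1 ∨ σ t = -1 := by
        intro t
        rw [hσ]
        simp only
        split_ifs <;> simp
      have hzk : ∀ k : Fin m,
          (tail (es k) = vs k ∧ head (es k) = vs (k + 1) → z (es k) = 1) ∧
          (¬(tail (es k) = vs k ∧ head (es k) = vs (k + 1)) → z (es k) = -1) := by
        intro k
        constructor <;> intro hk <;> rw [hzt k, hσ] <;> simp only
        · rw [if_pos hk]
        · rw [if_neg hk]
      have hzker : M.mulVec z = 0 :=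
        cyc_ker hM vs es hesinj 1 z horc hz0 (fun k => ⟨(hzk k).1, fun hk => by
          rw [(hzk k).2 hk]⟩)
      have hzne : z ≠ 0 := by
        intro hc
        have h0 : z (es 0) = 0 := by rw [hc]; rfl
        rcases hσpm 0 with h | h <;> rw [hzt 0, h] at h0 <;> norm_num at h0
      have hzsub : {e | z e ≠ 0} ⊆ {e | u e ≠ 0} := by
        intro e he
        obtain ⟨t, rfl⟩ : e ∈ Set.range es := by
          by_contra hc
          exact he (hz0 e hc)
        exact (hinv (i0 + t.val + 1)).1
      have hzsupp := h3 z hzne hzker hzsub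
      by_cases hwz : u - z = 0
      · have huz : u = z := by rwa [sub_eq_zero] at hwz
        refine ⟨m, ‹NeZero m›, vs, es, 1, Or.inl rfl, hvsinj, hesinj, horc, ?_, ?_⟩
        · intro e he
          rw [huz]
          exact hz0 e he
        · intro k
          rw [huz]
          exact ⟨(hzk k).1, fun hk => by rw [(hzk k).2 hk]⟩
      · have hker' : M.mulVec (u - z) = 0 := by
          rw [Matrix.mulVec_sub, h2, hzker, sub_self]
        have hsub' : {e | (u - z) e ≠ 0} ⊆ {e | u e ≠ 0} := by
          intro e he
          simp only [Set.mem_setOf_eq, Pi.sub_apply] at he ⊢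
          intro hue
          apply he
          have hz' : e ∉ {x | z x ≠ 0} := by
            rw [hzsupp]
            simp [hue]
          have : z e = 0 := by simpa using hz'
          rw [hue, this, sub_zero]
        have heqsupp := h3 (u - z) hwz hker' hsub'
        have huz : u = -z := by
          funext e
          by_cases hue : u e = 0
          · have hz' : e ∉ {x | z x ≠ 0} := by
              rw [hzsupp]
              simp [hue]
            have hze : z e = 0 := by simpa using hz'
            simp [hue, hze]
          · have hne' : u e - z e ≠ 0 := by
              have : e ∈ {x | (u - z) x ≠ 0} := heqsupp ▸ hue
              simpa using this
            have hz1 : z e ≠ 0 := by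
              have : e ∈ {x | z x ≠ 0} := by
                rw [hzsupp]
                exact hue
              simpa using this
            obtain ⟨t, rfl⟩ : e ∈ Set.range es := by
              by_contra hc
              exact hz1 (hz0 e hc)
            have hzpm : z (es t) = 1 ∨ z (es t) = -1 := by
              rw [hzt]
              exact hσpm t
            have hupm : u (es t) = 1 ∨ u (es t) = -1 := by
              rcases hu (es t) with h | h | h
              · right; exact h
              · exact absurd h hue
              · left; exact h
            simp only [Pi.neg_apply]
            rcases hupm with h | h <;> rcases hzpm with h' | h' <;>
              rw [h, h'] at hne' ⊢ <;> revert hne' <;> norm_num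
        refine ⟨m, ‹NeZero m›, vs, es, -1, Or.inr rfl, hvsinj, hesinj, horc, ?_, ?_⟩
        · intro e he
          rw [huz]
          simp [hz0 e he]
        · intro k
          constructor
          · intro hk
            rw [huz]
            simp only [Pi.neg_apply]
            rw [(hzk k).1 hk]
          · intro hk
            rw [huz]
            simp only [Pi.neg_apply]
            rw [(hzk k).2 hk]
  · rintro ⟨m, hm, vs, es, ε, hε, hvs, hes, hor, hu0, huk⟩
    have hεne : ε ≠ 0 := by rcases hε with h | h <;> simp [h]
    refine ⟨?_, ?_, ?_⟩
    · intro h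
      have h0 : u (es 0) = 0 := by rw [h]; rfl
      by_cases hf : tail (es 0) = vs 0 ∧ head (es 0) = vs (0 + 1)
      · exact hεne (((huk 0).1 hf).symm.trans h0)
      · exact hεne (neg_eq_zero.mp (((huk 0).2 hf).symm.trans h0))
    · exact cyc_ker hM vs es hes ε u hor hu0 huk
    · exact fun w hw hker hsub => cyc_min hM vs es hvs hes hε hor hu0 huk w hw hker hsub
end

section
/- Let A ∈ Z^(d×n) and let Λ_2(A) = [[A,0],[I,I]] be its Lawrence lift. Then a vector lies in the Graver basis of Λ_2(A) if and only if it has the form (u, -u) where u lies in the Graver basis of A. -/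
lemma lawrence_ker {d n : ℕ} (A : Matrix (Fin d) (Fin n) ℤ) (v : Fin n ⊕ Fin n → ℤ) :
    (Matrix.fromBlocks A 0 (1 : Matrix (Fin n) (Fin n) ℤ) 1).mulVec v = 0 ↔
    A.mulVec (v ∘ Sum.inl) = 0 ∧ ∀ i, v (Sum.inr i) = - v (Sum.inl i) := by
  have hv : v = Sum.elim (v ∘ Sum.inl) (v ∘ Sum.inr) := by
    funext x; cases x <;> rfl
  constructor
  · intro h
    rw [hv, Matrix.fromBlocks_mulVec] at h
    constructor
    · funext i
      have := congrFun h (Sum.inl i)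
      simpa using this
    · intro i
      have := congrFun h (Sum.inr i)
      simp [Matrix.one_mulVec] at this
      linarith
  · rintro ⟨h1, h2⟩
    rw [hv, Matrix.fromBlocks_mulVec]
    funext x
    cases x with
    | inl i => simpa using congrFun h1 i
    | inr i =>
      have := h2 i
      simp [Matrix.one_mulVec]
      linarith

/-- A vector lies in the Graver basis of the Lawrence lift `Λ₂(A) = [[A,0],[I,I]]` if and only
if it has the form `(u, -u)` with `u` in the Graver basis of `A`. -/
theorem stmt9 {d n : ℕ} (A : Matrix (Fin d) (Fin n) ℤ) (v : Fin n ⊕ Fin n → ℤ) :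
    InGraverBasis
      (Matrix.fromBlocks A 0 (1 : Matrix (Fin n) (Fin n) ℤ) (1 : Matrix (Fin n) (Fin n) ℤ)) v ↔
    ∃ u : Fin n → ℤ, InGraverBasis A u ∧ v = Sum.elim u (-u) := by
  constructor
  · rintro ⟨hv0, hvker, hmin⟩
    rw [lawrence_ker] at hvker
    obtain ⟨hAu, hneg⟩ := hvker
    set u : Fin n → ℤ := v ∘ Sum.inl with hu
    have hvform : v = Sum.elim u (-u) := by
      funext x
      cases x with
      | inl i => rfl
      | inr i => simpa [hu] using hneg i
    have hu0 : u ≠ 0 := by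
      intro h
      apply hv0
      rw [hvform, h]
      funext x; cases x <;> simp
    refine ⟨u, ⟨hu0, hAu, ?_⟩, hvform⟩
    intro w hw0 hwker hwu ⟨hplus, hminus⟩
    apply hmin (Sum.elim w (-w))
    · intro h
      apply hw0
      funext i; exact congrFun h (Sum.inl i)
    · rw [lawrence_ker]
      constructor
      · exact hwker
      · intro i; simp
    · intro h
      apply hwu
      funext i
      have := congrFun h (Sum.inl i)
      rw [hvform] at this
      simpa using this
    · rw [hvform]
      constructor
      · intro x; cases x with
        | inl i => simpa using hplus i
        | inr i => simpa using hminus i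
      · intro x; cases x with
        | inl i => simpa using hminus i
        | inr i => simpa using hplus i
  · rintro ⟨u, ⟨hu0, hAu, hmin⟩, hvform⟩
    subst hvform
    refine ⟨?_, ?_, ?_⟩
    · intro h
      apply hu0
      funext i; exact congrFun h (Sum.inl i)
    · rw [lawrence_ker]
      constructor
      · exact hAu
      · intro i; simp
    · intro w hw0 hwker hwv ⟨hplus, hminus⟩
      rw [lawrence_ker] at hwker
      obtain ⟨hAw, hwneg⟩ := hwker
      set w1 : Fin n → ℤ := w ∘ Sum.inl with hw1
      apply hmin w1
      · intro h
        apply hw0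
        funext x
        cases x with
        | inl i => exact congrFun h i
        | inr i =>
          have := hwneg i
          have h2 := congrFun h i
          simp only [hw1, Function.comp, Pi.zero_apply] at h2
          rw [this, h2]; simp
      · exact hAw
      · intro h
        apply hwv
        funext x
        cases x with
        | inl i => simpa [hw1] using congrFun h i
        | inr i =>
          have := hwneg i
          have h2 := congrFun h i
          simp only [hw1, Function.comp] at h2
          rw [this, h2]; simp
      · constructor
        · intro i; simpa [hw1] using hplus (Sum.inl i)
        · intro i
          have := hminus (Sum.inl i)
          simpa [hw1] using this
end

section
/- Let A ∈ Z^(d×n) and q ≥ 1. Every element of the Graver basis of G_q(A) = [A A ⋯ A] is either of the form (0,…,0, e_i, 0,…,0, -e_i, 0,…,0) with e_i a standard basis vector placed in two distinct blocks, or of the form (u_1, u_2, …, u_q) where u_1 + u_2 + ⋯ + u_q is a conformal sum lying in the Graver basis of A. -/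
/-- `Gq A q` is the horizontal concatenation of `q` copies of `A`. -/
def Gq {d n : ℕ} (A : Matrix (Fin d) (Fin n) ℤ) (q : ℕ) : Matrix (Fin d) (Fin q × Fin n) ℤ :=
  fun i p => A i p.2

lemma Gq_mulVec {d n q : ℕ} (A : Matrix (Fin d) (Fin n) ℤ) (w : Fin q × Fin n → ℤ) :
    (Gq A q).mulVec w = A.mulVec (fun i => ∑ j : Fin q, w (j, i)) := by
  funext x
  simp only [Matrix.mulVec, dotProduct, Gq, Fintype.sum_prod_type, Finset.mul_sum]
  rw [Finset.sum_comm]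

/-- Every Graver basis element of `G_q(A) = [A A ⋯ A]` is either a difference of the same
standard basis vector placed in two distinct blocks, or a tuple `(u_1, …, u_q)` whose blocks
sum conformally (no cancellation in any coordinate) to a Graver basis element of `A`. -/
theorem stmt10 {d n q : ℕ} (A : Matrix (Fin d) (Fin n) ℤ)
    (v : Fin q × Fin n → ℤ) (hv : InGraverBasis (Gq A q) v) :
    (∃ (i : Fin n) (j k : Fin q), j ≠ k ∧
      v = fun p => (if p = (j, i) then 1 else 0) - (if p = (k, i) then 1 else 0)) ∨
    ((∀ (i : Fin n) (j k : Fin q), 0 ≤ v (j, i) * v (k, i)) ∧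
      InGraverBasis A fun i => ∑ j : Fin q, v (j, i)) := by
  obtain ⟨hv0, hvker, hvmin⟩ := hv
  -- the block sum
  set s : Fin n → ℤ := fun i => ∑ j : Fin q, v (j, i) with hs
  have hsker : A.mulVec s = 0 := by rw [← Gq_mulVec]; exact hvker
  -- Key : opposite signs in a coordinate force v to be an elementary difference
  have key : ∀ (i : Fin n) (j k : Fin q), 0 < v (j, i) → v (k, i) < 0 →
      v = (fun p => (if p = (j, i) then 1 else 0) - (if p = (k, i) then 1 else 0)) := by
    intro i j k hj hk
    have hjk : j ≠ k := by rintro rfl; omega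
    set w : Fin q × Fin n → ℤ :=
      fun p => (if p = (j, i) then 1 else 0) - (if p = (k, i) then 1 else 0) with hw
    have hwji : w (j, i) = 1 := by
      simp [hw, Prod.ext_iff, hjk]
    have hwki : w (k, i) = -1 := by
      simp [hw, Prod.ext_iff, Ne.symm hjk]
    have hw0 : w ≠ 0 := by
      intro h
      have := congrFun h (j, i)
      rw [hwji] at this
      exact one_ne_zero this
    have hwsum : ∀ i', ∑ j' : Fin q, w (j', i') = 0 := by
      intro i'
      by_cases hii : i' = i
      · subst hii
        have he : ∀ j' : Fin q, w (j', i') =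
            (if j' = j then (1:ℤ) else 0) - (if j' = k then 1 else 0) := by
          intro j'
          simp [hw, Prod.ext_iff]
        simp only [he, Finset.sum_sub_distrib, Finset.sum_ite_eq', Finset.mem_univ,
          if_true, sub_self]
      · have he : ∀ j' : Fin q, w (j', i') = 0 := by
          intro j'
          simp [hw, Prod.ext_iff, hii]
        simp [he]
    have hwker : (Gq A q).mulVec w = 0 := by
      rw [Gq_mulVec]
      have : (fun i' => ∑ j' : Fin q, w (j', i')) = (0 : Fin n → ℤ) := by
        funext i'; exact hwsum i'
      rw [this, Matrix.mulVec_zero]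
    by_contra hne
    refine hvmin w hw0 hwker (fun h => hne (h.symm.trans hw)) ⟨?_, ?_⟩
    · rintro ⟨j', i'⟩
      by_cases h1 : (j', i') = (j, i)
      · rw [h1, hwji]; omega
      · by_cases h2 : (j', i') = (k, i)
        · rw [h2, hwki]; omega
        · have hz : w (j', i') = 0 := by simp [hw, h1, h2]
          rw [hz]; omega
    · rintro ⟨j', i'⟩
      by_cases h1 : (j', i') = (j, i)
      · rw [h1, hwji]; omega
      · by_cases h2 : (j', i') = (k, i)
        · rw [h2, hwki]; omega
        · have hz : w (j', i') = 0 := by simp [hw, h1, h2]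
          rw [hz]; omega
  by_cases hconf : ∀ (i : Fin n) (j k : Fin q), 0 ≤ v (j, i) * v (k, i)
  · -- conformal case
    right
    refine ⟨hconf, ?_, hsker, ?_⟩
    · -- s ≠ 0
      intro h0
      obtain ⟨⟨j0, i0⟩, hp0⟩ : ∃ p, v p ≠ 0 := Function.ne_iff.mp hv0
      have hsi : s i0 = 0 := congrFun h0 i0
      have hsdef : s i0 = ∑ j : Fin q, v (j, i0) := rfl
      rcases lt_or_gt_of_ne hp0 with hneg | hpos
      · have hle : ∀ j : Fin q, 0 ≤ -v (j, i0) := by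
          intro j
          by_contra hcon
          push_neg at hcon
          have := hconf i0 j j0
          have : v (j, i0) * v (j0, i0) < 0 :=
            mul_neg_of_pos_of_neg (by omega) hneg
          omega
        have h2' : -v (j0, i0) ≤ ∑ j : Fin q, -v (j, i0) :=
          Finset.single_le_sum (fun j _ => hle j) (Finset.mem_univ j0)
        rw [Finset.sum_neg_distrib] at h2'
        omega
      · have hge : ∀ j : Fin q, 0 ≤ v (j, i0) := by
          intro j
          by_contra hcon
          push_neg at hcon
          have := hconf i0 j j0
          have : v (j, i0) * v (j0, i0) < 0 :=
            mul_neg_of_neg_of_pos hcon hpos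
          omega
        have h2' : v (j0, i0) ≤ ∑ j : Fin q, v (j, i0) :=
          Finset.single_le_sum (fun j _ => hge j) (Finset.mem_univ j0)
        omega
    · -- minimality of s
      intro t ht0 htker hts
      rintro ⟨h1, h2⟩
      set f : Fin n → ℤ → ℤ :=
        fun i x => min (max x (min (t i) 0)) (max (t i) 0) with hf
      set V : Fin n → ℕ → ℤ := fun i m => if h : m < q then v (⟨m, h⟩, i) else 0 with hV
      set P : Fin n → ℕ → ℤ := fun i m => ∑ r ∈ Finset.range m, V i r with hP
      set w : Fin q × Fin n → ℤ :=
        fun p => f p.2 (P p.2 ((p.1 : ℕ) + 1)) - f p.2 (P p.2 (p.1 : ℕ)) with hw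
      have hVv : ∀ (i : Fin n) (j : Fin q), V i (j : ℕ) = v (j, i) := by
        intro i j
        simp only [hV, j.isLt, dif_pos]
      have hPq : ∀ i, P i q = s i := by
        intro i
        rw [hP, hs]
        simp only
        rw [← Fin.sum_univ_eq_sum_range (fun m => V i m) q]
        exact Finset.sum_congr rfl fun j _ => hVv i j
      have hstep : ∀ (i : Fin n) (j : Fin q), P i ((j : ℕ) + 1) = P i (j : ℕ) + v (j, i) := by
        intro i j
        simp only [hP]
        rw [Finset.sum_range_succ, hVv i j]
      have hwsum : ∀ i, ∑ j : Fin q, w (j, i) = t i := by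
        intro i
        have e : ∑ j : Fin q, w (j, i)
            = ∑ r ∈ Finset.range q, (f i (P i (r + 1)) - f i (P i r)) := by
          simp only [hw]
          exact Fin.sum_univ_eq_sum_range (fun m => f i (P i (m + 1)) - f i (P i m)) q
        rw [e, Finset.sum_range_sub (fun m => f i (P i m)), hPq]
        have hP0 : P i 0 = 0 := by simp [hP]
        rw [hP0]
        have e1 := h1 i
        have e2 := h2 i
        simp only [hf]
        omega
      have hw0 : w ≠ 0 := by
        intro h
        apply ht0
        funext i
        rw [← hwsum i]
        simp [h]
      have hwker : (Gq A q).mulVec w = 0 := by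
        rw [Gq_mulVec]
        have : (fun i => ∑ j : Fin q, w (j, i)) = t := funext hwsum
        rw [this, htker]
      have hwv : w ≠ v := by
        intro h
        apply hts
        funext i
        rw [← hwsum i, h]
      refine hvmin w hw0 hwker hwv ⟨?_, ?_⟩
      · rintro ⟨j, i⟩
        have hst := hstep i j
        simp only [hw, hf]
        rw [hst]
        omega
      · rintro ⟨j, i⟩
        have hst := hstep i j
        simp only [hw, hf]
        rw [hst]
        omega
  · -- non-conformal case
    left
    push_neg at hconf
    obtain ⟨i, j, k, hjk⟩ := hconf
    rcases lt_or_gt_of_ne (fun h : v (j, i) = 0 => by simp [h] at hjk) with hjneg | hjpos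
    · have hkpos : 0 < v (k, i) := by nlinarith
      exact ⟨i, k, j, by rintro rfl; omega, key i k j hkpos hjneg⟩
    · have hkneg : v (k, i) < 0 := by nlinarith
      exact ⟨i, j, k, by rintro rfl; omega, key i j k hjpos hkneg⟩
end

section
/- The design matrix of the hierarchical model with simplicial complex C having facets {1,2},{1,3},{2,3} on ground set {1,2,3} and weights d = (3,3,3) is not unimodular: its Graver basis contains a vector with an entry of absolute value at least 2. -/
/-- Row index type of the design matrix of a hierarchical model: pairs `(F, j)` with `F` a face
and `j ∈ ∏_{v ∈ F} [d_v - 1]`. -/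
abbrev DRow {V : Type*} [DecidableEq V] (faces : Finset (Finset V)) (d : V → ℕ) : Type _ :=
  Σ F : {F : Finset V // F ∈ faces}, ∀ v : {x : V // x ∈ F.1}, Fin (d v.1 - 1)

/-- The design matrix `A_{C,d}` of a hierarchical model: the `(F,j)` entry of column `i` is `1`
if `F = ∅` or `i_v = j_v` for all `v ∈ F`, and `0` otherwise. -/
def designMatrix {V : Type*} [Fintype V] [DecidableEq V]
    (faces : Finset (Finset V)) (d : V → ℕ) :
    Matrix (DRow faces d) (∀ v : V, Fin (d v)) ℤ :=
  fun r c => if ∀ v : {x : V // x ∈ r.1.1}, (c v.1 : ℕ) = (r.2 v : ℕ) then 1 else 0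

abbrev GraverFc : Finset (Finset (Fin 3)) :=
  (Finset.univ : Finset (Fin 3)).powerset.erase Finset.univ

/-- The witness Graver basis element. -/
def graverU : (∀ _ : Fin 3, Fin 3) → ℤ := fun c =>
  ![![![-2,1,1],![1,-1,0],![1,0,-1]],
    ![![1,-1,0],![0,0,0],![-1,1,0]],
    ![![1,0,-1],![-1,1,0],![0,-1,1]]] (c 0) (c 1) (c 2)

def mkGraverRow (F : Finset (Fin 3)) (hF : F ∈ GraverFc) (j : ∀ _ : Fin 3, Fin 2) :
    DRow GraverFc (fun _ => 3) :=
  ⟨⟨F, hF⟩, fun t => j t.1⟩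

def graverETriple : (Fin 3 × Fin 3 × Fin 3) ≃ (∀ _ : Fin 3, Fin 3) :=
  { toFun := fun p => ![p.1, p.2.1, p.2.2]
    invFun := fun c => (c 0, c 1, c 2)
    left_inv := by decide
    right_inv := by decide }

lemma graverSum27 (f : (∀ _ : Fin 3, Fin 3) → ℤ) :
    (∑ c, f c) = ∑ i : Fin 3, ∑ j : Fin 3, ∑ k : Fin 3, f ![i,j,k] := by
  simp only [← Equiv.sum_comp graverETriple f, Fintype.sum_prod_type]
  rfl

lemma graverFin3Forall {P : Fin 3 → Prop} (h0 : P 0) (h1 : P 1) (h2 : P 2) : ∀ i, P i := by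
  intro i; fin_cases i
  · exact h0
  · exact h1
  · exact h2

lemma graverEq27 (v w : (∀ _ : Fin 3, Fin 3) → ℤ)
    (h : ∀ i j k : Fin 3, v ![i,j,k] = w ![i,j,k]) : v = w := by
  funext c
  have hc : c = ![c 0, c 1, c 2] := by
    funext t; fin_cases t <;> rfl
  rw [hc]; exact h _ _ _

set_option maxHeartbeats 1000000 in
/-- The design matrix of the hierarchical model with `C` the triangle graph complex (facets
`{1,2},{1,3},{2,3}`, i.e. all proper subsets of `{1,2,3}` are faces) and `d = (3,3,3)` is not
unimodular: its Graver basis contains a vector with an entry of absolute value at least `2`. -/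
theorem stmt13 :
    ∃ u, InGraverBasis
        (designMatrix ((Finset.univ : Finset (Fin 3)).powerset.erase Finset.univ)
          (fun _ => 3)) u ∧
      ∃ c, 2 ≤ |u c| := by
  refine ⟨graverU, ⟨?_, ?_, ?_⟩, ![0,0,0], by decide⟩
  · intro h
    exact absurd (congrFun h ![0,0,0]) (by decide)
  · decide
  · intro v hv0 hker hne hconf
    obtain ⟨h1, h2⟩ := hconf
    have hb000 : v ![0,0,0] ≤ 0 ∧ -2 ≤ v ![0,0,0] := by
      have a1 := h1 ![0,0,0]
      have a2 := h2 ![0,0,0]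
      rw [show graverU ![0,0,0] = -2 from rfl] at a1 a2
      omega
    have hb001 : v ![0,0,1] ≤ 1 ∧ 0 ≤ v ![0,0,1] := by
      have a1 := h1 ![0,0,1]
      have a2 := h2 ![0,0,1]
      rw [show graverU ![0,0,1] = 1 from rfl] at a1 a2
      omega
    have hb002 : v ![0,0,2] ≤ 1 ∧ 0 ≤ v ![0,0,2] := by
      have a1 := h1 ![0,0,2]
      have a2 := h2 ![0,0,2]
      rw [show graverU ![0,0,2] = 1 from rfl] at a1 a2
      omega
    have hb010 : v ![0,1,0] ≤ 1 ∧ 0 ≤ v ![0,1,0] := by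
      have a1 := h1 ![0,1,0]
      have a2 := h2 ![0,1,0]
      rw [show graverU ![0,1,0] = 1 from rfl] at a1 a2
      omega
    have hb011 : v ![0,1,1] ≤ 0 ∧ -1 ≤ v ![0,1,1] := by
      have a1 := h1 ![0,1,1]
      have a2 := h2 ![0,1,1]
      rw [show graverU ![0,1,1] = -1 from rfl] at a1 a2
      omega
    have hb012 : v ![0,1,2] ≤ 0 ∧ 0 ≤ v ![0,1,2] := by
      have a1 := h1 ![0,1,2]
      have a2 := h2 ![0,1,2]
      rw [show graverU ![0,1,2] = 0 from rfl] at a1 a2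
      omega
    have hb020 : v ![0,2,0] ≤ 1 ∧ 0 ≤ v ![0,2,0] := by
      have a1 := h1 ![0,2,0]
      have a2 := h2 ![0,2,0]
      rw [show graverU ![0,2,0] = 1 from rfl] at a1 a2
      omega
    have hb021 : v ![0,2,1] ≤ 0 ∧ 0 ≤ v ![0,2,1] := by
      have a1 := h1 ![0,2,1]
      have a2 := h2 ![0,2,1]
      rw [show graverU ![0,2,1] = 0 from rfl] at a1 a2
      omega
    have hb022 : v ![0,2,2] ≤ 0 ∧ -1 ≤ v ![0,2,2] := by
      have a1 := h1 ![0,2,2]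
      have a2 := h2 ![0,2,2]
      rw [show graverU ![0,2,2] = -1 from rfl] at a1 a2
      omega
    have hb100 : v ![1,0,0] ≤ 1 ∧ 0 ≤ v ![1,0,0] := by
      have a1 := h1 ![1,0,0]
      have a2 := h2 ![1,0,0]
      rw [show graverU ![1,0,0] = 1 from rfl] at a1 a2
      omega
    have hb101 : v ![1,0,1] ≤ 0 ∧ -1 ≤ v ![1,0,1] := by
      have a1 := h1 ![1,0,1]
      have a2 := h2 ![1,0,1]
      rw [show graverU ![1,0,1] = -1 from rfl] at a1 a2
      omega
    have hb102 : v ![1,0,2] ≤ 0 ∧ 0 ≤ v ![1,0,2] := by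
      have a1 := h1 ![1,0,2]
      have a2 := h2 ![1,0,2]
      rw [show graverU ![1,0,2] = 0 from rfl] at a1 a2
      omega
    have hb110 : v ![1,1,0] ≤ 0 ∧ 0 ≤ v ![1,1,0] := by
      have a1 := h1 ![1,1,0]
      have a2 := h2 ![1,1,0]
      rw [show graverU ![1,1,0] = 0 from rfl] at a1 a2
      omega
    have hb111 : v ![1,1,1] ≤ 0 ∧ 0 ≤ v ![1,1,1] := by
      have a1 := h1 ![1,1,1]
      have a2 := h2 ![1,1,1]
      rw [show graverU ![1,1,1] = 0 from rfl] at a1 a2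
      omega
    have hb112 : v ![1,1,2] ≤ 0 ∧ 0 ≤ v ![1,1,2] := by
      have a1 := h1 ![1,1,2]
      have a2 := h2 ![1,1,2]
      rw [show graverU ![1,1,2] = 0 from rfl] at a1 a2
      omega
    have hb120 : v ![1,2,0] ≤ 0 ∧ -1 ≤ v ![1,2,0] := by
      have a1 := h1 ![1,2,0]
      have a2 := h2 ![1,2,0]
      rw [show graverU ![1,2,0] = -1 from rfl] at a1 a2
      omega
    have hb121 : v ![1,2,1] ≤ 1 ∧ 0 ≤ v ![1,2,1] := by
      have a1 := h1 ![1,2,1]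
      have a2 := h2 ![1,2,1]
      rw [show graverU ![1,2,1] = 1 from rfl] at a1 a2
      omega
    have hb122 : v ![1,2,2] ≤ 0 ∧ 0 ≤ v ![1,2,2] := by
      have a1 := h1 ![1,2,2]
      have a2 := h2 ![1,2,2]
      rw [show graverU ![1,2,2] = 0 from rfl] at a1 a2
      omega
    have hb200 : v ![2,0,0] ≤ 1 ∧ 0 ≤ v ![2,0,0] := by
      have a1 := h1 ![2,0,0]
      have a2 := h2 ![2,0,0]
      rw [show graverU ![2,0,0] = 1 from rfl] at a1 a2
      omega
    have hb201 : v ![2,0,1] ≤ 0 ∧ 0 ≤ v ![2,0,1] := by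
      have a1 := h1 ![2,0,1]
      have a2 := h2 ![2,0,1]
      rw [show graverU ![2,0,1] = 0 from rfl] at a1 a2
      omega
    have hb202 : v ![2,0,2] ≤ 0 ∧ -1 ≤ v ![2,0,2] := by
      have a1 := h1 ![2,0,2]
      have a2 := h2 ![2,0,2]
      rw [show graverU ![2,0,2] = -1 from rfl] at a1 a2
      omega
    have hb210 : v ![2,1,0] ≤ 0 ∧ -1 ≤ v ![2,1,0] := by
      have a1 := h1 ![2,1,0]
      have a2 := h2 ![2,1,0]
      rw [show graverU ![2,1,0] = -1 from rfl] at a1 a2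
      omega
    have hb211 : v ![2,1,1] ≤ 1 ∧ 0 ≤ v ![2,1,1] := by
      have a1 := h1 ![2,1,1]
      have a2 := h2 ![2,1,1]
      rw [show graverU ![2,1,1] = 1 from rfl] at a1 a2
      omega
    have hb212 : v ![2,1,2] ≤ 0 ∧ 0 ≤ v ![2,1,2] := by
      have a1 := h1 ![2,1,2]
      have a2 := h2 ![2,1,2]
      rw [show graverU ![2,1,2] = 0 from rfl] at a1 a2
      omega
    have hb220 : v ![2,2,0] ≤ 0 ∧ 0 ≤ v ![2,2,0] := by
      have a1 := h1 ![2,2,0]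
      have a2 := h2 ![2,2,0]
      rw [show graverU ![2,2,0] = 0 from rfl] at a1 a2
      omega
    have hb221 : v ![2,2,1] ≤ 0 ∧ -1 ≤ v ![2,2,1] := by
      have a1 := h1 ![2,2,1]
      have a2 := h2 ![2,2,1]
      rw [show graverU ![2,2,1] = -1 from rfl] at a1 a2
      omega
    have hb222 : v ![2,2,2] ≤ 1 ∧ 0 ≤ v ![2,2,2] := by
      have a1 := h1 ![2,2,2]
      have a2 := h2 ![2,2,2]
      rw [show graverU ![2,2,2] = 1 from rfl] at a1 a2
      omega
    have heem : v ![0,0,0] + v ![0,0,1] + v ![0,0,2] + v ![0,1,0] + v ![0,1,1] + v ![0,1,2] + v ![0,2,0] + v ![0,2,1] + v ![0,2,2] + v ![1,0,0] + v ![1,0,1] + v ![1,0,2] + v ![1,1,0] + v ![1,1,1] + v ![1,1,2] + v ![1,2,0] + v ![1,2,1] + v ![1,2,2] + v ![2,0,0] + v ![2,0,1] + v ![2,0,2] + v ![2,1,0] + v ![2,1,1] + v ![2,1,2] + v ![2,2,0] + v ![2,2,1] + v ![2,2,2] = 0 := by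
      have h := congrFun hker (mkGraverRow (∅ : Finset (Fin 3)) (by decide) ![0,0,0])
      simp only [Matrix.mulVec, dotProduct, Pi.zero_apply] at h
      rw [graverSum27] at h
      simp (config := { decide := true }) only [Fin.sum_univ_three, designMatrix,
        mkGraverRow, if_true, if_false, one_mul, zero_mul, add_zero, zero_add] at h
      linarith [h]
    have hes00 : v ![0,0,0] + v ![0,0,1] + v ![0,0,2] + v ![0,1,0] + v ![0,1,1] + v ![0,1,2] + v ![0,2,0] + v ![0,2,1] + v ![0,2,2] = 0 := by
      have h := congrFun hker (mkGraverRow ({0} : Finset (Fin 3)) (by decide) ![0,0,0])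
      simp only [Matrix.mulVec, dotProduct, Pi.zero_apply] at h
      rw [graverSum27] at h
      simp (config := { decide := true }) only [Fin.sum_univ_three, designMatrix,
        mkGraverRow, if_true, if_false, one_mul, zero_mul, add_zero, zero_add] at h
      linarith [h]
    have hes01 : v ![1,0,0] + v ![1,0,1] + v ![1,0,2] + v ![1,1,0] + v ![1,1,1] + v ![1,1,2] + v ![1,2,0] + v ![1,2,1] + v ![1,2,2] = 0 := by
      have h := congrFun hker (mkGraverRow ({0} : Finset (Fin 3)) (by decide) ![1,0,0])
      simp only [Matrix.mulVec, dotProduct, Pi.zero_apply] at h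
      rw [graverSum27] at h
      simp (config := { decide := true }) only [Fin.sum_univ_three, designMatrix,
        mkGraverRow, if_true, if_false, one_mul, zero_mul, add_zero, zero_add] at h
      linarith [h]
    have hes10 : v ![0,0,0] + v ![0,0,1] + v ![0,0,2] + v ![1,0,0] + v ![1,0,1] + v ![1,0,2] + v ![2,0,0] + v ![2,0,1] + v ![2,0,2] = 0 := by
      have h := congrFun hker (mkGraverRow ({1} : Finset (Fin 3)) (by decide) ![0,0,0])
      simp only [Matrix.mulVec, dotProduct, Pi.zero_apply] at h
      rw [graverSum27] at h
      simp (config := { decide := true }) only [Fin.sum_univ_three, designMatrix,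
        mkGraverRow, if_true, if_false, one_mul, zero_mul, add_zero, zero_add] at h
      linarith [h]
    have hes11 : v ![0,1,0] + v ![0,1,1] + v ![0,1,2] + v ![1,1,0] + v ![1,1,1] + v ![1,1,2] + v ![2,1,0] + v ![2,1,1] + v ![2,1,2] = 0 := by
      have h := congrFun hker (mkGraverRow ({1} : Finset (Fin 3)) (by decide) ![0,1,0])
      simp only [Matrix.mulVec, dotProduct, Pi.zero_apply] at h
      rw [graverSum27] at h
      simp (config := { decide := true }) only [Fin.sum_univ_three, designMatrix,
        mkGraverRow, if_true, if_false, one_mul, zero_mul, add_zero, zero_add] at h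
      linarith [h]
    have hes20 : v ![0,0,0] + v ![0,1,0] + v ![0,2,0] + v ![1,0,0] + v ![1,1,0] + v ![1,2,0] + v ![2,0,0] + v ![2,1,0] + v ![2,2,0] = 0 := by
      have h := congrFun hker (mkGraverRow ({2} : Finset (Fin 3)) (by decide) ![0,0,0])
      simp only [Matrix.mulVec, dotProduct, Pi.zero_apply] at h
      rw [graverSum27] at h
      simp (config := { decide := true }) only [Fin.sum_univ_three, designMatrix,
        mkGraverRow, if_true, if_false, one_mul, zero_mul, add_zero, zero_add] at h
      linarith [h]
    have hes21 : v ![0,0,1] + v ![0,1,1] + v ![0,2,1] + v ![1,0,1] + v ![1,1,1] + v ![1,2,1] + v ![2,0,1] + v ![2,1,1] + v ![2,2,1] = 0 := by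
      have h := congrFun hker (mkGraverRow ({2} : Finset (Fin 3)) (by decide) ![0,0,1])
      simp only [Matrix.mulVec, dotProduct, Pi.zero_apply] at h
      rw [graverSum27] at h
      simp (config := { decide := true }) only [Fin.sum_univ_three, designMatrix,
        mkGraverRow, if_true, if_false, one_mul, zero_mul, add_zero, zero_add] at h
      linarith [h]
    have hep0100 : v ![0,0,0] + v ![0,0,1] + v ![0,0,2] = 0 := by
      have h := congrFun hker (mkGraverRow ({0,1} : Finset (Fin 3)) (by decide) ![0,0,0])
      simp only [Matrix.mulVec, dotProduct, Pi.zero_apply] at h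
      rw [graverSum27] at h
      simp (config := { decide := true }) only [Fin.sum_univ_three, designMatrix,
        mkGraverRow, if_true, if_false, one_mul, zero_mul, add_zero, zero_add] at h
      linarith [h]
    have hep0101 : v ![0,1,0] + v ![0,1,1] + v ![0,1,2] = 0 := by
      have h := congrFun hker (mkGraverRow ({0,1} : Finset (Fin 3)) (by decide) ![0,1,0])
      simp only [Matrix.mulVec, dotProduct, Pi.zero_apply] at h
      rw [graverSum27] at h
      simp (config := { decide := true }) only [Fin.sum_univ_three, designMatrix,
        mkGraverRow, if_true, if_false, one_mul, zero_mul, add_zero, zero_add] at h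
      linarith [h]
    have hep0110 : v ![1,0,0] + v ![1,0,1] + v ![1,0,2] = 0 := by
      have h := congrFun hker (mkGraverRow ({0,1} : Finset (Fin 3)) (by decide) ![1,0,0])
      simp only [Matrix.mulVec, dotProduct, Pi.zero_apply] at h
      rw [graverSum27] at h
      simp (config := { decide := true }) only [Fin.sum_univ_three, designMatrix,
        mkGraverRow, if_true, if_false, one_mul, zero_mul, add_zero, zero_add] at h
      linarith [h]
    have hep0111 : v ![1,1,0] + v ![1,1,1] + v ![1,1,2] = 0 := by
      have h := congrFun hker (mkGraverRow ({0,1} : Finset (Fin 3)) (by decide) ![1,1,0])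
      simp only [Matrix.mulVec, dotProduct, Pi.zero_apply] at h
      rw [graverSum27] at h
      simp (config := { decide := true }) only [Fin.sum_univ_three, designMatrix,
        mkGraverRow, if_true, if_false, one_mul, zero_mul, add_zero, zero_add] at h
      linarith [h]
    have hep0200 : v ![0,0,0] + v ![0,1,0] + v ![0,2,0] = 0 := by
      have h := congrFun hker (mkGraverRow ({0,2} : Finset (Fin 3)) (by decide) ![0,0,0])
      simp only [Matrix.mulVec, dotProduct, Pi.zero_apply] at h
      rw [graverSum27] at h
      simp (config := { decide := true }) only [Fin.sum_univ_three, designMatrix,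
        mkGraverRow, if_true, if_false, one_mul, zero_mul, add_zero, zero_add] at h
      linarith [h]
    have hep0201 : v ![0,0,1] + v ![0,1,1] + v ![0,2,1] = 0 := by
      have h := congrFun hker (mkGraverRow ({0,2} : Finset (Fin 3)) (by decide) ![0,0,1])
      simp only [Matrix.mulVec, dotProduct, Pi.zero_apply] at h
      rw [graverSum27] at h
      simp (config := { decide := true }) only [Fin.sum_univ_three, designMatrix,
        mkGraverRow, if_true, if_false, one_mul, zero_mul, add_zero, zero_add] at h
      linarith [h]
    have hep0210 : v ![1,0,0] + v ![1,1,0] + v ![1,2,0] = 0 := by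
      have h := congrFun hker (mkGraverRow ({0,2} : Finset (Fin 3)) (by decide) ![1,0,0])
      simp only [Matrix.mulVec, dotProduct, Pi.zero_apply] at h
      rw [graverSum27] at h
      simp (config := { decide := true }) only [Fin.sum_univ_three, designMatrix,
        mkGraverRow, if_true, if_false, one_mul, zero_mul, add_zero, zero_add] at h
      linarith [h]
    have hep0211 : v ![1,0,1] + v ![1,1,1] + v ![1,2,1] = 0 := by
      have h := congrFun hker (mkGraverRow ({0,2} : Finset (Fin 3)) (by decide) ![1,0,1])
      simp only [Matrix.mulVec, dotProduct, Pi.zero_apply] at h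
      rw [graverSum27] at h
      simp (config := { decide := true }) only [Fin.sum_univ_three, designMatrix,
        mkGraverRow, if_true, if_false, one_mul, zero_mul, add_zero, zero_add] at h
      linarith [h]
    have hep1200 : v ![0,0,0] + v ![1,0,0] + v ![2,0,0] = 0 := by
      have h := congrFun hker (mkGraverRow ({1,2} : Finset (Fin 3)) (by decide) ![0,0,0])
      simp only [Matrix.mulVec, dotProduct, Pi.zero_apply] at h
      rw [graverSum27] at h
      simp (config := { decide := true }) only [Fin.sum_univ_three, designMatrix,
        mkGraverRow, if_true, if_false, one_mul, zero_mul, add_zero, zero_add] at h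
      linarith [h]
    have hep1201 : v ![0,0,1] + v ![1,0,1] + v ![2,0,1] = 0 := by
      have h := congrFun hker (mkGraverRow ({1,2} : Finset (Fin 3)) (by decide) ![0,0,1])
      simp only [Matrix.mulVec, dotProduct, Pi.zero_apply] at h
      rw [graverSum27] at h
      simp (config := { decide := true }) only [Fin.sum_univ_three, designMatrix,
        mkGraverRow, if_true, if_false, one_mul, zero_mul, add_zero, zero_add] at h
      linarith [h]
    have hep1210 : v ![0,1,0] + v ![1,1,0] + v ![2,1,0] = 0 := by
      have h := congrFun hker (mkGraverRow ({1,2} : Finset (Fin 3)) (by decide) ![0,1,0])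
      simp only [Matrix.mulVec, dotProduct, Pi.zero_apply] at h
      rw [graverSum27] at h
      simp (config := { decide := true }) only [Fin.sum_univ_three, designMatrix,
        mkGraverRow, if_true, if_false, one_mul, zero_mul, add_zero, zero_add] at h
      linarith [h]
    have hep1211 : v ![0,1,1] + v ![1,1,1] + v ![2,1,1] = 0 := by
      have h := congrFun hker (mkGraverRow ({1,2} : Finset (Fin 3)) (by decide) ![0,1,1])
      simp only [Matrix.mulVec, dotProduct, Pi.zero_apply] at h
      rw [graverSum27] at h
      simp (config := { decide := true }) only [Fin.sum_univ_three, designMatrix,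
        mkGraverRow, if_true, if_false, one_mul, zero_mul, add_zero, zero_add] at h
      linarith [h]
    have hdisj : (v ![0,0,0] = 0 ∧ v ![0,0,1] = 0 ∧ v ![0,0,2] = 0 ∧ v ![0,1,0] = 0 ∧ v ![0,1,1] = 0 ∧ v ![0,1,2] = 0 ∧ v ![0,2,0] = 0 ∧ v ![0,2,1] = 0 ∧ v ![0,2,2] = 0 ∧ v ![1,0,0] = 0 ∧ v ![1,0,1] = 0 ∧ v ![1,0,2] = 0 ∧ v ![1,1,0] = 0 ∧ v ![1,1,1] = 0 ∧ v ![1,1,2] = 0 ∧ v ![1,2,0] = 0 ∧ v ![1,2,1] = 0 ∧ v ![1,2,2] = 0 ∧ v ![2,0,0] = 0 ∧ v ![2,0,1] = 0 ∧ v ![2,0,2] = 0 ∧ v ![2,1,0] = 0 ∧ v ![2,1,1] = 0 ∧ v ![2,1,2] = 0 ∧ v ![2,2,0] = 0 ∧ v ![2,2,1] = 0 ∧ v ![2,2,2] = 0) ∨ (v ![0,0,0] = -2 ∧ v ![0,0,1] = 1 ∧ v ![0,0,2] = 1 ∧ v ![0,1,0] = 1 ∧ v ![0,1,1] = -1 ∧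 v ![0,1,2] = 0 ∧ v ![0,2,0] = 1 ∧ v ![0,2,1] = 0 ∧ v ![0,2,2] = -1 ∧ v ![1,0,0] = 1 ∧ v ![1,0,1] = -1 ∧ v ![1,0,2] = 0 ∧ v ![1,1,0] = 0 ∧ v ![1,1,1] = 0 ∧ v ![1,1,2] = 0 ∧ v ![1,2,0] = -1 ∧ v ![1,2,1] = 1 ∧ v ![1,2,2] = 0 ∧ v ![2,0,0] = 1 ∧ v ![2,0,1] = 0 ∧ v ![2,0,2] = -1 ∧ v ![2,1,0] = -1 ∧ v ![2,1,1] = 1 ∧ v ![2,1,2] = 0 ∧ v ![2,2,0] = 0 ∧ v ![2,2,1] = -1 ∧ v ![2,2,2] = 1) := by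
      rcases le_or_gt (v ![0,0,1]) (0) with t1 | t1
      · -- v ![0,0,1] ≤ 0
        have t2 : -1 ≤ v ![0,0,0] := by linarith only [hep0100, t1, hb002.1]
        have t3 : 0 ≤ v ![0,1,1] := by linarith only [hep0201, t1, hb021.1]
        have t4 : 0 ≤ v ![1,0,1] := by linarith only [hep1201, t1, hb201.1]
        have t5 : v ![2,1,1] ≤ 0 := by linarith only [hep1211, t3, hb111.2]
        have t6 : v ![0,1,0] ≤ 0 := by linarith only [hep0101, t3, hb012.2]
        have t7 : v ![1,0,0] ≤ 0 := by linarith only [hep0110, t4, hb102.2]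
        have t8 : 0 ≤ v ![1,2,0] := by linarith only [hep0210, t7, hb110.1]
        have t9 : v ![1,2,1] ≤ 0 := by linarith only [hep0211, t4, hb111.2]
        have t10 : 0 ≤ v ![2,1,0] := by linarith only [hep1210, t6, hb110.1]
        have t11 : 0 ≤ v ![2,2,1] := by linarith only [hes21, t1, hb011.1, hb021.1, hb101.1, hb111.1, t9, hb201.1, t5]
        rcases le_or_gt (v ![0,0,0]) (-1) with t12 | t12
        · -- v ![0,0,0] ≤ -1
          have t13 : 1 ≤ v ![0,0,2] := by linarith only [hep0100, t12, t1]
          have t14 : 1 ≤ v ![0,2,0] := by linarith only [hep0200, t12, t6]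
          have t15 : 1 ≤ v ![2,0,0] := by linarith only [hep1200, t12, t7]
          have t16 : v ![0,2,2] ≤ -1 := by linarith only [heem, t2, hb001.2, t13, hb010.2, t3, hb012.2, t14, hb021.2, hb100.2, t4, hb102.2, hb110.2, hb111.2, hb112.2, t8, hb121.2, hb122.2, t15, hb201.2, hb202.2, t10, hb211.2, hb212.2, hb220.2, t11, hb222.2]
          have t17 : v ![2,0,2] ≤ -1 := by linarith only [heem, t2, hb001.2, t13, hb010.2, t3, hb012.2, t14, hb021.2, hb022.2, hb100.2, t4, hb102.2, hb110.2, hb111.2, hb112.2, t8, hb121.2, hb122.2, t15, hb201.2, t10, hb211.2, hb212.2, hb220.2, t11, hb222.2]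
          have t18 : v ![2,2,2] ≤ 0 := by linarith only [heem, t2, hb001.2, t13, hb010.2, t3, hb012.2, t14, hb021.2, hb022.2, hb100.2, t4, hb102.2, hb110.2, hb111.2, hb112.2, t8, hb121.2, hb122.2, t15, hb201.2, hb202.2, t10, hb211.2, hb212.2, hb220.2, t11]
          have t19 : v ![0,0,0] ≤ -2 := by linarith only [hes20, hb010.2, t14, hb100.2, hb110.2, t8, t15, t10, hb220.2]
          exfalso; linarith only [t2, t19]
        · have t12b : 0 ≤ v ![0,0,0] := by linarith only [t12]
          have t20 : v ![0,2,0] ≤ 0 := by linarith only [hes20, t12b, hb010.2, hb100.2, hb110.2, t8, hb200.2, t10, hb220.2]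
          have t21 : v ![2,0,0] ≤ 0 := by linarith only [hes20, t12b, hb010.2, hb020.2, hb100.2, hb110.2, t8, t10, hb220.2]
          have t22 : v ![0,0,2] ≤ 0 := by linarith only [hep0100, t12b, hb001.2]
          have t23 : 0 ≤ v ![0,2,2] := by linarith only [hes00, hb000.1, t1, t22, t6, hb011.1, hb012.1, t20, hb021.1]
          have t24 : 0 ≤ v ![2,0,2] := by linarith only [hes10, hb000.1, t1, t22, t7, hb101.1, hb102.1, t21, hb201.1]
          have t25 : v ![2,2,2] ≤ 0 := by linarith only [heem, t12b, hb001.2, hb002.2, hb010.2, t3, hb012.2, hb020.2, hb021.2, t23, hb100.2, t4, hb102.2, hb110.2, hb111.2, hb112.2, t8, hb121.2, hb122.2, hb200.2, hb201.2, t24, t10, hb211.2, hb212.2, hb220.2, t11]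
          have e000 : v ![0,0,0] = 0 := le_antisymm hb000.1 t12b
          have e001 : v ![0,0,1] = 0 := le_antisymm t1 hb001.2
          have e002 : v ![0,0,2] = 0 := le_antisymm t22 hb002.2
          have e010 : v ![0,1,0] = 0 := le_antisymm t6 hb010.2
          have e011 : v ![0,1,1] = 0 := le_antisymm hb011.1 t3
          have e012 : v ![0,1,2] = 0 := le_antisymm hb012.1 hb012.2
          have e020 : v ![0,2,0] = 0 := le_antisymm t20 hb020.2
          have e021 : v ![0,2,1] = 0 := le_antisymm hb021.1 hb021.2
          have e022 : v ![0,2,2] = 0 := le_antisymm hb022.1 t23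
          have e100 : v ![1,0,0] = 0 := le_antisymm t7 hb100.2
          have e101 : v ![1,0,1] = 0 := le_antisymm hb101.1 t4
          have e102 : v ![1,0,2] = 0 := le_antisymm hb102.1 hb102.2
          have e110 : v ![1,1,0] = 0 := le_antisymm hb110.1 hb110.2
          have e111 : v ![1,1,1] = 0 := le_antisymm hb111.1 hb111.2
          have e112 : v ![1,1,2] = 0 := le_antisymm hb112.1 hb112.2
          have e120 : v ![1,2,0] = 0 := le_antisymm hb120.1 t8
          have e121 : v ![1,2,1] = 0 := le_antisymm t9 hb121.2
          have e122 : v ![1,2,2] = 0 := le_antisymm hb122.1 hb122.2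
          have e200 : v ![2,0,0] = 0 := le_antisymm t21 hb200.2
          have e201 : v ![2,0,1] = 0 := le_antisymm hb201.1 hb201.2
          have e202 : v ![2,0,2] = 0 := le_antisymm hb202.1 t24
          have e210 : v ![2,1,0] = 0 := le_antisymm hb210.1 t10
          have e211 : v ![2,1,1] = 0 := le_antisymm t5 hb211.2
          have e212 : v ![2,1,2] = 0 := le_antisymm hb212.1 hb212.2
          have e220 : v ![2,2,0] = 0 := le_antisymm hb220.1 hb220.2
          have e221 : v ![2,2,1] = 0 := le_antisymm hb221.1 t11
          have e222 : v ![2,2,2] = 0 := le_antisymm t25 hb222.2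
          exact Or.inl ⟨e000, e001, e002, e010, e011, e012, e020, e021, e022, e100, e101, e102, e110, e111, e112, e120, e121, e122, e200, e201, e202, e210, e211, e212, e220, e221, e222⟩
      · have t1b : 1 ≤ v ![0,0,1] := by linarith only [t1]
        have t26 : v ![0,0,0] ≤ -1 := by linarith only [hep0100, t1b, hb002.2]
        have t27 : v ![0,1,1] ≤ -1 := by linarith only [hep0201, t1b, hb021.2]
        have t28 : v ![1,0,1] ≤ -1 := by linarith only [hep1201, t1b, hb201.2]
        have t29 : 1 ≤ v ![2,1,1] := by linarith only [hep1211, t27, hb111.1]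
        have t30 : 1 ≤ v ![0,1,0] := by linarith only [hep0101, t27, hb012.1]
        have t31 : 1 ≤ v ![1,0,0] := by linarith only [hep0110, t28, hb102.1]
        have t32 : v ![1,2,0] ≤ -1 := by linarith only [hep0210, t31, hb110.2]
        have t33 : 1 ≤ v ![1,2,1] := by linarith only [hep0211, t28, hb111.1]
        have t34 : v ![2,1,0] ≤ -1 := by linarith only [hep1210, t30, hb110.2]
        have t35 : v ![2,2,1] ≤ -1 := by linarith only [hes21, t1b, hb011.2, hb021.2, hb101.2, hb111.2, t33, hb201.2, t29]
        rcases le_or_gt (v ![0,0,0]) (-2) with t36 | t36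
        · -- v ![0,0,0] ≤ -2
          have t37 : 1 ≤ v ![0,2,0] := by linarith only [hes20, t36, hb010.1, hb100.1, hb110.1, t32, hb200.1, t34, hb220.1]
          have t38 : 1 ≤ v ![2,0,0] := by linarith only [hes20, t36, hb010.1, hb020.1, hb100.1, hb110.1, t32, t34, hb220.1]
          have t39 : 1 ≤ v ![0,0,2] := by linarith only [hep0100, t36, hb001.1]
          have t40 : v ![0,2,2] ≤ -1 := by linarith only [hes00, hb000.2, t1b, t39, t30, hb011.2, hb012.2, t37, hb021.2]
          have t41 : v ![2,0,2] ≤ -1 := by linarith only [hes10, hb000.2, t1b, t39, t31, hb101.2, hb102.2, t38, hb201.2]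
          have t42 : 1 ≤ v ![2,2,2] := by linarith only [heem, t36, hb001.1, hb002.1, hb010.1, t27, hb012.1, hb020.1, hb021.1, t40, hb100.1, t28, hb102.1, hb110.1, hb111.1, hb112.1, t32, hb121.1, hb122.1, hb200.1, hb201.1, t41, t34, hb211.1, hb212.1, hb220.1, t35]
          have e000 : v ![0,0,0] = -2 := le_antisymm t36 hb000.2
          have e001 : v ![0,0,1] = 1 := le_antisymm hb001.1 t1b
          have e002 : v ![0,0,2] = 1 := le_antisymm hb002.1 t39
          have e010 : v ![0,1,0] = 1 := le_antisymm hb010.1 t30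
          have e011 : v ![0,1,1] = -1 := le_antisymm t27 hb011.2
          have e012 : v ![0,1,2] = 0 := le_antisymm hb012.1 hb012.2
          have e020 : v ![0,2,0] = 1 := le_antisymm hb020.1 t37
          have e021 : v ![0,2,1] = 0 := le_antisymm hb021.1 hb021.2
          have e022 : v ![0,2,2] = -1 := le_antisymm t40 hb022.2
          have e100 : v ![1,0,0] = 1 := le_antisymm hb100.1 t31
          have e101 : v ![1,0,1] = -1 := le_antisymm t28 hb101.2
          have e102 : v ![1,0,2] = 0 := le_antisymm hb102.1 hb102.2
          have e110 : v ![1,1,0] = 0 := le_antisymm hb110.1 hb110.2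
          have e111 : v ![1,1,1] = 0 := le_antisymm hb111.1 hb111.2
          have e112 : v ![1,1,2] = 0 := le_antisymm hb112.1 hb112.2
          have e120 : v ![1,2,0] = -1 := le_antisymm t32 hb120.2
          have e121 : v ![1,2,1] = 1 := le_antisymm hb121.1 t33
          have e122 : v ![1,2,2] = 0 := le_antisymm hb122.1 hb122.2
          have e200 : v ![2,0,0] = 1 := le_antisymm hb200.1 t38
          have e201 : v ![2,0,1] = 0 := le_antisymm hb201.1 hb201.2
          have e202 : v ![2,0,2] = -1 := le_antisymm t41 hb202.2
          have e210 : v ![2,1,0] = -1 := le_antisymm t34 hb210.2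
          have e211 : v ![2,1,1] = 1 := le_antisymm hb211.1 t29
          have e212 : v ![2,1,2] = 0 := le_antisymm hb212.1 hb212.2
          have e220 : v ![2,2,0] = 0 := le_antisymm hb220.1 hb220.2
          have e221 : v ![2,2,1] = -1 := le_antisymm t35 hb221.2
          have e222 : v ![2,2,2] = 1 := le_antisymm hb222.1 t42
          exact Or.inr ⟨e000, e001, e002, e010, e011, e012, e020, e021, e022, e100, e101, e102, e110, e111, e112, e120, e121, e122, e200, e201, e202, e210, e211, e212, e220, e221, e222⟩
        · have t36b : -1 ≤ v ![0,0,0] := by linarith only [t36]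
          have t43 : v ![0,0,2] ≤ 0 := by linarith only [hep0100, t36b, t1b]
          have t44 : v ![0,2,0] ≤ 0 := by linarith only [hep0200, t36b, t30]
          have t45 : v ![2,0,0] ≤ 0 := by linarith only [hep1200, t36b, t31]
          have t46 : 0 ≤ v ![0,2,2] := by linarith only [heem, t26, hb001.1, t43, hb010.1, t27, hb012.1, t44, hb021.1, hb100.1, t28, hb102.1, hb110.1, hb111.1, hb112.1, t32, hb121.1, hb122.1, t45, hb201.1, hb202.1, t34, hb211.1, hb212.1, hb220.1, t35, hb222.1]
          have t47 : 0 ≤ v ![2,0,2] := by linarith only [heem, t26, hb001.1, t43, hb010.1, t27, hb012.1, t44, hb021.1, hb022.1, hb100.1, t28, hb102.1, hb110.1, hb111.1, hb112.1, t32, hb121.1, hb122.1, t45, hb201.1, t34, hb211.1, hb212.1, hb220.1, t35, hb222.1]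
          have t48 : 1 ≤ v ![2,2,2] := by linarith only [heem, t26, hb001.1, t43, hb010.1, t27, hb012.1, t44, hb021.1, hb022.1, hb100.1, t28, hb102.1, hb110.1, hb111.1, hb112.1, t32, hb121.1, hb122.1, t45, hb201.1, hb202.1, t34, hb211.1, hb212.1, hb220.1, t35]
          have t49 : 0 ≤ v ![0,0,0] := by linarith only [hes20, hb010.1, t44, hb100.1, hb110.1, t32, t45, t34, hb220.1]
          exfalso; linarith only [t49, t26]
    rcases hdisj with h | h
    · obtain ⟨c000, c001, c002, c010, c011, c012, c020, c021, c022, c100, c101, c102, c110, c111, c112, c120, c121, c122, c200, c201, c202, c210, c211, c212, c220, c221, c222⟩ := h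
      exact hv0 (graverEq27 v 0 (graverFin3Forall (graverFin3Forall (graverFin3Forall c000 c001 c002) (graverFin3Forall c010 c011 c012) (graverFin3Forall c020 c021 c022)) (graverFin3Forall (graverFin3Forall c100 c101 c102) (graverFin3Forall c110 c111 c112) (graverFin3Forall c120 c121 c122)) (graverFin3Forall (graverFin3Forall c200 c201 c202) (graverFin3Forall c210 c211 c212) (graverFin3Forall c220 c221 c222))))
    · obtain ⟨c000, c001, c002, c010, c011, c012, c020, c021, c022, c100, c101, c102, c110, c111, c112, c120, c121, c122, c200, c201, c202, c210, c211, c212, c220, c221, c222⟩ := h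
      exact hne (graverEq27 v graverU (graverFin3Forall (graverFin3Forall (graverFin3Forall c000 c001 c002) (graverFin3Forall c010 c011 c012) (graverFin3Forall c020 c021 c022)) (graverFin3Forall (graverFin3Forall c100 c101 c102) (graverFin3Forall c110 c111 c112) (graverFin3Forall c120 c121 c122)) (graverFin3Forall (graverFin3Forall c200 c201 c202) (graverFin3Forall c210 c211 c212) (graverFin3Forall c220 c221 c222))))
end

section
/- The square matrix A_{Δ_m, d}, the design matrix of the hierarchical model on a full simplex Δ_m with any weight vector d, has determinant ±1; in particular its integer kernel is trivial and its Graver basis is empty. -/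
open Finset

section Helpers

variable {V : Type*} [Fintype V] [DecidableEq V] (d : V → ℕ)

/-- per-coordinate factor of the design matrix. -/
def aFac (r : DRow (Finset.univ.powerset : Finset (Finset V)) d) (v : V) (x : Fin (d v)) : ℤ :=
  if h : v ∈ r.1.1 then (if (x : ℕ) = (r.2 ⟨v, h⟩ : ℕ) then 1 else 0) else 1

/-- per-coordinate factor of the inverse matrix. -/
def bFac (r : DRow (Finset.univ.powerset : Finset (Finset V)) d) (v : V) (x : Fin (d v)) : ℤ :=
  if h : v ∈ r.1.1 then
    ((if (x : ℕ) = (r.2 ⟨v, h⟩ : ℕ) then 1 else 0) - (if (x : ℕ) = d v - 1 then 1 else 0))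
  else (if (x : ℕ) = d v - 1 then 1 else 0)

def Binv : Matrix (∀ v : V, Fin (d v)) (DRow (Finset.univ.powerset : Finset (Finset V)) d) ℤ :=
  fun i r => ∏ v : V, bFac d r v (i v)

lemma sum_delta {n : ℕ} (a : ℕ) (ha : a < n) (h : Fin n → ℤ) :
    ∑ x : Fin n, (if (x : ℕ) = a then (1:ℤ) else 0) * h x = h ⟨a, ha⟩ := by
  rw [Finset.sum_eq_single (⟨a, ha⟩ : Fin n)]
  · simp
  · intro b _ hb
    have : (b : ℕ) ≠ a := fun hh => hb (Fin.ext hh)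
    simp [this]
  · simp

lemma sum_delta' {n : ℕ} (a : ℕ) (ha : a < n) :
    ∑ x : Fin n, (if (x : ℕ) = a then (1:ℤ) else 0) = 1 := by
  simpa using sum_delta a ha (fun _ => 1)

lemma A_apply (r : DRow (Finset.univ.powerset : Finset (Finset V)) d) (i : ∀ v, Fin (d v)) :
    designMatrix Finset.univ.powerset d r i = ∏ v : V, aFac d r v (i v) := by
  rw [designMatrix]
  by_cases h : ∀ v : {x : V // x ∈ r.1.1}, (i v.1 : ℕ) = (r.2 v : ℕ)
  · rw [if_pos h, eq_comm]
    apply Finset.prod_eq_one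
    intro v _
    unfold aFac
    by_cases hv : v ∈ r.1.1
    · rw [dif_pos hv, if_pos (h ⟨v, hv⟩)]
    · rw [dif_neg hv]
  · rw [if_neg h, eq_comm]
    push_neg at h
    obtain ⟨v, hv⟩ := h
    apply Finset.prod_eq_zero (Finset.mem_univ v.1)
    unfold aFac
    rw [dif_pos v.2, if_neg]
    exact hv

theorem AB_eq_one (hd : ∀ v, 2 ≤ d v) :
    designMatrix (Finset.univ.powerset : Finset (Finset V)) d * Binv d = 1 := by
  ext r r'
  rw [Matrix.mul_apply]
  have key : ∀ i : ∀ v, Fin (d v), designMatrix Finset.univ.powerset d r i * Binv d i r'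
      = ∏ v : V, (aFac d r v (i v) * bFac d r' v (i v)) := by
    intro i
    rw [A_apply]
    simp only [Binv]
    rw [← Finset.prod_mul_distrib]
  simp_rw [key]
  rw [show (∑ x : ∀ v : V, Fin (d v), ∏ v : V, aFac d r v (x v) * bFac d r' v (x v))
      = ∏ v : V, ∑ x : Fin (d v), aFac d r v x * bFac d r' v x from
    (Fintype.prod_sum (fun v (x : Fin (d v)) => aFac d r v x * bFac d r' v x)).symm]
  obtain ⟨⟨F, hF⟩, j⟩ := r
  obtain ⟨⟨G, hG⟩, k⟩ := r'
  by_cases hrr : (⟨⟨F, hF⟩, j⟩ : DRow (Finset.univ.powerset : Finset (Finset V)) d) = ⟨⟨G, hG⟩, k⟩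
  · rw [hrr, Matrix.one_apply_eq]
    cases hrr
    apply Finset.prod_eq_one
    intro v _
    by_cases hv : v ∈ F
    · simp only [aFac, bFac, dif_pos hv]
      have ha : ((j ⟨v, hv⟩ : ℕ)) < d v := lt_of_lt_of_le (j ⟨v, hv⟩).isLt (Nat.sub_le _ _)
      rw [sum_delta _ ha]
      have h2 : ((j ⟨v, hv⟩ : ℕ)) ≠ d v - 1 := by
        have hlt : ((j ⟨v, hv⟩ : ℕ)) < d v - 1 := (j ⟨v, hv⟩).isLt
        omega
      simp [h2]
    · simp only [aFac, bFac, dif_neg hv, one_mul]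
      exact sum_delta' (d v - 1) (by have := hd v; omega)
  · rw [Matrix.one_apply_ne hrr]
    by_cases hFG : F = G
    · subst hFG
      have hj : j ≠ k := by
        intro h
        exact hrr (by rw [h])
      obtain ⟨v, hv⟩ := Function.ne_iff.mp hj
      apply Finset.prod_eq_zero (Finset.mem_univ v.1)
      simp only [aFac, bFac, dif_pos v.2]
      have ha : ((j v : ℕ)) < d v.1 := lt_of_lt_of_le (j v).isLt (Nat.sub_le _ _)
      rw [sum_delta _ ha]
      have h1 : (j v : ℕ) ≠ (k v : ℕ) := fun hh => hv (Fin.ext hh)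
      have h2 : (j v : ℕ) ≠ d v.1 - 1 := by have := (j v).isLt; omega
      simp [h1, h2]
    · obtain ⟨v, hv⟩ := not_forall.mp (fun h => hFG (Finset.ext h))
      apply Finset.prod_eq_zero (Finset.mem_univ v)
      by_cases hvF : v ∈ F
      · have hvG : v ∉ G := fun hG' => hv ⟨fun _ => hG', fun _ => hvF⟩
        simp only [aFac, bFac, dif_pos hvF, dif_neg hvG]
        have ha : ((j ⟨v, hvF⟩ : ℕ)) < d v := lt_of_lt_of_le (j ⟨v, hvF⟩).isLt (Nat.sub_le _ _)
        rw [sum_delta _ ha]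
        have h2 : ((j ⟨v, hvF⟩ : ℕ)) ≠ d v - 1 := by
          have hlt : ((j ⟨v, hvF⟩ : ℕ)) < d v - 1 := (j ⟨v, hvF⟩).isLt
          omega
        simp [h2]
      · have hvG : v ∈ G := by
          by_contra hvG
          exact hv ⟨fun h => absurd h hvF, fun h => absurd h hvG⟩
        simp only [aFac, bFac, dif_neg hvF, dif_pos hvG, one_mul]
        rw [Finset.sum_sub_distrib, sum_delta' _ (lt_of_lt_of_le (k ⟨v, hvG⟩).isLt (Nat.sub_le _ _)),
          sum_delta' (d v - 1) (by have := hd v; omega), sub_self]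

theorem card_eq (hd : ∀ v, 2 ≤ d v) :
    Fintype.card (DRow (Finset.univ.powerset : Finset (Finset V)) d)
      = Fintype.card (∀ v : V, Fin (d v)) := by
  rw [Fintype.card_sigma, Fintype.card_pi]
  simp only [Fintype.card_pi, Fintype.card_fin]
  have h1 : ∀ F : {F : Finset V // F ∈ (Finset.univ.powerset : Finset (Finset V))},
      (∏ v : {x : V // x ∈ F.1}, (d v.1 - 1)) = ∏ v ∈ F.1, (d v - 1) := by
    intro F
    exact Finset.prod_coe_sort F.1 (fun v => d v - 1)
  simp_rw [h1]
  rw [Finset.sum_coe_sort (Finset.univ.powerset : Finset (Finset V))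
    (fun F => ∏ v ∈ F, (d v - 1))]
  have := Finset.prod_add (fun v : V => (d v - 1)) (fun _ => 1) Finset.univ
  simp only [Finset.prod_const_one, mul_one] at this
  have h2 : ∀ v : V, d v - 1 + 1 = d v := fun v => by have := hd v; omega
  calc ∑ F ∈ Finset.univ.powerset, ∏ v ∈ F, (d v - 1)
      = ∏ v : V, (d v - 1 + 1) := by rw [this]
    _ = ∏ v : V, d v := by simp_rw [h2]

end Helpers

/-- The design matrix of the hierarchical model on a full simplex `Δ_m` (whose faces are all
subsets of `[m+1]`) with any weight vector `d` is square (rows and columns both number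
`∏ d_v`), and identifying the row and column index sets by any bijection, its determinant is
`±1`; in particular its integer kernel is trivial and its Graver basis is empty. -/
theorem stmt15 (m : ℕ) (d : Fin (m + 1) → ℕ) (hd : ∀ v, 2 ≤ d v) :
    (∀ e : (∀ v : Fin (m + 1), Fin (d v)) ≃
        DRow ((Finset.univ : Finset (Fin (m + 1))).powerset) d,
      ((designMatrix Finset.univ.powerset d).submatrix e id).det = 1 ∨
      ((designMatrix Finset.univ.powerset d).submatrix e id).det = -1) ∧
    (∀ u, (designMatrix ((Finset.univ : Finset (Fin (m + 1))).powerset) d).mulVec u = 0 →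
      u = 0) ∧
    (∀ u, ¬ InGraverBasis
      (designMatrix ((Finset.univ : Finset (Fin (m + 1))).powerset) d) u) := by
  have hAB := AB_eq_one d hd
  obtain ⟨e0⟩ := Fintype.card_eq.mp (card_eq d hd).symm
  have hBA : Binv d * designMatrix Finset.univ.powerset d = 1 :=
    (Matrix.mul_eq_one_comm_of_equiv e0).mpr hAB
  have hker : ∀ u, (designMatrix (Finset.univ.powerset :
      Finset (Finset (Fin (m + 1)))) d).mulVec u = 0 → u = 0 := by
    intro u hu
    have h : (Binv d * designMatrix Finset.univ.powerset d).mulVec u = u := by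
      rw [hBA, Matrix.one_mulVec]
    rw [← Matrix.mulVec_mulVec, hu, Matrix.mulVec_zero] at h
    exact h.symm
  refine ⟨?_, hker, ?_⟩
  · intro e
    have h1 : (designMatrix Finset.univ.powerset d).submatrix e id
        * (Binv d).submatrix id e = 1 := by
      have h := Matrix.submatrix_mul_equiv (designMatrix Finset.univ.powerset d)
        (Binv d) (⇑e) (Equiv.refl _) (⇑e)
      rw [Equiv.coe_refl, hAB] at h
      rw [h, Matrix.submatrix_one_equiv]
    have h2 := congrArg Matrix.det h1
    rw [Matrix.det_mul, Matrix.det_one] at h2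
    exact Int.isUnit_iff.mp (IsUnit.of_mul_eq_one _ h2)
  · rintro u ⟨hne, hku, -⟩
    exact hne (hker u hku)
end

section
/- Let A ∈ Z^(d×n) with full row rank be unimodular. Then every Graver basis element of A is a circuit of A, i.e., it has minimal support among nonzero elements of ker_Z(A) and relatively prime entries. -/
open Matrix Finset



lemma exists_int_scaling {k : ℕ} (c : Fin k → ℚ) :
    ∃ N : ℤ, 0 < N ∧ ∀ i, ∃ z : ℤ, (z : ℚ) = N * c i := by
  refine ⟨∏ i, ((c i).den : ℤ), ?_, ?_⟩
  · exact Finset.prod_pos fun i _ => Int.natCast_pos.mpr (c i).den_pos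
  · intro i
    obtain ⟨m, hm⟩ : (((c i).den : ℤ)) ∣ ∏ j, ((c j).den : ℤ) :=
      Finset.dvd_prod_of_mem _ (Finset.mem_univ i)
    refine ⟨m * (c i).num, ?_⟩
    push_cast [hm]
    rw [mul_comm ((c i).den : ℚ) m, mul_assoc, Rat.den_mul_eq_num]

lemma mulVec_cast_apply {d n : ℕ} (A : Matrix (Fin d) (Fin n) ℤ) (v : Fin n → ℤ) (i : Fin d) :
    (A.map (fun x : ℤ => (x : ℚ))).mulVec (fun j => (v j : ℚ)) i = ((A.mulVec v i : ℤ) : ℚ) := by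
  simp [Matrix.mulVec, dotProduct, Matrix.map]

lemma mulVec_cast {d n : ℕ} (A : Matrix (Fin d) (Fin n) ℤ) (v : Fin n → ℤ) :
    (A.map (fun x : ℤ => (x : ℚ))).mulVec (fun i => (v i : ℚ)) = 0 ↔ A.mulVec v = 0 := by
  constructor <;> intro h <;> funext i
  · have := congr_fun h i
    rw [mulVec_cast_apply] at this
    rw [Pi.zero_apply] at this ⊢
    exact_mod_cast this
  · rw [Pi.zero_apply, mulVec_cast_apply, congr_fun h i]; simp



lemma lemA_aux {d n : ℕ} (B : Matrix (Fin d) (Fin n) ℚ) :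
    ∀ N (u : Fin n → ℚ), (univ.filter (fun i => u i ≠ 0)).card ≤ N → u ≠ 0 → B.mulVec u = 0 →
    ∃ c : Fin n → ℚ, c ≠ 0 ∧ B.mulVec c = 0 ∧ (∀ i, c i ≠ 0 → 0 < c i * u i) ∧
      ∀ w : Fin n → ℚ, w ≠ 0 → B.mulVec w = 0 → (∀ i, w i ≠ 0 → c i ≠ 0) →
        ∀ i, c i ≠ 0 → w i ≠ 0 := by
  classical
  intro N
  induction N with
  | zero =>
    intro u hcard hu _
    exfalso
    obtain ⟨i, hi⟩ := Function.ne_iff.mp hu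
    have hi' : u i ≠ 0 := by simpa using hi
    have : i ∈ univ.filter (fun i => u i ≠ 0) := by simp [hi']
    have := card_pos.mpr ⟨i, this⟩
    omega
  | succ N IH =>
    intro u hcard hu hker
    -- choose a kernel vector with minimal support cardinality inside supp u
    set P : ℕ → Prop := fun k => ∃ v : Fin n → ℚ, v ≠ 0 ∧ B.mulVec v = 0 ∧
      (∀ i, v i ≠ 0 → u i ≠ 0) ∧ (univ.filter (fun i => v i ≠ 0)).card = k with hP
    have hex : ∃ k, P k := ⟨_, u, hu, hker, fun i h => h, rfl⟩
    obtain ⟨v, hv0, hvker, hvsupp, hvcard⟩ := Nat.find_spec hex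
    have hmin : ∀ w : Fin n → ℚ, w ≠ 0 → B.mulVec w = 0 → (∀ i, w i ≠ 0 → u i ≠ 0) →
        Nat.find hex ≤ (univ.filter (fun i => w i ≠ 0)).card := by
      intro w h1 h2 h3
      exact Nat.find_le ⟨w, h1, h2, h3, rfl⟩
    -- helper for the "uniform sign" cases
    have minimal_case : ∀ c : Fin n → ℚ, c ≠ 0 → B.mulVec c = 0 →
        (∀ i, c i ≠ 0 ↔ v i ≠ 0) → (∀ i, c i ≠ 0 → 0 < c i * u i) →
        ∃ c : Fin n → ℚ, c ≠ 0 ∧ B.mulVec c = 0 ∧ (∀ i, c i ≠ 0 → 0 < c i * u i) ∧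
          ∀ w : Fin n → ℚ, w ≠ 0 → B.mulVec w = 0 → (∀ i, w i ≠ 0 → c i ≠ 0) →
            ∀ i, c i ≠ 0 → w i ≠ 0 := by
      intro c hc0 hcker hcsupp hcsign
      refine ⟨c, hc0, hcker, hcsign, ?_⟩
      intro w hw0 hwker hwsub
      have hwu : ∀ i, w i ≠ 0 → u i ≠ 0 := fun i h =>
        hvsupp i ((hcsupp i).mp (hwsub i h))
      have h1 : Nat.find hex ≤ (univ.filter (fun i => w i ≠ 0)).card := hmin w hw0 hwker hwu
      have hsub : univ.filter (fun i => w i ≠ 0) ⊆ univ.filter (fun i => c i ≠ 0) := by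
        intro i hi
        simp only [mem_filter, mem_univ, true_and] at hi ⊢
        exact hwsub i hi
      have hsame : univ.filter (fun i => c i ≠ 0) = univ.filter (fun i => v i ≠ 0) := by
        apply Finset.filter_congr
        intro i _
        simp [hcsupp i]
      have heq : univ.filter (fun i => w i ≠ 0) = univ.filter (fun i => c i ≠ 0) := by
        apply Finset.eq_of_subset_of_card_le hsub
        rw [hsame, hvcard]; exact h1
      intro i hci
      have : i ∈ univ.filter (fun i => w i ≠ 0) := by
        rw [heq]; simp [hci]
      simpa using this
    by_cases h1 : ∀ i, v i ≠ 0 → 0 < v i * u i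
    · exact minimal_case v hv0 hvker (fun i => Iff.rfl) h1
    by_cases h2 : ∀ i, v i ≠ 0 → v i * u i < 0
    · refine minimal_case (-v) (by simpa using hv0) (by rw [Matrix.mulVec_neg, hvker, neg_zero]) (by intro i; simp) ?_
      intro i hi
      have hvi : v i ≠ 0 := by simpa using hi
      have := h2 i hvi
      simp only [Pi.neg_apply]
      nlinarith
    -- mixed signs
    push_neg at h1 h2
    obtain ⟨j1, hj1v, hj1⟩ := h1
    obtain ⟨j2, hj2v, hj2⟩ := h2
    have hj1u : u j1 ≠ 0 := hvsupp j1 hj1v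
    have hj2u : u j2 ≠ 0 := hvsupp j2 hj2v
    have hj1neg : v j1 * u j1 < 0 :=
      lt_of_le_of_ne hj1 (mul_ne_zero hj1v hj1u)
    have hj2pos : 0 < v j2 * u j2 :=
      lt_of_le_of_ne hj2 (Ne.symm (mul_ne_zero hj2v hj2u))
    set T : Finset (Fin n) := univ.filter (fun i => 0 < v i * u i) with hT
    have hj2T : j2 ∈ T := by simp [hT, hj2pos]
    obtain ⟨j0, hj0T, hj0min⟩ := Finset.exists_min_image T (fun i => u i / v i) ⟨j2, hj2T⟩
    have hj0pos : 0 < v j0 * u j0 := by simpa [hT] using hj0T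
    have hvj0 : v j0 ≠ 0 := fun h => by simp [h] at hj0pos
    have huj0 : u j0 ≠ 0 := fun h => by simp [h] at hj0pos
    set t : ℚ := u j0 / v j0 with htdef
    have ht : 0 < t := by
      rw [htdef, div_pos_iff]
      rcases mul_pos_iff.mp hj0pos with ⟨ha, hb⟩ | ⟨ha, hb⟩
      · exact Or.inl ⟨hb, ha⟩
      · exact Or.inr ⟨hb, ha⟩
    set x : Fin n → ℚ := fun i => u i - t * v i with hx
    have hxj0 : x j0 = 0 := by
      simp only [hx, htdef]
      rw [div_mul_cancel₀ _ hvj0]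
      ring
    have hsub : ∀ i, x i ≠ 0 → u i ≠ 0 := by
      intro i hxi hui
      have hvi : v i = 0 := by
        by_contra hvi
        exact hvsupp i hvi hui
      apply hxi
      simp [hx, hui, hvi]
    have hsign : ∀ i, x i ≠ 0 → 0 < x i * u i := by
      intro i hxi
      have hui := hsub i hxi
      by_cases hvi : v i = 0
      · have hxu : x i = u i := by simp [hx, hvi]
        rw [hxu]
        exact mul_self_pos.mpr hui
      · rcases (mul_ne_zero hvi hui).lt_or_gt with hneg | hpos
        · have : x i * u i = u i * u i - t * (v i * u i) := by simp [hx]; ring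
          rw [this]
          nlinarith [mul_self_pos.mpr hui, mul_pos ht (neg_pos.mpr hneg)]
        · have hiT : i ∈ T := by simp [hT, hpos]
          have hle : t ≤ u i / v i := hj0min i hiT
          have key : t * (v i * u i) ≤ u i * u i := by
            have h2 : (u i / v i) * (v i * u i) = u i * u i := by
              field_simp
            calc t * (v i * u i) ≤ (u i / v i) * (v i * u i) :=
                  mul_le_mul_of_nonneg_right hle (le_of_lt hpos)
              _ = u i * u i := h2
          have hge : 0 ≤ x i * u i := by
            have : x i * u i = u i * u i - t * (v i * u i) := by simp [hx]; ring
            rw [this]; linarith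
          exact lt_of_le_of_ne hge (Ne.symm (mul_ne_zero hxi hui))
    have hxj1 : 0 < x j1 * u j1 := by
      have : x j1 * u j1 = u j1 * u j1 - t * (v j1 * u j1) := by simp [hx]; ring
      rw [this]
      nlinarith [mul_self_pos.mpr hj1u, mul_pos ht (neg_pos.mpr hj1neg)]
    have hxne : x ≠ 0 := by
      intro h
      rw [h] at hxj1
      simp at hxj1
    have hxker : B.mulVec x = 0 := by
      have : x = u - t • v := by funext i; simp [hx]
      rw [this, Matrix.mulVec_sub, Matrix.mulVec_smul, hker, hvker]
      simp
    have hcard : (univ.filter (fun i => x i ≠ 0)).card ≤ N := by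
      have hss : univ.filter (fun i => x i ≠ 0) ⊂ univ.filter (fun i => u i ≠ 0) := by
        rw [Finset.ssubset_iff_of_subset]
        · exact ⟨j0, by simp [huj0], by simp [hxj0]⟩
        · intro i hi
          simp only [mem_filter, mem_univ, true_and] at hi ⊢
          exact hsub i hi
      have := Finset.card_lt_card hss
      omega
    obtain ⟨c, hc0, hcker, hcsign, hcmin⟩ := IH x hcard hxne hxker
    refine ⟨c, hc0, hcker, ?_, hcmin⟩
    intro i hci
    have h1 := hcsign i hci
    have hxi : x i ≠ 0 := fun h => by rw [h] at h1; simp at h1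
    have h2 := hsign i hxi
    nlinarith [mul_pos h1 h2, mul_self_pos.mpr hxi]

lemma rat_to_primitive {n : ℕ} (c : Fin n → ℚ) (hc : c ≠ 0) :
    ∃ (z : Fin n → ℤ) (q : ℚ), 0 < q ∧ (∀ i, (z i : ℚ) = q * c i) ∧
      Finset.univ.gcd z = 1 := by
  obtain ⟨N, hN, hz⟩ := exists_int_scaling c
  choose w hw using hz
  have hw0 : w ≠ 0 := by
    intro h
    apply hc
    funext i
    have := hw i
    rw [h] at this
    simp only [Pi.zero_apply, Int.cast_zero] at this
    rcases mul_eq_zero.mp this.symm with h' | h'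
    · exact absurd h' (by positivity)
    · simp [h']
  obtain ⟨i0, hi0⟩ := Function.ne_iff.mp hw0
  have hi0' : w i0 ≠ 0 := by simpa using hi0
  set g : ℤ := Finset.univ.gcd w with hg
  have hgdvd : ∀ i, g ∣ w i := fun i => Finset.gcd_dvd (mem_univ i)
  have hg0 : g ≠ 0 := by
    intro h
    exact hi0' (Finset.gcd_eq_zero_iff.mp h i0 (mem_univ i0))
  have hgpos : 0 < g := by
    have h1 : normalize g = g := Finset.normalize_gcd
    have h2 : |g| = g := by rw [Int.abs_eq_normalize, h1]
    rcases hg0.lt_or_gt with h | h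
    · rw [abs_of_neg h] at h2; omega
    · exact h
  choose z hzdvd using hgdvd
  refine ⟨z, (N : ℚ) / (g : ℚ), by positivity, ?_, ?_⟩
  · intro i
    have h1 : (w i : ℚ) = (g : ℚ) * (z i : ℚ) := by rw [hzdvd i]; push_cast; ring
    have hgQ : (g : ℚ) ≠ 0 := Int.cast_ne_zero.mpr hg0
    rw [div_mul_eq_mul_div, ← hw i, h1]
    field_simp
  · have : ∀ j ∈ (univ : Finset (Fin n)), z j = w j / g := by
      intro j _
      rw [hzdvd j]
      rw [Int.mul_ediv_cancel_left _ hg0]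
    rw [Finset.gcd_congr rfl this]
    exact Finset.gcd_div_eq_one (f := w) (mem_univ i0) hi0'

lemma rows_linIndep_rat {d n : ℕ} (A : Matrix (Fin d) (Fin n) ℤ)
    (h : LinearIndependent ℤ (fun i : Fin d => A i)) :
    LinearIndependent ℚ (fun i : Fin d => (A.map (fun x : ℤ => (x : ℚ))) i) := by
  rw [Fintype.linearIndependent_iff] at h ⊢
  intro g hg
  obtain ⟨N, hN, hz⟩ := exists_int_scaling g
  choose m hm using hz
  have hmz : ∀ j, ∑ i, m i * A i j = 0 := by
    intro j
    have h1 := congr_fun hg j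
    have : ((∑ i, m i * A i j : ℤ) : ℚ) = 0 := by
      push_cast
      simp_rw [hm]
      simp only [Finset.sum_apply, Pi.smul_apply, smul_eq_mul, Pi.zero_apply, Matrix.map_apply] at h1
      calc ∑ i, (N : ℚ) * g i * (A i j : ℚ) = N * ∑ i, g i * (A i j : ℚ) := by
            rw [Finset.mul_sum]; congr 1; funext i; ring
        _ = 0 := by rw [h1]; ring
    exact_mod_cast this
  have h0 : ∀ i, m i = 0 := by
    apply h
    funext j
    simpa [Finset.sum_apply] using hmz j
  intro i
  have := hm i
  rw [h0 i] at this
  have hgN : (N : ℚ) * g i = 0 := by exact_mod_cast this.symm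
  rcases mul_eq_zero.mp hgN with h' | h'
  · exact absurd h' (by positivity)
  · exact h'

lemma key {d n : ℕ} (A : Matrix (Fin d) (Fin n) ℤ) (hA : IsUnimodularFR A)
    (c : Fin n → ℤ) (hc0 : c ≠ 0) (hgcd : Finset.univ.gcd c = 1)
    (hker : A.mulVec c = 0)
    (hmin : ∀ w : Fin n → ℚ, w ≠ 0 → (A.map (fun x : ℤ => (x : ℚ))).mulVec w = 0 →
      (∀ i, w i ≠ 0 → c i ≠ 0) → ∀ i, c i ≠ 0 → w i ≠ 0) :
    ∀ i, c i = 0 ∨ c i = 1 ∨ c i = -1 := by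
  classical
  set B : Matrix (Fin d) (Fin n) ℚ := A.map (fun x : ℤ => (x : ℚ)) with hB
  set cQ : Fin n → ℚ := fun i => (c i : ℚ) with hcQdef
  have hcQ0 : cQ ≠ 0 := by
    intro h
    apply hc0
    funext i
    have := congr_fun h i
    simpa [hcQdef] using this
  have hcQker : B.mulVec cQ = 0 := (mulVec_cast A c).mpr hker
  set C : Finset (Fin n) := univ.filter (fun i => c i ≠ 0) with hC
  -- every kernel vector supported in C is a multiple of cQ
  have hPC : ∀ w : Fin n → ℚ, B.mulVec w = 0 → (∀ i, i ∉ C → w i = 0) → ∃ q : ℚ, w = q • cQ := by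
    intro w hwker hwsupp
    by_cases hw0 : w = 0
    · exact ⟨0, by simp [hw0]⟩
    obtain ⟨i0, hi0⟩ := Function.ne_iff.mp hc0
    have hi0' : c i0 ≠ 0 := by simpa using hi0
    set w' : Fin n → ℚ := fun i => (c i0 : ℚ) * w i - w i0 * cQ i with hw'def
    have hw'ker : B.mulVec w' = 0 := by
      have : w' = (c i0 : ℚ) • w - (w i0) • cQ := by funext i; simp [hw'def]
      rw [this, Matrix.mulVec_sub, Matrix.mulVec_smul, Matrix.mulVec_smul, hwker, hcQker]
      simp
    by_cases hw' : w' = 0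
    · refine ⟨w i0 / (c i0 : ℚ), ?_⟩
      funext i
      have := congr_fun hw' i
      simp only [hw'def, Pi.zero_apply] at this
      have hci0Q : (c i0 : ℚ) ≠ 0 := Int.cast_ne_zero.mpr hi0'
      rw [Pi.smul_apply, smul_eq_mul]
      field_simp
      linarith [this]
    · exfalso
      have hsupp : ∀ i, w' i ≠ 0 → c i ≠ 0 := by
        intro i hi
        by_contra hci
        apply hi
        have : w i = 0 := hwsupp i (by simp [hC, hci])
        simp [hw'def, this, hcQdef, hci]
      have := hmin w' hw' hw'ker hsupp i0 hi0'
      apply this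
      simp [hw'def, hcQdef]
      ring
  -- maximal superset D of C such that all kernel vectors supported in D are multiples of cQ
  set P : Finset (Fin n) → Prop := fun S =>
    ∀ w : Fin n → ℚ, B.mulVec w = 0 → (∀ i, i ∉ S → w i = 0) → ∃ q : ℚ, w = q • cQ with hPdef
  set 𝒯 : Finset (Finset (Fin n)) := univ.powerset.filter (fun S => C ⊆ S ∧ P S) with h𝒯
  have hC𝒯 : C ∈ 𝒯 := by
    simp only [h𝒯, mem_filter, mem_powerset]
    exact ⟨subset_univ C, subset_rfl, hPC⟩
  obtain ⟨D, hD𝒯, hDmax⟩ := Finset.exists_max_image 𝒯 Finset.card ⟨C, hC𝒯⟩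
  have hCD : C ⊆ D := ((mem_filter.mp hD𝒯).2).1
  have hPD : P D := ((mem_filter.mp hD𝒯).2).2
  -- columns
  set col : Fin n → (Fin d → ℚ) := fun j r => B r j with hcol
  have hmvsum : ∀ x : Fin n → ℚ, B.mulVec x = ∑ j, x j • col j := by
    intro x
    funext r
    simp [Matrix.mulVec, dotProduct, hcol, Finset.sum_apply, mul_comm]
  set V : Submodule ℚ (Fin d → ℚ) := Submodule.span ℚ (col '' ↑D) with hV
  have hcolV : ∀ j, col j ∈ V := by
    intro j
    by_cases hjD : j ∈ D
    · exact Submodule.subset_span ⟨j, hjD, rfl⟩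
    · have hnP : ¬ P (insert j D) := by
        intro hP
        have : insert j D ∈ 𝒯 := by
          simp only [h𝒯, mem_filter, mem_powerset]
          exact ⟨subset_univ _, hCD.trans (subset_insert j D), hP⟩
        have h1 := hDmax _ this
        rw [Finset.card_insert_of_notMem hjD] at h1
        omega
      rw [hPdef] at hnP
      have hnP' : ∃ x : Fin n → ℚ, (B.mulVec x = 0 ∧ (∀ i, i ∉ insert j D → x i = 0)) ∧
          ¬∃ q : ℚ, x = q • cQ := by
        by_contra h
        push_neg at h
        exact hnP (fun w h1 h2 => h w ⟨h1, h2⟩)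
      obtain ⟨x, ⟨hxker, hxsupp⟩, hxnq⟩ := hnP'
      have hxj : x j ≠ 0 := by
        intro hxj
        apply hxnq
        apply hPD x hxker
        intro i hiD
        by_cases hij : i = j
        · rw [hij]; exact hxj
        · exact hxsupp i (by simp [hij, hiD])
      have hsum : x j • col j + ∑ k ∈ D, x k • col k = 0 := by
        have h1 : ∑ k ∈ insert j D, x k • col k = ∑ k, x k • col k := by
          apply Finset.sum_subset (subset_univ _)
          intro i _ hi
          rw [hxsupp i hi, zero_smul]
        rw [Finset.sum_insert hjD] at h1
        rw [h1, ← hmvsum, hxker]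
      have hmem : x j • col j ∈ V := by
        have : x j • col j = - ∑ k ∈ D, x k • col k := by
          rw [eq_neg_iff_add_eq_zero]; exact hsum
        rw [this]
        apply Submodule.neg_mem
        apply Submodule.sum_mem
        intro k hk
        exact Submodule.smul_mem _ _ (Submodule.subset_span ⟨k, hk, rfl⟩)
      have := Submodule.smul_mem V (x j)⁻¹ hmem
      rwa [smul_smul, inv_mul_cancel₀ hxj, one_smul] at this
  have hVtop : V = ⊤ := by
    have h1 : Submodule.span ℚ (Set.range col) ≤ V := by
      rw [Submodule.span_le]
      rintro _ ⟨j, rfl⟩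
      exact hcolV j
    have h2 : LinearMap.range B.mulVecLin = Submodule.span ℚ (Set.range col) := by
      rw [Matrix.range_mulVecLin]
      congr 1
    have h3 : B.rank = d := by
      rw [← Matrix.rank_transpose]
      have : Bᵀ.rank = Module.finrank ℚ (Submodule.span ℚ (Set.range B)) := by
        rw [Matrix.rank, Matrix.range_mulVecLin]; rfl
      rw [this]
      rw [finrank_span_eq_card (rows_linIndep_rat A hA.1)]
      simp
    have h4 : LinearMap.range B.mulVecLin = ⊤ := by
      apply Submodule.eq_top_of_finrank_eq
      rw [← Matrix.rank] at *
      rw [h3]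
      simp [Module.finrank_pi]
    rw [← h2, h4] at h1
    exact top_le_iff.mp h1
  -- enumerate D
  obtain ⟨k, hk⟩ : ∃ k, D.card = k := ⟨_, rfl⟩
  set eD : Fin k → Fin n := fun p => D.orderEmbOfFin hk p with heD
  have heDinj : Function.Injective eD := (D.orderEmbOfFin hk).injective
  have heDmem : ∀ p, eD p ∈ D := fun p => Finset.orderEmbOfFin_mem D hk p
  have heDrange : Set.range eD = ↑D := Finset.range_orderEmbOfFin D hk
  have heDsurj : ∀ i ∈ D, ∃ p, eD p = i := by
    intro i hi
    have : (i : Fin n) ∈ Set.range eD := by rw [heDrange]; exact hi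
    exact this
  set M : Matrix (Fin d) (Fin k) ℚ := B.submatrix id eD with hM
  set L : (Fin k → ℚ) →ₗ[ℚ] (Fin d → ℚ) := M.mulVecLin with hL
  -- the extension-by-zero map
  set φ : (Fin k → ℚ) → (Fin n → ℚ) :=
    fun y i => if h : i ∈ D then y (((D.orderIsoOfFin hk).symm ⟨i, h⟩ : Fin k)) else 0 with hφ
  have hφapp : ∀ y p, φ y (eD p) = y p := by
    intro y p
    have h1 : eD p ∈ D := heDmem p
    simp only [hφ, dif_pos h1]
    congr 1
    have : (⟨eD p, h1⟩ : {x // x ∈ D}) = D.orderIsoOfFin hk p := by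
      ext
      simp [heD, Finset.coe_orderIsoOfFin_apply]
    rw [this, OrderIso.symm_apply_apply]
  have hφsupp : ∀ y i, i ∉ D → φ y i = 0 := by
    intro y i hi
    simp [hφ, hi]
  have hφmul : ∀ y, B.mulVec (φ y) = L y := by
    intro y
    funext r
    have h1 : ∑ i ∈ D, B r i * φ y i = ∑ i, B r i * φ y i := by
      apply Finset.sum_subset (subset_univ _)
      intro i _ hi
      rw [hφsupp y i hi, mul_zero]
    have himg : Finset.image eD univ = D := by
      ext i
      simp only [Finset.mem_image, mem_univ, true_and]
      constructor
      · rintro ⟨p, rfl⟩; exact heDmem p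
      · exact heDsurj i
    have h2 : ∑ i ∈ D, B r i * φ y i = ∑ p : Fin k, B r (eD p) * φ y (eD p) := by
      rw [← himg, Finset.sum_image (fun a _ b _ hab => heDinj hab)]
    calc B.mulVec (φ y) r = ∑ i, B r i * φ y i := by
          simp [Matrix.mulVec, dotProduct]
      _ = ∑ p : Fin k, B r (eD p) * φ y (eD p) := by rw [← h1, h2]
      _ = ∑ p : Fin k, M r p * y p := by
          apply Finset.sum_congr rfl
          intro p _
          rw [hφapp, hM]
          rfl
      _ = L y r := by simp [hL, Matrix.mulVecLin_apply, Matrix.mulVec, dotProduct]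
  -- the restricted kernel vector
  set y₀ : Fin k → ℚ := fun p => cQ (eD p) with hy₀
  have hφy₀ : φ y₀ = cQ := by
    funext i
    by_cases hi : i ∈ D
    · obtain ⟨p, rfl⟩ := heDsurj i hi
      rw [hφapp]
    · rw [hφsupp _ _ hi]
      have : i ∉ C := fun h => hi (hCD h)
      simp only [hC, mem_filter, mem_univ, true_and, not_not] at this
      simp [hcQdef, this]
  have hy₀ker : L y₀ = 0 := by rw [← hφmul, hφy₀, hcQker]
  have hy₀ne : y₀ ≠ 0 := by
    obtain ⟨i1, hi1⟩ := Function.ne_iff.mp hc0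
    have hi1' : c i1 ≠ 0 := by simpa using hi1
    have hi1C : i1 ∈ C := by simp [hC, hi1']
    obtain ⟨p, hp⟩ := heDsurj i1 (hCD hi1C)
    intro h
    have h2 : cQ (eD p) = 0 := by simpa [hy₀] using congr_fun h p
    rw [hp] at h2
    simp only [hcQdef, Int.cast_eq_zero] at h2
    exact hi1' h2
  have hkerL : LinearMap.ker L = Submodule.span ℚ {y₀} := by
    apply le_antisymm
    · intro y hy
      rw [LinearMap.mem_ker] at hy
      have h1 : B.mulVec (φ y) = 0 := by rw [hφmul, hy]
      obtain ⟨q, hq⟩ := hPD (φ y) h1 (fun i hi => hφsupp y i hi)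
      rw [Submodule.mem_span_singleton]
      refine ⟨q, ?_⟩
      funext p
      have := congr_fun hq (eD p)
      rw [hφapp] at this
      rw [Pi.smul_apply, smul_eq_mul, hy₀]
      rw [this]
      simp
    · rw [Submodule.span_singleton_le_iff_mem, LinearMap.mem_ker]
      exact hy₀ker
  have hrangeL : LinearMap.range L = ⊤ := by
    rw [hL, Matrix.range_mulVecLin]
    rw [← hVtop, hV]
    congr 1
    have : Set.range Mᵀ = col '' ↑D := by
      rw [← heDrange, ← Set.range_comp]
      rfl
    exact this
  have hkd : k = d + 1 := by
    have h1 := LinearMap.finrank_range_add_finrank_ker L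
    rw [hrangeL, hkerL, finrank_top, finrank_span_singleton hy₀ne] at h1
    simp only [Module.finrank_pi, Fintype.card_fin] at h1
    omega
  subst hkd
  -- the cofactor vector
  set w : Fin (d+1) → ℚ :=
    fun j => (-1 : ℚ)^(j : ℕ) * (M.submatrix id (Fin.succAbove j)).det with hw
  have hLapp : ∀ (y : Fin (d+1) → ℚ) r, L y r = ∑ j, M r j * y j := by
    intro y r
    simp [hL, Matrix.mulVecLin_apply, Matrix.mulVec, dotProduct]
  have hident : L w = 0 := by
    funext r
    set NN : Matrix (Fin (d+1)) (Fin (d+1)) ℚ :=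
      Matrix.of (Fin.cons (M r) (fun i => M i)) with hNN
    have hN : NN.det = 0 := by
      apply Matrix.det_zero_of_row_eq (i := (0 : Fin (d+1))) (j := Fin.succ r)
        (Fin.succ_ne_zero r).symm
      funext jj
      simp [hNN, Fin.cons_zero, Fin.cons_succ]
    rw [Matrix.det_succ_row_zero] at hN
    rw [Pi.zero_apply, hLapp, ← hN]
    apply Finset.sum_congr rfl
    intro j _
    have hsub : NN.submatrix Fin.succ (Fin.succAbove j) = M.submatrix id (Fin.succAbove j) := by
      ext a b
      simp [hNN, Fin.cons_succ]
    have hN0 : NN 0 j = M r j := by simp [hNN]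
    rw [hsub, hN0, hw]
    ring
  have hwker : w ∈ Submodule.span ℚ {y₀} := by
    rw [← hkerL]
    exact LinearMap.mem_ker.mpr hident
  -- some cofactor is nonzero
  obtain ⟨p0, hp0⟩ := Function.ne_iff.mp hy₀ne
  have hp0' : y₀ p0 ≠ 0 := by simpa using hp0
  have hdetp0 : (M.submatrix id (Fin.succAbove p0)).det ≠ 0 := by
    set Msq : Matrix (Fin d) (Fin d) ℚ := M.submatrix id (Fin.succAbove p0) with hMsq
    have hinj : Function.Injective Msq.mulVec := by
      intro z1 z2 hz
      have hz0 : Msq.mulVec (z1 - z2) = 0 := by rw [Matrix.mulVec_sub, hz, sub_self]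
      set z : Fin d → ℚ := z1 - z2 with hzdef
      set z' : Fin (d+1) → ℚ := Fin.insertNth p0 0 z with hz'
      have hz'ker : L z' = 0 := by
        funext r
        rw [hLapp, Fin.sum_univ_succAbove (fun j => M r j * z' j) p0]
        have h1 : z' p0 = 0 := by rw [hz']; simp
        have h2 : ∀ l, z' (Fin.succAbove p0 l) = z l := by
          intro l; rw [hz']; simp
        simp only [h1, mul_zero, zero_add, h2, Pi.zero_apply]
        have := congr_fun hz0 r
        simpa [hMsq, Matrix.mulVec, dotProduct] using this
      have hmem : z' ∈ Submodule.span ℚ {y₀} := by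
        rw [← hkerL]
        exact LinearMap.mem_ker.mpr hz'ker
      obtain ⟨a, ha⟩ := Submodule.mem_span_singleton.mp hmem
      have ha0 : a = 0 := by
        have h1 : z' p0 = a * y₀ p0 := by rw [← ha]; simp
        rw [hz'] at h1
        simp only [Fin.insertNth_apply_same] at h1
        rcases mul_eq_zero.mp h1.symm with h | h
        · exact h
        · exact absurd h hp0'
      have hz'0 : z' = 0 := by rw [← ha, ha0, zero_smul]
      have : z = 0 := by
        funext l
        have h3 := congr_fun hz'0 (Fin.succAbove p0 l)
        rw [hz'] at h3
        simpa using h3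
      exact sub_eq_zero.mp this
    have h1 : IsUnit Msq := Matrix.mulVec_injective_iff_isUnit.mp hinj
    have h2 := (Matrix.isUnit_iff_isUnit_det Msq).mp h1
    exact isUnit_iff_ne_zero.mp h2
  have hwp0 : w p0 ≠ 0 := by
    rw [hw]
    exact mul_ne_zero (pow_ne_zero _ (by norm_num)) hdetp0
  obtain ⟨q, hq⟩ := Submodule.mem_span_singleton.mp hwker
  have hq0 : q ≠ 0 := by
    intro h
    rw [h, zero_smul] at hq
    exact hwp0 (congr_fun hq.symm p0)
  obtain ⟨l, hl, hminor⟩ := hA.2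
  have hwvals : ∀ j : Fin (d+1), w j = 0 ∨ |w j| = (l : ℚ) := by
    intro j
    have hdet : (M.submatrix id (Fin.succAbove j)).det
        = (((A.submatrix id (fun a => eD (Fin.succAbove j a))).det : ℤ) : ℚ) := by
      have h2 := RingHom.map_det (Int.castRingHom ℚ)
        (A.submatrix id fun a => eD (Fin.succAbove j a))
      rw [RingHom.mapMatrix_apply] at h2
      rw [show (((A.submatrix id fun a => eD (Fin.succAbove j a)).det : ℤ) : ℚ)
        = ((Int.castRingHom ℚ) (A.submatrix id fun a => eD (Fin.succAbove j a)).det) from rfl]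
      rw [h2]
      congr 1
    have hinjg : Function.Injective (fun a => eD (Fin.succAbove j a)) :=
      heDinj.comp (Fin.succAbove_right_injective)
    have habs : |w j| = |(M.submatrix id (Fin.succAbove j)).det| := by
      rw [hw]
      simp only []
      rw [abs_mul, abs_pow, abs_neg, abs_one, one_pow, one_mul]
    rcases hminor _ hinjg with h | h | h
    · left
      rw [hw]
      simp only []
      rw [hdet, h]
      simp
    · right
      rw [habs, hdet, h]
      rw [abs_of_pos (by exact_mod_cast hl)]
    · right
      rw [habs, hdet, h]
      push_cast
      rw [abs_neg, abs_of_pos (by exact_mod_cast hl)]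
  -- all nonzero entries of c have the same absolute value
  have hsame : ∀ i', c i' ≠ 0 → |q| * |(c i' : ℚ)| = (l : ℚ) := by
    intro i' hci'
    have hi'C : i' ∈ C := by simp [hC, hci']
    obtain ⟨p, hp⟩ := heDsurj i' (hCD hi'C)
    have hwp : w p = q * (c i' : ℚ) := by
      have := congr_fun hq p
      simp only [Pi.smul_apply, smul_eq_mul] at this
      rw [← this, hy₀]
      simp only []
      rw [hp, hcQdef]
    rcases hwvals p with h | h
    · exfalso
      rw [hwp] at h
      rcases mul_eq_zero.mp h with h' | h'
      · exact hq0 h'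
      · exact hci' (by exact_mod_cast h')
    · rw [← h, hwp, abs_mul]
  obtain ⟨i1, hi1⟩ := Function.ne_iff.mp hc0
  have hi1' : c i1 ≠ 0 := by simpa using hi1
  have habs_eq : ∀ i', c i' ≠ 0 → |c i'| = |c i1| := by
    intro i' hci'
    have h1 := hsame i' hci'
    have h2 := hsame i1 hi1'
    have hqabs : |q| ≠ 0 := abs_ne_zero.mpr hq0
    have : |(c i' : ℚ)| = |(c i1 : ℚ)| := by
      apply mul_left_cancel₀ hqabs
      rw [h1, h2]
    exact_mod_cast this
  have hdvd : |c i1| ∣ Finset.univ.gcd c := by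
    apply Finset.dvd_gcd
    intro i' _
    by_cases h : c i' = 0
    · simp [h]
    · rw [← habs_eq i' h]
      exact (abs_dvd _ _).mpr dvd_rfl
  rw [hgcd] at hdvd
  have h1 : |c i1| = 1 := Int.eq_one_of_dvd_one (abs_nonneg _) hdvd
  intro i
  by_cases h : c i = 0
  · exact Or.inl h
  · have := habs_eq i h
    rw [h1] at this
    rcases abs_eq (by norm_num : (0:ℤ) ≤ 1) |>.mp this with h' | h'
    · exact Or.inr (Or.inl h')
    · exact Or.inr (Or.inr h')


/-- For a unimodular full-row-rank matrix, every Graver basis element is a circuit: it has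
inclusion-minimal support among nonzero kernel vectors and relatively prime entries. -/
theorem stmt16 {d n : ℕ} (A : Matrix (Fin d) (Fin n) ℤ) (hA : IsUnimodularFR A)
    (u : Fin n → ℤ) (hu : InGraverBasis A u) :
    (∀ v : Fin n → ℤ, v ≠ 0 → A.mulVec v = 0 →
      {i | v i ≠ 0} ⊆ {i | u i ≠ 0} → {i | v i ≠ 0} = {i | u i ≠ 0}) ∧
    Finset.univ.gcd u = 1 := by
  classical
  obtain ⟨hu0, huker, hgraver⟩ := hu
  set B : Matrix (Fin d) (Fin n) ℚ := A.map (fun x : ℤ => (x : ℚ)) with hB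
  set uQ : Fin n → ℚ := fun i => (u i : ℚ) with huQ
  have huQ0 : uQ ≠ 0 := by
    intro h
    apply hu0
    funext i
    have := congr_fun h i
    simpa [huQ] using this
  have huQker : B.mulVec uQ = 0 := (mulVec_cast A u).mpr huker
  obtain ⟨cR, hcR0, hcRker, hcRsign, hcRmin⟩ :=
    lemA_aux B (Finset.univ.filter (fun i => uQ i ≠ 0)).card uQ le_rfl huQ0 huQker
  obtain ⟨z, q, hqpos, hzq, hzgcd⟩ := rat_to_primitive cR hcR0
  have hq0 : q ≠ 0 := ne_of_gt hqpos
  have hzsupp : ∀ i, z i ≠ 0 ↔ cR i ≠ 0 := by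
    intro i
    constructor
    · intro h hc
      apply h
      have := hzq i
      rw [hc, mul_zero] at this
      exact_mod_cast this
    · intro h hz
      have h2 := hzq i
      rw [hz, Int.cast_zero] at h2
      rcases mul_eq_zero.mp h2.symm with h' | h'
      · exact absurd h' hq0
      · exact h h'
  have hz0 : z ≠ 0 := by
    obtain ⟨i, hi⟩ := Function.ne_iff.mp hcR0
    have hi' : cR i ≠ 0 := by simpa using hi
    intro h
    exact ((hzsupp i).mpr hi') (by rw [h]; rfl)
  have hzcast : (fun i => (z i : ℚ)) = q • cR := by
    funext i
    rw [hzq i]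
    simp
  have hzkerQ : B.mulVec (fun i => (z i : ℚ)) = 0 := by
    rw [hzcast, Matrix.mulVec_smul, hcRker, smul_zero]
  have hzker : A.mulVec z = 0 := (mulVec_cast A z).mp hzkerQ
  have hzmin : ∀ w : Fin n → ℚ, w ≠ 0 → B.mulVec w = 0 →
      (∀ i, w i ≠ 0 → z i ≠ 0) → ∀ i, z i ≠ 0 → w i ≠ 0 := by
    intro w hw0 hwker hwsub i hzi
    exact hcRmin w hw0 hwker (fun i h => (hzsupp i).mp (hwsub i h)) i ((hzsupp i).mp hzi)
  have hzvals := key A hA z hz0 hzgcd hzker hzmin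
  have hzsign : ∀ i, z i ≠ 0 → 0 < z i * u i := by
    intro i hzi
    have h1 : (0:ℚ) < cR i * uQ i := hcRsign i ((hzsupp i).mp hzi)
    have h2 : (0:ℚ) < (z i : ℚ) * (u i : ℚ) := by
      rw [hzq i, huQ] at *
      calc (0:ℚ) < q * (cR i * uQ i) := mul_pos hqpos h1
        _ = q * cR i * uQ i := by ring
        _ = q * cR i * (u i : ℚ) := rfl
    exact_mod_cast h2
  -- conformality of z with respect to u
  have hconf : (∀ i, max (z i) 0 ≤ max (u i) 0) ∧ (∀ i, max (-z i) 0 ≤ max (-(u i)) 0) := by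
    constructor <;> intro i <;>
      rcases hzvals i with h | h | h <;>
        simp only [h]
    · simp only [neg_zero, max_self]
      exact le_max_right _ _
    · have := hzsign i (by rw [h]; norm_num)
      rw [h, one_mul] at this
      rw [max_eq_left (by norm_num : (0:ℤ) ≤ 1)] at *
      omega
    · have := hzsign i (by rw [h]; norm_num)
      rw [h] at this
      have hui : u i < 0 := by nlinarith
      omega
    · simp only [neg_zero, max_self]
      exact le_max_right _ _
    · have := hzsign i (by rw [h]; norm_num)
      rw [h, one_mul] at this
      omega
    · have := hzsign i (by rw [h]; norm_num)
      rw [h] at this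
      have hui : u i < 0 := by nlinarith
      omega
  have hzu : z = u := by
    by_contra hne
    exact hgraver z hz0 hzker hne hconf
  constructor
  · intro v hv0 hvker hsub
    set vQ : Fin n → ℚ := fun i => (v i : ℚ) with hvQ
    have hvQ0 : vQ ≠ 0 := by
      intro h
      apply hv0
      funext i
      have := congr_fun h i
      simpa [hvQ] using this
    have hvQker : B.mulVec vQ = 0 := (mulVec_cast A v).mpr hvker
    have hvsub : ∀ i, vQ i ≠ 0 → z i ≠ 0 := by
      intro i hi
      have hvi : v i ≠ 0 := fun h => hi (by simp [hvQ, h])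
      have : u i ≠ 0 := hsub hvi
      rw [← hzu] at this
      exact this
    have hsup := hzmin vQ hvQ0 hvQker hvsub
    apply Set.Subset.antisymm hsub
    intro i hi
    have : u i ≠ 0 := hi
    have hzi : z i ≠ 0 := by rw [hzu]; exact this
    have := hsup i hzi
    intro h
    exact this (by simp [hvQ, h])
  · rw [← hzu]
    exact hzgcd
end

section
/- Let C be a simplicial complex on ground set V with a face E such that every facet F of C satisfies: F ∩ E ≠ ∅ implies E ⊆ F. Let C' be the complex on V' = (V ∪ {v₀}) \ E whose facets are the facets of C disjoint from E together with (F \ E) ∪ {v₀} for facets F containing E. Given d ∈ Z_{≥2}^V, define d' on V' by d'_v = d_v for v ∈ V ∩ V' and d'_{v₀} = ∏_{v∈E} d_v. Then ker_Z(A_{C,d}) = ker_Z(A_{C',d'}) after the natural identification of column index sets [∏_{v∈V} d_v] via the bijection [∏_{v∈E} d_v] ≅ [d'_{v₀}]. -/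
/-- The ground set `V' = (V ∪ {v₀}) \ E` of the contracted complex: the vertices of `V`
outside `E`, plus one new vertex `v₀` (the `Unit` summand). -/
abbrev GroundSet' {V : Type*} [DecidableEq V] (E : Finset V) : Type _ :=
  {x : V // x ∉ E} ⊕ Unit

/-- The new weight function: `d'_v = d_v` for old vertices, and `d'_{v₀} = ∏_{v ∈ E} d_v`. -/
def weight' {V : Type*} [DecidableEq V] (E : Finset V) (d : V → ℕ) : GroundSet' E → ℕ :=
  fun x => match x with
    | Sum.inl v => d v.1
    | Sum.inr _ => E.prod d

/-- The identification of column index sets: a tuple of states `c` on `V` yields the tuple on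
`V'` keeping its values outside `E` and grouping its values on `E` into a single state of
`v₀` via a bijection `ψ : ∏_{v ∈ E} [d_v] ≅ [∏_{v ∈ E} d_v]`. -/
def liftCol {V : Type*} [DecidableEq V] (E : Finset V) (d : V → ℕ)
    (ψ : (∀ v : {x : V // x ∈ E}, Fin (d v.1)) ≃ Fin (E.prod d))
    (c : ∀ v : V, Fin (d v)) : ∀ x : GroundSet' E, Fin (weight' E d x) :=
  fun x => match x with
    | Sum.inl v => c v.1
    | Sum.inr _ => ψ fun v => c v.1

/-- The image in `V'` of a set `F ⊆ V` of old vertices (its part outside `E`). -/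
def liftFace {V : Type*} [Fintype V] [DecidableEq V] (E : Finset V) (F : Finset V) :
    Finset (GroundSet' E) :=
  Finset.univ.filter fun x => ∃ v : {x : V // x ∉ E}, x = Sum.inl v ∧ v.1 ∈ F



def margin {V : Type*} [Fintype V] [DecidableEq V] (d : V → ℕ)
    (x : (∀ v : V, Fin (d v)) → ℤ) (F : Finset V) (j : V → ℕ) : ℤ :=
  ∑ c : ∀ v : V, Fin (d v), if ∀ v ∈ F, (c v : ℕ) = j v then x c else 0

set_option linter.unusedSectionVars false

lemma margin_congr {V : Type*} [Fintype V] [DecidableEq V] {d : V → ℕ}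
    {x : (∀ v : V, Fin (d v)) → ℤ} {F : Finset V} {j j' : V → ℕ}
    (h : ∀ v ∈ F, j v = j' v) : margin d x F j = margin d x F j' := by
  unfold margin
  refine Finset.sum_congr rfl fun c _ => ?_
  congr 1
  simp only [eq_iff_iff]
  constructor <;> intro hh v hv <;> rw [hh v hv] <;> [exact (h v hv); exact (h v hv).symm]

lemma margin_out {V : Type*} [Fintype V] [DecidableEq V] {d : V → ℕ}
    {x : (∀ v : V, Fin (d v)) → ℤ} {F : Finset V} {j : V → ℕ}
    {v : V} (hv : v ∈ F) (h : d v ≤ j v) : margin d x F j = 0 := by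
  refine Finset.sum_eq_zero fun c _ => ?_
  rw [if_neg]
  intro hc
  have := hc v hv
  have := (c v).isLt
  omega

lemma margin_erase {V : Type*} [Fintype V] [DecidableEq V] {d : V → ℕ}
    {x : (∀ v : V, Fin (d v)) → ℤ} {F : Finset V} {j : V → ℕ}
    {v : V} (hv : v ∈ F) :
    margin d x (F.erase v) j
      = ∑ k ∈ Finset.range (d v), margin d x F (Function.update j v k) := by
  unfold margin
  rw [Finset.sum_comm]
  refine Finset.sum_congr rfl fun c _ => ?_
  by_cases hP : ∀ w ∈ F.erase v, (c w : ℕ) = j w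
  · rw [if_pos hP]
    have key : ∀ k ∈ Finset.range (d v),
        (if ∀ w ∈ F, (c w : ℕ) = Function.update j v k w then x c else 0)
          = if (c v : ℕ) = k then x c else 0 := by
      intro k _
      congr 1
      simp only [eq_iff_iff]
      constructor
      · intro h
        have := h v hv
        simpa [Function.update] using this
      · intro h w hw
        rcases eq_or_ne w v with rfl | hne
        · simpa [Function.update] using h
        · rw [Function.update_of_ne hne]
          exact hP w (Finset.mem_erase.2 ⟨hne, hw⟩)
    refine Eq.symm ((Finset.sum_congr rfl key).trans ?_)
    rw [Finset.sum_eq_single ((c v : ℕ))]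
    · simp
    · intro k _ hk
      exact if_neg fun h => hk h.symm
    · intro h
      exact absurd (Finset.mem_range.2 (c v).isLt) h
  · rw [if_neg hP]
    refine (Finset.sum_eq_zero fun k _ => ?_).symm
    rw [if_neg]
    intro h
    apply hP
    intro w hw
    rcases Finset.mem_erase.1 hw with ⟨hne, hwF⟩
    have := h w hwF
    rwa [Function.update_of_ne hne] at this

section
variable {V : Type*} [Fintype V] [DecidableEq V] {faces : Finset (Finset V)} {d : V → ℕ}
  {x : (∀ v : V, Fin (d v)) → ℤ}

lemma margin_of_row (hmul : (designMatrix faces d).mulVec x = 0)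
    {F : Finset V} (hF : F ∈ faces) {j : V → ℕ} (hj : ∀ v ∈ F, j v < d v - 1) :
    margin d x F j = 0 := by
  have h0 := congrFun hmul (⟨⟨F, hF⟩, fun v => ⟨j v.1, hj v.1 v.2⟩⟩ : DRow faces d)
  simp only [Matrix.mulVec, dotProduct, designMatrix, Pi.zero_apply] at h0
  rw [← h0]
  refine Finset.sum_congr rfl fun c _ => ?_
  rw [ite_mul, one_mul, zero_mul]
  congr 1
  simp only [eq_iff_iff]
  exact ⟨fun h v => h v.1 v.2, fun h v hv => h ⟨v, hv⟩⟩

lemma margin_zero_of_kernel (hdown : ∀ F ∈ faces, ∀ G ⊆ F, G ∈ faces)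
    (hd : ∀ v, 1 ≤ d v) (hmul : (designMatrix faces d).mulVec x = 0) :
    ∀ F ∈ faces, ∀ j : V → ℕ, margin d x F j = 0 := by
  suffices H : ∀ n : ℕ, ∀ F : Finset V, ∀ j : V → ℕ, F ∈ faces →
      (F.filter fun v => d v - 1 ≤ j v).card ≤ n → margin d x F j = 0 by
    intro F hF j
    exact H _ F j hF le_rfl
  intro n
  induction n with
  | zero =>
    intro F j hF hcard
    refine margin_of_row hmul hF fun v hv => ?_
    by_contra hlt
    have hmem : v ∈ F.filter fun v => d v - 1 ≤ j v :=
      Finset.mem_filter.2 ⟨hv, by omega⟩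
    have := Finset.card_pos.2 ⟨v, hmem⟩
    omega
  | succ n ih =>
    intro F j hF hcard
    by_cases hout : ∃ v ∈ F, d v ≤ j v
    · obtain ⟨v, hv, h⟩ := hout
      exact margin_out hv h
    push_neg at hout
    by_cases hne : (F.filter fun v => d v - 1 ≤ j v).Nonempty
    · obtain ⟨v, hvmem⟩ := hne
      obtain ⟨hvF, hvtop⟩ := Finset.mem_filter.1 hvmem
      have hdv := hd v
      have hveq : j v = d v - 1 := by have := hout v hvF; omega
      have hupd : Function.update j v (j v) = j := Function.update_eq_self v j
      have key := margin_erase (d := d) (x := x) (j := j) hvF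
      have hrange : d v = (d v - 1) + 1 := by omega
      rw [hrange, Finset.sum_range_succ] at key
      have herase : margin d x (F.erase v) j = 0 := by
        refine ih (F.erase v) j (hdown F hF _ (Finset.erase_subset v F)) ?_
        have hsub : ((F.erase v).filter fun w => d w - 1 ≤ j w)
            ⊆ (F.filter fun w => d w - 1 ≤ j w).erase v := by
          intro w hw
          obtain ⟨hw1, hw2⟩ := Finset.mem_filter.1 hw
          obtain ⟨hne', hwF⟩ := Finset.mem_erase.1 hw1
          exact Finset.mem_erase.2 ⟨hne', Finset.mem_filter.2 ⟨hwF, hw2⟩⟩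
        have := Finset.card_le_card hsub
        have := Finset.card_erase_of_mem hvmem
        omega
      have hsmall : ∀ k ∈ Finset.range (d v - 1),
          margin d x F (Function.update j v k) = 0 := by
        intro k hk
        have hklt := Finset.mem_range.1 hk
        refine ih F _ hF ?_
        have hsub : (F.filter fun w => d w - 1 ≤ Function.update j v k w)
            ⊆ (F.filter fun w => d w - 1 ≤ j w).erase v := by
          intro w hw
          obtain ⟨hw1, hw2⟩ := Finset.mem_filter.1 hw
          rcases eq_or_ne w v with rfl | hne'
          · rw [Function.update_self] at hw2; omega
          · rw [Function.update_of_ne hne'] at hw2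
            exact Finset.mem_erase.2 ⟨hne', Finset.mem_filter.2 ⟨hw1, hw2⟩⟩
        have := Finset.card_le_card hsub
        have := Finset.card_erase_of_mem hvmem
        omega
      rw [Finset.sum_congr rfl hsmall, Finset.sum_const_zero, zero_add] at key
      have : Function.update j v (d v - 1) = j := by rw [← hveq]; exact hupd
      rw [this] at key
      rw [← key, herase]
    · refine margin_of_row hmul hF fun v hv => ?_
      by_contra hlt
      exact hne ⟨v, Finset.mem_filter.2 ⟨hv, by omega⟩⟩

lemma kernel_of_margin_zero
    (h : ∀ F ∈ faces, ∀ j : V → ℕ, margin d x F j = 0) :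
    (designMatrix faces d).mulVec x = 0 := by
  funext r
  obtain ⟨⟨F, hF⟩, jr⟩ := r
  have h0 := h F hF (fun v => if hv : v ∈ F then (jr ⟨v, hv⟩ : ℕ) else 0)
  simp only [Matrix.mulVec, dotProduct, designMatrix, Pi.zero_apply]
  refine Eq.trans ?_ h0
  refine Finset.sum_congr rfl fun c _ => ?_
  rw [ite_mul, one_mul, zero_mul]
  congr 1
  simp only [eq_iff_iff]
  constructor
  · intro h v hv
    rw [dif_pos hv]
    exact h ⟨v, hv⟩
  · intro h v
    have := h v.1 v.2
    rwa [dif_pos v.2] at this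

lemma margin_zero_of_subset {H : Finset V}
    (hH : ∀ j : V → ℕ, margin d x H j = 0) :
    ∀ F : Finset V, F ⊆ H → ∀ j : V → ℕ, margin d x F j = 0 := by
  suffices key : ∀ n : ℕ, ∀ F : Finset V, F ⊆ H → (H \ F).card ≤ n →
      ∀ j : V → ℕ, margin d x F j = 0 by
    intro F hFH j
    exact key _ F hFH le_rfl j
  intro n
  induction n with
  | zero =>
    intro F hFH hcard j
    have : H \ F = ∅ := Finset.card_eq_zero.1 (Nat.le_zero.1 hcard)
    have : F = H := Finset.Subset.antisymm hFH (Finset.sdiff_eq_empty_iff_subset.1 this)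
    rw [this]; exact hH j
  | succ n ih =>
    intro F hFH hcard j
    rcases Finset.eq_empty_or_nonempty (H \ F) with hemp | ⟨v, hv⟩
    · have : F = H := Finset.Subset.antisymm hFH (Finset.sdiff_eq_empty_iff_subset.1 hemp)
      rw [this]; exact hH j
    · obtain ⟨hvH, hvF⟩ := Finset.mem_sdiff.1 hv
      have h1 : F = (insert v F).erase v := (Finset.erase_insert hvF).symm
      rw [h1, margin_erase (Finset.mem_insert_self v F)]
      refine Finset.sum_eq_zero fun k _ => ?_
      refine ih (insert v F) (Finset.insert_subset hvH hFH) ?_ _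
      have : H \ insert v F = (H \ F).erase v := by
        ext w
        simp only [Finset.mem_sdiff, Finset.mem_erase, Finset.mem_insert]
        tauto
      rw [this, Finset.card_erase_of_mem hv] at *
      omega

end

section Transfer
variable {V : Type*} [Fintype V] [DecidableEq V] (E : Finset V) (d : V → ℕ)
  (ψ : (∀ v : {x : V // x ∈ E}, Fin (d v.1)) ≃ Fin (E.prod d))
  (u : (∀ x : GroundSet' E, Fin (weight' E d x)) → ℤ)

lemma mem_liftFace_inl {F : Finset V} {w : {x : V // x ∉ E}} :
    Sum.inl w ∈ liftFace E F ↔ w.1 ∈ F := by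
  simp only [liftFace, Finset.mem_filter, Finset.mem_univ, true_and]
  constructor
  · rintro ⟨v, hv, hvF⟩
    obtain rfl : w = v := Sum.inl.injEq .. ▸ hv
    exact hvF
  · intro h
    exact ⟨w, rfl, h⟩

lemma not_mem_liftFace_inr {F : Finset V} {t : Unit} :
    Sum.inr t ∉ liftFace E F := by
  simp only [liftFace, Finset.mem_filter, Finset.mem_univ, true_and]
  rintro ⟨v, hv, -⟩
  exact Sum.inr_ne_inl hv

lemma liftFace_mono {F G : Finset V} (h : F ⊆ G) : liftFace E F ⊆ liftFace E G := by
  intro x hx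
  rcases x with w | t
  · exact (mem_liftFace_inl E).2 (h ((mem_liftFace_inl E).1 hx))
  · exact absurd hx (not_mem_liftFace_inr E)

lemma liftCol_bijective : Function.Bijective (liftCol E d ψ) := by
  refine Function.bijective_iff_has_inverse.2
    ⟨fun c' v => if h : v ∈ E then ψ.symm (c' (Sum.inr ())) ⟨v, h⟩
      else c' (Sum.inl ⟨v, h⟩), ?_, ?_⟩
  · intro c
    funext v
    by_cases h : v ∈ E
    · simp only [liftCol, dif_pos h, Equiv.symm_apply_apply]
    · simp only [liftCol, dif_neg h]
  · intro c'
    funext x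
    rcases x with w | t
    · simp only [liftCol]
      exact dif_neg w.2
    · simp only [liftCol]
      have : (fun v : {x : V // x ∈ E} =>
          if h : v.1 ∈ E then ψ.symm (c' (Sum.inr ())) ⟨v.1, h⟩
            else c' (Sum.inl ⟨v.1, h⟩)) = ψ.symm (c' (Sum.inr ())) := by
        funext v
        exact dif_pos v.2
      rw [this]
      exact ψ.apply_symm_apply _

lemma margin'_eq (F' : Finset (GroundSet' E)) (j' : GroundSet' E → ℕ) :
    margin (weight' E d) u F' j'
      = ∑ c : ∀ v : V, Fin (d v),
          if ∀ x ∈ F', ((liftCol E d ψ c) x : ℕ) = j' x then u (liftCol E d ψ c) else 0 :=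
  (Fintype.sum_bijective (liftCol E d ψ) (liftCol_bijective E d ψ) _ _ (fun _ => rfl)).symm

/-- Transfer for faces disjoint from `E`. -/
lemma margin_disj (H : Finset V) (hH : ∀ v ∈ H, v ∉ E) (j : V → ℕ)
    (j' : GroundSet' E → ℕ)
    (hj : ∀ w : {x : V // x ∉ E}, w.1 ∈ H → j' (Sum.inl w) = j w.1) :
    margin (weight' E d) u (liftFace E H) j'
      = margin d (fun c => u (liftCol E d ψ c)) H j := by
  rw [margin'_eq]
  refine Finset.sum_congr rfl fun c _ => ?_
  congr 1
  simp only [eq_iff_iff]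
  constructor
  · intro h v hv
    have hvE := hH v hv
    have := h (Sum.inl ⟨v, hvE⟩) ((mem_liftFace_inl E).2 hv)
    rw [hj ⟨v, hvE⟩ hv] at this
    exact this
  · intro h x hx
    rcases x with w | t
    · have hw := (mem_liftFace_inl E).1 hx
      rw [hj w hw]
      exact h w.1 hw
    · exact absurd hx (not_mem_liftFace_inr E)

/-- Transfer for faces containing `E`. -/
lemma margin_cont (H : Finset V) (hEH : E ⊆ H) (j : V → ℕ)
    (e : ∀ v : {x : V // x ∈ E}, Fin (d v.1))
    (hje : ∀ v : {x : V // x ∈ E}, j v.1 = (e v : ℕ)) :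
    margin (weight' E d) u (insert (Sum.inr ()) (liftFace E H))
        (Sum.elim (fun w => j w.1) (fun _ => (ψ e : ℕ)))
      = margin d (fun c => u (liftCol E d ψ c)) H j := by
  rw [margin'_eq]
  refine Finset.sum_congr rfl fun c _ => ?_
  congr 1
  simp only [eq_iff_iff]
  constructor
  · intro h v hv
    by_cases hvE : v ∈ E
    · have hr := h (Sum.inr ()) (Finset.mem_insert_self _ _)
      simp only [liftCol, Sum.elim_inr] at hr
      have : (fun w : {x : V // x ∈ E} => c w.1) = e := ψ.injective (Fin.ext hr)
      have hce : c v = e ⟨v, hvE⟩ := congrFun this ⟨v, hvE⟩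
      rw [hje ⟨v, hvE⟩, ← hce]
    · have := h (Sum.inl ⟨v, hvE⟩)
        (Finset.mem_insert_of_mem ((mem_liftFace_inl E).2 hv))
      exact this
  · intro h x hx
    rcases Finset.mem_insert.1 hx with hx | hx
    · subst hx
      simp only [liftCol, Sum.elim_inr]
      have he : (fun w : {x : V // x ∈ E} => c w.1) = e :=
        funext fun w => Fin.ext ((h w.1 (hEH w.2)).trans (hje w))
      rw [he]
    · rcases x with w | t
      · exact h w.1 ((mem_liftFace_inl E).1 hx)
      · exact absurd hx (not_mem_liftFace_inr E)

end Transfer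

lemma exists_facet {V : Type*} [DecidableEq V] {faces : Finset (Finset V)}
    {F : Finset V} (hF : F ∈ faces) :
    ∃ G ∈ faces, F ⊆ G ∧ ∀ H ∈ faces, G ⊆ H → G = H := by
  obtain ⟨G, hG, hmax⟩ := Finset.exists_maximal (s := faces.filter (F ⊆ ·))
    ⟨F, Finset.mem_filter.2 ⟨hF, le_rfl⟩⟩
  obtain ⟨hGf, hFG⟩ := Finset.mem_filter.1 hG
  refine ⟨G, hGf, hFG, fun H hH hGH => ?_⟩
  by_contra hne
  exact hne (le_antisymm hGH (hmax (Finset.mem_filter.2 ⟨hH, hFG.trans hGH⟩) hGH))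

/-- Let `C` be a simplicial complex (downward-closed set of faces) on `V` with a face `E` such
that every facet meeting `E` contains `E`.  Let `C'` be the complex on
`V' = (V ∪ {v₀}) \ E` whose facets are the facets of `C` disjoint from `E` together with
`(F \ E) ∪ {v₀}` for facets `F ⊇ E`, and let `d'` agree with `d` off `E` with
`d'_{v₀} = ∏_{v ∈ E} d_v`.  Then, after the natural identification of column index sets
(via any bijection `ψ : ∏_{v ∈ E} [d_v] ≅ [d'_{v₀}]`), the integer kernels of `A_{C,d}` and
`A_{C',d'}` coincide. -/
theorem stmt18 {V : Type*} [Fintype V] [DecidableEq V]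
    (faces : Finset (Finset V)) (hdown : ∀ F ∈ faces, ∀ G ⊆ F, G ∈ faces)
    (d : V → ℕ) (hd : ∀ v, 2 ≤ d v)
    (E : Finset V) (hE : E ∈ faces)
    (hmeet : ∀ F ∈ faces, (∀ G ∈ faces, F ⊆ G → F = G) → (F ∩ E).Nonempty → E ⊆ F)
    (faces' : Finset (Finset (GroundSet' E)))
    (hfaces' : ∀ F' : Finset (GroundSet' E), F' ∈ faces' ↔
      ∃ F ∈ faces, (∀ G ∈ faces, F ⊆ G → F = G) ∧
        ((F ∩ E = ∅ ∧ F' ⊆ liftFace E F) ∨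
          (E ⊆ F ∧ F' ⊆ insert (Sum.inr ()) (liftFace E F))))
    (ψ : (∀ v : {x : V // x ∈ E}, Fin (d v.1)) ≃ Fin (E.prod d))
    (u : (∀ x : GroundSet' E, Fin (weight' E d x)) → ℤ) :
    (designMatrix faces d).mulVec (fun c => u (liftCol E d ψ c)) = 0 ↔
    (designMatrix faces' (weight' E d)).mulVec u = 0 := by
  have hd1 : ∀ v, 1 ≤ d v := fun v => le_trans one_le_two (hd v)
  have hd1' : ∀ x : GroundSet' E, 1 ≤ weight' E d x := by
    rintro (w | t)
    · exact hd1 w.1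
    · exact Finset.one_le_prod' fun v _ => hd1 v
  have hdown' : ∀ F' ∈ faces', ∀ G' ⊆ F', G' ∈ faces' := by
    intro F' hF' G' hG'
    rw [hfaces'] at hF' ⊢
    obtain ⟨F, hF, hmax, hc⟩ := hF'
    exact ⟨F, hF, hmax,
      hc.imp (fun h => ⟨h.1, hG'.trans h.2⟩) (fun h => ⟨h.1, hG'.trans h.2⟩)⟩
  constructor
  · intro hmul
    have L := margin_zero_of_kernel hdown hd1 hmul
    apply kernel_of_margin_zero
    intro F' hF' j'
    obtain ⟨G, hG, hmax, hc⟩ := (hfaces' F').1 hF'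
    have hGsub : ∀ w : {x : V // x ∉ E}, Sum.inl w ∈ F' → w.1 ∈ G := by
      intro w hw
      rcases hc with ⟨-, hsub⟩ | ⟨-, hsub⟩
      · exact (mem_liftFace_inl E).1 (hsub hw)
      · rcases Finset.mem_insert.1 (hsub hw) with h | h
        · exact absurd h (by simp)
        · exact (mem_liftFace_inl E).1 h
    by_cases hv0 : Sum.inr () ∈ F'
    · -- `F'` contains the new vertex `v₀`
      have hEG : E ⊆ G := by
        rcases hc with ⟨-, hsub⟩ | ⟨hEG, -⟩
        · exact absurd (hsub hv0) (not_mem_liftFace_inr E)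
        · exact hEG
      by_cases hlt : j' (Sum.inr ()) < E.prod d
      · set e : ∀ v : {x : V // x ∈ E}, Fin (d v.1) := ψ.symm ⟨j' (Sum.inr ()), hlt⟩ with he
        set Fold : Finset V := Finset.univ.filter
          (fun v : V => ∃ h : v ∉ E, Sum.inl (⟨v, h⟩ : {x : V // x ∉ E}) ∈ F') with hFold
        set H : Finset V := E ∪ Fold with hHdef
        have hHG : H ⊆ G := by
          intro v hv
          rcases Finset.mem_union.1 hv with h | h
          · exact hEG h
          · obtain ⟨-, h', hmem⟩ := Finset.mem_filter.1 h
            exact hGsub ⟨v, h'⟩ hmem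
        have hF'eq : F' = insert (Sum.inr ()) (liftFace E H) := by
          ext x
          rcases x with w | t
          · rw [Finset.mem_insert]
            constructor
            · intro hw
              right
              refine (mem_liftFace_inl E).2 ?_
              exact Finset.mem_union_right _
                (Finset.mem_filter.2 ⟨Finset.mem_univ _, ⟨w.2, hw⟩⟩)
            · rintro (h | h)
              · exact absurd h (by simp)
              · have hw := (mem_liftFace_inl E).1 h
                rcases Finset.mem_union.1 hw with h2 | h2
                · exact absurd h2 w.2
                · obtain ⟨-, h', hmem⟩ := Finset.mem_filter.1 h2
                  exact hmem
          · cases t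
            simp only [Finset.mem_insert]
            exact ⟨fun _ => Or.inl trivial, fun _ => hv0⟩
        set j : V → ℕ := fun v =>
          if h : v ∈ E then (e ⟨v, h⟩ : ℕ) else j' (Sum.inl ⟨v, h⟩) with hj
        have hcongr : margin (weight' E d) u (insert (Sum.inr ()) (liftFace E H)) j'
            = margin (weight' E d) u (insert (Sum.inr ()) (liftFace E H))
              (Sum.elim (fun w : {x : V // x ∉ E} => j w.1) (fun _ => (ψ e : ℕ))) := by
          refine margin_congr fun x hx => ?_
          rcases x with w | t
          · simp only [Sum.elim_inl, hj, dif_neg w.2]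
          · simp only [Sum.elim_inr, he, Equiv.apply_symm_apply]
        rw [hF'eq, hcongr,
          margin_cont E d ψ u H (Finset.subset_union_left) j e
            (fun v => by simp only [hj, dif_pos v.2])]
        exact L H (hdown G hG H hHG) j
      · exact margin_out hv0 (not_lt.1 hlt)
    · -- `F'` consists of old vertices only
      set Fold : Finset V := Finset.univ.filter
        (fun v : V => ∃ h : v ∉ E, Sum.inl (⟨v, h⟩ : {x : V // x ∉ E}) ∈ F') with hFold
      have hHG : Fold ⊆ G := by
        intro v hv
        obtain ⟨-, h', hmem⟩ := Finset.mem_filter.1 hv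
        exact hGsub ⟨v, h'⟩ hmem
      have hHE : ∀ v ∈ Fold, v ∉ E := by
        intro v hv
        obtain ⟨-, h', -⟩ := Finset.mem_filter.1 hv
        exact h'
      have hF'eq : F' = liftFace E Fold := by
        ext x
        rcases x with w | t
        · rw [mem_liftFace_inl]
          constructor
          · intro hw
            exact Finset.mem_filter.2 ⟨Finset.mem_univ _, ⟨w.2, hw⟩⟩
          · intro h
            obtain ⟨-, h', hmem⟩ := Finset.mem_filter.1 h
            exact hmem
        · cases t
          exact iff_of_false hv0 (not_mem_liftFace_inr E)
      set j : V → ℕ := fun v =>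
        if h : v ∉ E then j' (Sum.inl ⟨v, h⟩) else 0 with hj
      rw [hF'eq, margin_disj E d ψ u Fold hHE j j'
        (fun w hw => by simp only [hj, dif_pos w.2])]
      exact L Fold (hdown G hG Fold hHG) j
  · intro hmul
    have R := margin_zero_of_kernel hdown' hd1' hmul
    apply kernel_of_margin_zero
    intro F hF j
    obtain ⟨G, hG, hFG, hmax⟩ := exists_facet hF
    rcases Finset.eq_empty_or_nonempty (G ∩ E) with hGE | hGE
    · have hFdisj : ∀ v ∈ F, v ∉ E := fun v hv hvE =>
        (Finset.eq_empty_iff_forall_notMem.1 hGE v) (Finset.mem_inter.2 ⟨hFG hv, hvE⟩)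
      have hface' : liftFace E F ∈ faces' :=
        (hfaces' _).2 ⟨G, hG, hmax, Or.inl ⟨hGE, liftFace_mono E hFG⟩⟩
      have h0 := R _ hface' (Sum.elim (fun w : {x : V // x ∉ E} => j w.1) (fun _ => 0))
      rwa [margin_disj E d ψ u F hFdisj j _ (fun w _ => rfl)] at h0
    · have hEG : E ⊆ G := hmeet G hG hmax hGE
      have hHG : F ∪ E ⊆ G := Finset.union_subset hFG hEG
      have hzero : ∀ j2 : V → ℕ,
          margin d (fun c => u (liftCol E d ψ c)) (F ∪ E) j2 = 0 := by
        intro j2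
        by_cases hin : ∀ v : {x : V // x ∈ E}, j2 v.1 < d v.1
        · set e : ∀ v : {x : V // x ∈ E}, Fin (d v.1) := fun v => ⟨j2 v.1, hin v⟩ with he
          have hface' : insert (Sum.inr ()) (liftFace E (F ∪ E)) ∈ faces' :=
            (hfaces' _).2 ⟨G, hG, hmax,
              Or.inr ⟨hEG, Finset.insert_subset_insert _ (liftFace_mono E hHG)⟩⟩
          have h0 := R _ hface'
            (Sum.elim (fun w : {x : V // x ∉ E} => j2 w.1) (fun _ => (ψ e : ℕ)))
          rwa [margin_cont E d ψ u (F ∪ E) (Finset.subset_union_right) j2 e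
            (fun v => rfl)] at h0
        · push_neg at hin
          obtain ⟨v, hv⟩ := hin
          exact margin_out (Finset.mem_union_right _ v.2) hv
      exact margin_zero_of_subset hzero F (Finset.subset_union_left) j
end
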